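/- arXiv:1505.03354 — 5 statements merged into one kernel-verified Lean document; each statement's English description precedes it below -/
import Mathlib

section
/- For Markovian SIR dynamics with infection rate τ > 0 and recovery rate γ ≥ 0 on a finite simple graph G that is acyclic, for every pure initial configuration x⁰ : V → Fin 3, every triple of pairwise distinct nodes i, j, k with i adjacent to j and j adjacent to k, and every t ≥ 0, the pair-based (unclustered) moment closure is exact on the states ISS and ISI, i.e. P_{ijk}(I,S,S;t) · P_j(S;t) = P_{ij}(I,S;t) · P_{jk}(S,S;t) and P_{ijk}(I,S,I;t) · P_j(S;t) = P_{ij}(I,S;t) · P_{jk}(S,I;t). -/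
open Finset

/-- Rate of a single off-diagonal transition for the Markovian SIR model with states
`0 = S`, `1 = I`, `2 = R`: nonzero only if `y` agrees with `x` except at exactly one node `i`,
where either `S → I` (rate `τ · #infectious neighbours`) or `I → R` (rate `γ`). -/
noncomputable def sirRate {V : Type*} [Fintype V] [DecidableEq V] (G : SimpleGraph V)
    [DecidableRel G.Adj] (τ γ : ℝ) (x y : V → Fin 3) : ℝ :=
  ∑ i : V,
    ((if (∀ j, j ≠ i → x j = y j) ∧ x i = 0 ∧ y i = 1 then
        τ * ((Finset.univ.filter (fun j => G.Adj i j ∧ x j = 1)).card : ℝ) else 0)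
      + (if (∀ j, j ≠ i → x j = y j) ∧ x i = 1 ∧ y i = 2 then γ else 0))

/-- Generator matrix of the Markovian SIR dynamics on configurations `V → Fin 3`. -/
noncomputable def sirGen {V : Type*} [Fintype V] [DecidableEq V] (G : SimpleGraph V)
    [DecidableRel G.Adj] (τ γ : ℝ) : Matrix (V → Fin 3) (V → Fin 3) ℝ :=
  fun x y => if x = y then -∑ z ∈ Finset.univ.erase x, sirRate G τ γ x z
             else sirRate G τ γ x y

/-- Distribution at time `t` started from the pure configuration `x0`. -/
noncomputable def sirP {V : Type*} [Fintype V] [DecidableEq V] (G : SimpleGraph V)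
    [DecidableRel G.Adj] (τ γ : ℝ) (x0 : V → Fin 3) (t : ℝ) (x : V → Fin 3) : ℝ :=
  NormedSpace.exp (t • sirGen G τ γ) x0 x

/-- Single-node marginal `P_i(A;t)`. -/
noncomputable def sirP1 {V : Type*} [Fintype V] [DecidableEq V] (G : SimpleGraph V)
    [DecidableRel G.Adj] (τ γ : ℝ) (x0 : V → Fin 3) (i : V) (A : Fin 3) (t : ℝ) : ℝ :=
  ∑ x ∈ Finset.univ.filter (fun x : V → Fin 3 => x i = A), sirP G τ γ x0 t x

/-- Pair marginal `P_{ij}(A,B;t)`. -/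
noncomputable def sirP2 {V : Type*} [Fintype V] [DecidableEq V] (G : SimpleGraph V)
    [DecidableRel G.Adj] (τ γ : ℝ) (x0 : V → Fin 3) (i j : V) (A B : Fin 3) (t : ℝ) : ℝ :=
  ∑ x ∈ Finset.univ.filter (fun x : V → Fin 3 => x i = A ∧ x j = B), sirP G τ γ x0 t x

/-- Triple marginal `P_{ijk}(A,B,C;t)`. -/
noncomputable def sirP3 {V : Type*} [Fintype V] [DecidableEq V] (G : SimpleGraph V)
    [DecidableRel G.Adj] (τ γ : ℝ) (x0 : V → Fin 3) (i j k : V) (A B C : Fin 3) (t : ℝ) : ℝ :=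
  ∑ x ∈ Finset.univ.filter (fun x : V → Fin 3 => x i = A ∧ x j = B ∧ x k = C),
    sirP G τ γ x0 t x


open Finset
open NormedSpace

attribute [local instance] Matrix.linftyOpNormedRing Matrix.linftyOpNormedAlgebra

namespace SIRAux

variable {n : Type*} [Fintype n] [DecidableEq n]

noncomputable def entryCLM (x y : n) : Matrix n n ℝ →L[ℝ] ℝ :=
  LinearMap.toContinuousLinearMap
    ((LinearMap.proj y).comp ((LinearMap.proj x).comp (LinearMap.id (R := ℝ) (M := Matrix n n ℝ))))

noncomputable def rowCLM (x0 : n) : Matrix n n ℝ →L[ℝ] (n → ℝ) :=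
  LinearMap.toContinuousLinearMap
    ((LinearMap.proj x0).comp (LinearMap.id (R := ℝ) (M := Matrix n n ℝ)))

theorem exp_entry_tsum (A : Matrix n n ℝ) (x y : n) :
    exp A x y = ∑' m : ℕ, ((m.factorial : ℝ))⁻¹ * (A ^ m) x y := by
  have h1 : exp A x y = entryCLM x y (exp A) := rfl
  rw [h1, exp_eq_tsum ℝ]
  have h2 := ((entryCLM x y).map_tsum (expSeries_summable' (𝕂 := ℝ) A))
  simp only at h2 ⊢
  rw [h2]
  exact tsum_congr fun m => by show (_ : ℝ)⁻¹ • (A ^ m) x y = _; rw [smul_eq_mul]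

theorem row_exp_deriv (A : Matrix n n ℝ) (t : ℝ) (x0 : n) :
    HasDerivAt (fun u : ℝ => (fun y => exp (u • A) x0 y))
      (fun y => ∑ z, exp (t • A) x0 z * A z y) t := by
  have h := (rowCLM x0).hasFDerivAt.comp_hasDerivAt t (hasDerivAt_exp_smul_const A t)
  have he : (fun y => ∑ z, exp (t • A) x0 z * A z y)
      = rowCLM x0 (exp (t • A) * A) := by
    funext y; exact (Matrix.mul_apply).symm
  rw [he]
  exact h

theorem exp_entry_deriv (A : Matrix n n ℝ) (t : ℝ) (x0 y : n) :
    HasDerivAt (fun u : ℝ => exp (u • A) x0 y) (∑ z, exp (t • A) x0 z * A z y) t :=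
  hasDerivAt_pi.mp (row_exp_deriv A t x0) y

theorem pow_closed {P : n → Prop} {Q : Matrix n n ℝ} (hQ : ∀ x y, ¬ P x → P y → Q x y = 0)
    (m : ℕ) : ∀ x y, ¬ P x → P y → (Q ^ m) x y = 0 := by
  induction m with
  | zero =>
    intro x y hx hy
    have hxy : x ≠ y := fun h => hx (h ▸ hy)
    simp [Matrix.one_apply, hxy]
  | succ m ih =>
    intro x y hx hy
    rw [pow_succ', Matrix.mul_apply]
    apply Finset.sum_eq_zero
    intro z _
    by_cases hz : P z
    · rw [hQ x z hx hz, zero_mul]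
    · rw [ih z y hz hy, mul_zero]

theorem exp_closed {P : n → Prop} {Q : Matrix n n ℝ} (hQ : ∀ x y, ¬ P x → P y → Q x y = 0)
    {x y : n} (hx : ¬ P x) (hy : P y) : exp Q x y = 0 := by
  rw [exp_entry_tsum]
  rw [show (fun m : ℕ => ((m.factorial : ℝ))⁻¹ * (Q ^ m) x y) = fun _ => (0:ℝ) by
    funext m; rw [pow_closed hQ m x y hx hy, mul_zero]]
  exact tsum_zero

theorem restricted_ode (Q : Matrix n n ℝ) (P : n → Prop) [DecidablePred P]
    (hQ : ∀ x y, ¬ P x → P y → Q x y = 0)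
    (x0 : n) (hx0 : P x0)
    (w : ℝ → {x // P x} → ℝ)
    (hw0 : ∀ a : {x // P x}, w 0 a = if x0 = a.1 then 1 else 0)
    (hw' : ∀ s : ℝ, HasDerivAt w (fun a => ∑ b : {x // P x}, w s b * Q b.1 a.1) s)
    (t : ℝ) (ht : 0 ≤ t) (a : {x // P x}) :
    exp (t • Q) x0 a.1 = w t a := by
  have hu' : ∀ s : ℝ, HasDerivAt (fun (s : ℝ) (a : {x // P x}) => exp (s • Q) x0 a.1)
      (fun a => ∑ b : {x // P x}, exp (s • Q) x0 b.1 * Q b.1 a.1) s := by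
    intro s
    rw [hasDerivAt_pi]
    intro a
    have h := exp_entry_deriv Q s x0 a.1
    have he : (∑ z, exp (s • Q) x0 z * Q z a.1)
        = ∑ b : {x // P x}, exp (s • Q) x0 b.1 * Q b.1 a.1 := by
      rw [← Finset.sum_filter_add_sum_filter_not (univ : Finset n) P
        (fun z => exp (s • Q) x0 z * Q z a.1)]
      have h0 : ∑ z ∈ univ.filter (fun z => ¬ P z), exp (s • Q) x0 z * Q z a.1 = 0 := by
        apply Finset.sum_eq_zero
        intro z hz
        rw [hQ z a.1 (Finset.mem_filter.mp hz).2 a.2, mul_zero]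
      rw [h0, add_zero]
      exact Finset.sum_subtype _ (fun z => by simp) _
    rw [← he]
    exact h
  have hv : ∀ (y : {x // P x} → ℝ),
      LinearMap.toContinuousLinearMap
        (Matrix.vecMulLinear (fun (b a : {x // P x}) => Q b.1 a.1)) y
      = fun a => ∑ b : {x // P x}, y b * Q b.1 a.1 := by
    intro y; funext a
    show Matrix.vecMul y (fun (b a : {x // P x}) => Q b.1 a.1) a = _
    rfl
  have key : Set.EqOn (fun (s : ℝ) (a : {x // P x}) => exp (s • Q) x0 a.1) w
      (Set.Icc 0 t) := by
    apply ODE_solution_unique (v := fun _ y =>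
        LinearMap.toContinuousLinearMap
          (Matrix.vecMulLinear (fun (b a : {x // P x}) => Q b.1 a.1)) y)
      (fun _ => ContinuousLinearMap.lipschitz _)
    · exact fun s _ => (hu' s).continuousAt.continuousWithinAt
    · intro s _
      rw [hv]
      exact (hu' s).hasDerivWithinAt
    · exact fun s _ => (hw' s).continuousAt.continuousWithinAt
    · intro s _
      rw [hv]
      exact (hw' s).hasDerivWithinAt
    · funext b
      rw [hw0 b]
      show exp ((0:ℝ) • Q) x0 b.1 = _
      rw [zero_smul, exp_zero, Matrix.one_apply]
  exact congr_fun (key (Set.mem_Icc.mpr ⟨ht, le_rfl⟩)) a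

end SIRAux

namespace SIRAux

variable {V : Type*} [Fintype V] [DecidableEq V] (G : SimpleGraph V) [DecidableRel G.Adj]
  (τ γ : ℝ)

/-- transition rate where only nodes in `s` may move, and infection only counts
neighbours inside `s`. -/
noncomputable def locRate (s : Finset V) (x y : V → Fin 3) : ℝ :=
  ∑ m ∈ s,
    ((if (∀ n, n ≠ m → x n = y n) ∧ x m = 0 ∧ y m = 1 then
        τ * ((Finset.univ.filter (fun v => v ∈ s ∧ G.Adj m v ∧ x v = 1)).card : ℝ) else 0)
      + (if (∀ n, n ≠ m → x n = y n) ∧ x m = 1 ∧ y m = 2 then γ else 0))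

noncomputable def locGen (s : Finset V) : Matrix (V → Fin 3) (V → Fin 3) ℝ :=
  fun x y => if x = y then -∑ z ∈ Finset.univ.erase x, locRate G τ γ s x z
             else locRate G τ γ s x y

theorem locRate_univ : locRate G τ γ Finset.univ = sirRate G τ γ := by
  funext x y
  unfold locRate sirRate
  apply Finset.sum_congr rfl
  intro m _
  simp only [Finset.mem_univ, true_and]

theorem locGen_univ : locGen G τ γ Finset.univ = sirGen G τ γ := by
  unfold locGen sirGen
  rw [locRate_univ]

theorem locRate_eq_zero_single {s : Finset V} {x y : V → Fin 3} (v : V) (hxy : x v ≠ y v)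
    (h1 : ¬(x v = 0 ∧ y v = 1)) (h2 : ¬(x v = 1 ∧ y v = 2)) : locRate G τ γ s x y = 0 := by
  apply Finset.sum_eq_zero
  intro m _
  by_cases hmv : m = v
  · subst hmv
    rw [if_neg, if_neg, add_zero]
    · rintro ⟨-, hx, hy⟩; exact h2 ⟨hx, hy⟩
    · rintro ⟨-, hx, hy⟩; exact h1 ⟨hx, hy⟩
  · rw [if_neg, if_neg, add_zero]
    · rintro ⟨hagree, -, -⟩; exact hxy (hagree v (fun h => hmv h.symm))
    · rintro ⟨hagree, -, -⟩; exact hxy (hagree v (fun h => hmv h.symm))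

theorem locRate_eq_zero_two {s : Finset V} {x y : V → Fin 3} (v w : V) (hvw : v ≠ w)
    (hv : x v ≠ y v) (hw : x w ≠ y w) : locRate G τ γ s x y = 0 := by
  apply Finset.sum_eq_zero
  intro m _
  have : v ≠ m ∨ w ≠ m := by
    by_cases h : v = m
    · right; exact fun h' => hvw (h.trans h'.symm)
    · left; exact h
  rcases this with h | h
  · rw [if_neg, if_neg, add_zero]
    · rintro ⟨hagree, -, -⟩; exact hv (hagree v h)
    · rintro ⟨hagree, -, -⟩; exact hv (hagree v h)
  · rw [if_neg, if_neg, add_zero]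
    · rintro ⟨hagree, -, -⟩; exact hw (hagree w h)
    · rintro ⟨hagree, -, -⟩; exact hw (hagree w h)

theorem fin3_cases (a : Fin 3) : a = 0 ∨ a = 1 ∨ a = 2 := by revert a; decide

/-- closed form for the total outflow rate. -/
theorem outflow_eq (s : Finset V) (x : V → Fin 3) :
    ∑ z ∈ Finset.univ.erase x, locRate G τ γ s x z
    = ∑ m ∈ s,
        ((if x m = 0 then
            τ * ((Finset.univ.filter (fun v => v ∈ s ∧ G.Adj m v ∧ x v = 1)).card : ℝ) else 0)
          + (if x m = 1 then γ else 0)) := by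
  unfold locRate
  rw [Finset.sum_comm]
  apply Finset.sum_congr rfl
  intro m _
  rcases fin3_cases (x m) with hm | hm | hm
  · -- x m = 0 : only infection at m possible, target update x m 1
    have h10 : ¬ x m = 1 := by rw [hm]; decide
    rw [if_pos hm, if_neg h10, add_zero]
    have hmem : Function.update x m 1 ∈ Finset.univ.erase x := by
      rw [Finset.mem_erase]
      refine ⟨fun h => ?_, Finset.mem_univ _⟩
      have h2 := congr_fun h m
      rw [Function.update_self, hm] at h2
      exact absurd h2 (by decide)
    have hzero : ∀ z ∈ Finset.univ.erase x, z ≠ Function.update x m 1 →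
        ((if (∀ n, n ≠ m → x n = z n) ∧ x m = 0 ∧ z m = 1 then
            τ * ((Finset.univ.filter (fun v => v ∈ s ∧ G.Adj m v ∧ x v = 1)).card : ℝ) else 0)
          + (if (∀ n, n ≠ m → x n = z n) ∧ x m = 1 ∧ z m = 2 then γ else 0)) = 0 := by
      intro z _ hne
      rw [if_neg, if_neg, add_zero]
      · rintro ⟨-, hx1, -⟩; exact h10 hx1
      · rintro ⟨hagree, -, hzm⟩
        apply hne
        funext n
        by_cases hnm : n = m
        · subst hnm; rw [Function.update_self, hzm]
        · rw [Function.update_of_ne hnm, ← hagree n hnm]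
    rw [Finset.sum_eq_single_of_mem (Function.update x m 1) hmem hzero]
    have hc1 : (∀ n, n ≠ m → x n = Function.update x m 1 n) ∧ x m = 0
        ∧ Function.update x m 1 m = 1 :=
      ⟨fun n hn => (Function.update_of_ne hn _ _).symm, hm, by simp⟩
    rw [if_pos hc1, if_neg, add_zero]
    rintro ⟨-, hx1, -⟩; exact h10 hx1
  · -- x m = 1 : only recovery
    have h10 : ¬ x m = 0 := by rw [hm]; decide
    rw [if_neg h10, if_pos hm, zero_add]
    have hmem : Function.update x m 2 ∈ Finset.univ.erase x := by
      rw [Finset.mem_erase]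
      refine ⟨fun h => ?_, Finset.mem_univ _⟩
      have h2 := congr_fun h m
      rw [Function.update_self, hm] at h2
      exact absurd h2 (by decide)
    have hzero : ∀ z ∈ Finset.univ.erase x, z ≠ Function.update x m 2 →
        ((if (∀ n, n ≠ m → x n = z n) ∧ x m = 0 ∧ z m = 1 then
            τ * ((Finset.univ.filter (fun v => v ∈ s ∧ G.Adj m v ∧ x v = 1)).card : ℝ) else 0)
          + (if (∀ n, n ≠ m → x n = z n) ∧ x m = 1 ∧ z m = 2 then γ else 0)) = 0 := by
      intro z _ hne
      rw [if_neg, if_neg, add_zero]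
      · rintro ⟨hagree, -, hzm⟩
        apply hne
        funext n
        by_cases hnm : n = m
        · subst hnm; rw [Function.update_self, hzm]
        · rw [Function.update_of_ne hnm, ← hagree n hnm]
      · rintro ⟨-, hx1, -⟩; exact h10 hx1
    rw [Finset.sum_eq_single_of_mem (Function.update x m 2) hmem hzero]
    have hc1 : (∀ n, n ≠ m → x n = Function.update x m 2 n) ∧ x m = 1
        ∧ Function.update x m 2 m = 2 :=
      ⟨fun n hn => (Function.update_of_ne hn _ _).symm, hm, by simp⟩
    rw [if_pos hc1, if_neg, zero_add]
    rintro ⟨-, hx1, -⟩; exact h10 hx1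
  · -- x m = 2 : nothing happens
    have h0 : ¬ x m = 0 := by rw [hm]; decide
    have h1 : ¬ x m = 1 := by rw [hm]; decide
    rw [if_neg h0, if_neg h1, add_zero]
    apply Finset.sum_eq_zero
    intro z _
    rw [if_neg, if_neg, add_zero]
    · rintro ⟨-, hx1, -⟩; exact h1 hx1
    · rintro ⟨-, hx0, -⟩; exact h0 hx0

end SIRAux

namespace SIRAux

variable {V : Type*} [Fintype V] [DecidableEq V] (G : SimpleGraph V) [DecidableRel G.Adj]
  (τ γ : ℝ)

/-- freeze configuration outside `s` to the reference `x0`. -/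
def phi (s : Finset V) (x0 x : V → Fin 3) : V → Fin 3 := fun v => if v ∈ s then x v else x0 v

theorem phi_apply_mem {s : Finset V} (x0 x : V → Fin 3) {v : V} (h : v ∈ s) :
    phi s x0 x v = x v := if_pos h

theorem phi_apply_not_mem {s : Finset V} (x0 x : V → Fin 3) {v : V} (h : v ∉ s) :
    phi s x0 x v = x0 v := if_neg h

theorem phi_idem {s : Finset V} (x0 x : V → Fin 3) :
    phi s x0 (phi s x0 x) = phi s x0 x := by
  funext v
  by_cases h : v ∈ s
  · rw [phi_apply_mem _ _ h]
  · rw [phi_apply_not_mem _ _ h, phi_apply_not_mem _ _ h]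

/-- Off-diagonal rates agree with the subsystem rates when all the disagreements
between `b` and `a` are inside `s`. -/
theorem locRate_phi {s : Finset V} {j : V} (hjs : j ∈ s)
    (hnbr : ∀ m v, m ∈ s → m ≠ j → G.Adj m v → v ∈ s)
    (x0 b a : V → Fin 3) (hbj : b j = 0) (haj : a j = 0)
    (hagree : ∀ v, v ∉ s → b v = a v) :
    locRate G τ γ Finset.univ b a = locRate G τ γ s (phi s x0 b) (phi s x0 a) := by
  unfold locRate
  rw [← Finset.sum_subset (Finset.subset_univ s)]
  · apply Finset.sum_congr rfl
    intro m hm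
    have e1 : phi s x0 b m = b m := phi_apply_mem _ _ hm
    have e2 : phi s x0 a m = a m := phi_apply_mem _ _ hm
    have hCiff : (∀ n, n ≠ m → b n = a n) ↔
        (∀ n, n ≠ m → phi s x0 b n = phi s x0 a n) := by
      constructor
      · intro h n hn
        by_cases hns : n ∈ s
        · rw [phi_apply_mem _ _ hns, phi_apply_mem _ _ hns]; exact h n hn
        · rw [phi_apply_not_mem _ _ hns, phi_apply_not_mem _ _ hns]
      · intro h n hn
        by_cases hns : n ∈ s
        · have := h n hn
          rwa [phi_apply_mem _ _ hns, phi_apply_mem _ _ hns] at this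
        · exact hagree n hns
    by_cases hmj : m = j
    · subst hmj
      rw [if_neg, if_neg, if_neg, if_neg] <;>
        · rintro ⟨-, h0, h1⟩
          first
          | (rw [e2, haj] at h1; exact absurd h1 (by decide))
          | (rw [haj] at h1; exact absurd h1 (by decide))
    · have hN : (Finset.univ.filter (fun v => v ∈ Finset.univ ∧ G.Adj m v ∧ b v = 1))
          = Finset.univ.filter (fun v => v ∈ s ∧ G.Adj m v ∧ phi s x0 b v = 1) := by
        apply Finset.filter_congr
        intro v _
        constructor
        · rintro ⟨-, hadj, hv⟩
          have hvs : v ∈ s := hnbr m v hm hmj hadj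
          exact ⟨hvs, hadj, by rw [phi_apply_mem _ _ hvs]; exact hv⟩
        · rintro ⟨hvs, hadj, hv⟩
          exact ⟨Finset.mem_univ v, hadj, by rw [← phi_apply_mem (s := s) x0 b hvs]; exact hv⟩
      refine congrArg₂ (· + ·) (if_congr ?_ (by rw [hN]) rfl) (if_congr ?_ rfl rfl)
      · exact and_congr hCiff (and_congr (by rw [e1]) (by rw [e2]))
      · exact and_congr hCiff (and_congr (by rw [e1]) (by rw [e2]))
  · intro m _ hm
    rw [if_neg, if_neg, add_zero]
    · rintro ⟨-, h0, h1⟩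
      rw [hagree m hm, h1] at h0; exact absurd h0 (by decide)
    · rintro ⟨-, h0, h1⟩
      rw [hagree m hm, h1] at h0; exact absurd h0 (by decide)

end SIRAux

namespace SIRAux

variable {V : Type*} [Fintype V] [DecidableEq V] (G : SimpleGraph V) [DecidableRel G.Adj]
  (τ γ : ℝ)

theorem ninf_split {sA sB : Finset V} {j : V}
    (hcov : ∀ v : V, v ∈ sA ∨ v ∈ sB)
    (hint : ∀ v : V, v ∈ sA → v ∈ sB → v = j)
    (x0 : V → Fin 3) (a : V → Fin 3) :
    (Finset.univ.filter (fun v => v ∈ (Finset.univ : Finset V) ∧ G.Adj j v ∧ a v = 1)).card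
    = (Finset.univ.filter (fun v => v ∈ sA ∧ G.Adj j v ∧ phi sA x0 a v = 1)).card
      + (Finset.univ.filter (fun v => v ∈ sB ∧ G.Adj j v ∧ phi sB x0 a v = 1)).card := by
  rw [← Finset.card_union_of_disjoint]
  · congr 1
    ext v
    simp only [Finset.mem_filter, Finset.mem_union, Finset.mem_univ, true_and]
    constructor
    · rintro ⟨hadj, hv⟩
      rcases hcov v with h | h
      · exact Or.inl ⟨h, hadj, by rw [phi_apply_mem _ _ h]; exact hv⟩
      · exact Or.inr ⟨h, hadj, by rw [phi_apply_mem _ _ h]; exact hv⟩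
    · rintro (⟨h, hadj, hv⟩ | ⟨h, hadj, hv⟩)
      · exact ⟨hadj, by rw [← phi_apply_mem (s := sA) x0 a h]; exact hv⟩
      · exact ⟨hadj, by rw [← phi_apply_mem (s := sB) x0 a h]; exact hv⟩
  · rw [Finset.disjoint_left]
    rintro v hv1 hv2
    rw [Finset.mem_filter] at hv1 hv2
    have : v = j := hint v hv1.2.1 hv2.2.1
    subst this
    exact G.loopless.irrefl v hv1.2.2.1

theorem outflow_split {sA sB : Finset V} {j : V}
    (hjA : j ∈ sA) (hjB : j ∈ sB)
    (hcov : ∀ v : V, v ∈ sA ∨ v ∈ sB)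
    (hint : ∀ v : V, v ∈ sA → v ∈ sB → v = j)
    (hnbrA : ∀ m v, m ∈ sA → m ≠ j → G.Adj m v → v ∈ sA)
    (hnbrB : ∀ m v, m ∈ sB → m ≠ j → G.Adj m v → v ∈ sB)
    (x0 : V → Fin 3) (a : V → Fin 3) (haj : a j = 0) :
    ∑ z ∈ Finset.univ.erase a, locRate G τ γ Finset.univ a z
    = (∑ z ∈ Finset.univ.erase (phi sA x0 a), locRate G τ γ sA (phi sA x0 a) z)
      + ∑ z ∈ Finset.univ.erase (phi sB x0 a), locRate G τ γ sB (phi sB x0 a) z := by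
  rw [outflow_eq, outflow_eq, outflow_eq]
  set gU : V → ℝ := fun m =>
    ((if a m = 0 then
        τ * ((Finset.univ.filter
          (fun v => v ∈ (Finset.univ : Finset V) ∧ G.Adj m v ∧ a v = 1)).card : ℝ) else 0)
      + (if a m = 1 then γ else 0)) with hgUdef
  set gA : V → ℝ := fun m =>
    ((if phi sA x0 a m = 0 then
        τ * ((Finset.univ.filter
          (fun v => v ∈ sA ∧ G.Adj m v ∧ phi sA x0 a v = 1)).card : ℝ) else 0)
      + (if phi sA x0 a m = 1 then γ else 0)) with hgAdef
  set gB : V → ℝ := fun m =>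
    ((if phi sB x0 a m = 0 then
        τ * ((Finset.univ.filter
          (fun v => v ∈ sB ∧ G.Adj m v ∧ phi sB x0 a v = 1)).card : ℝ) else 0)
      + (if phi sB x0 a m = 1 then γ else 0)) with hgBdef
  have hdecomp : (Finset.univ : Finset V) = ((sA.erase j) ∪ (sB.erase j)) ∪ {j} := by
    ext v
    simp only [Finset.mem_univ, Finset.mem_union, Finset.mem_erase, Finset.mem_singleton,
      true_iff]
    by_cases hvj : v = j
    · exact Or.inr hvj
    · rcases hcov v with h | h
      · exact Or.inl (Or.inl ⟨hvj, h⟩)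
      · exact Or.inl (Or.inr ⟨hvj, h⟩)
  have hd1 : Disjoint (sA.erase j) (sB.erase j) := by
    rw [Finset.disjoint_left]
    rintro v hv1 hv2
    rw [Finset.mem_erase] at hv1 hv2
    exact hv1.1 (hint v hv1.2 hv2.2)
  have hd2 : Disjoint ((sA.erase j) ∪ (sB.erase j)) ({j} : Finset V) := by
    rw [Finset.disjoint_right]
    intro v hv
    rw [Finset.mem_singleton] at hv
    subst hv
    rw [Finset.mem_union, Finset.mem_erase, Finset.mem_erase]
    rintro (⟨h, -⟩ | ⟨h, -⟩) <;> exact h rfl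
  have hgA : ∀ m ∈ sA.erase j, gU m = gA m := by
    intro m hm
    rw [Finset.mem_erase] at hm
    have e1 : phi sA x0 a m = a m := phi_apply_mem _ _ hm.2
    have hN : (Finset.univ.filter
          (fun v => v ∈ (Finset.univ : Finset V) ∧ G.Adj m v ∧ a v = 1))
        = Finset.univ.filter (fun v => v ∈ sA ∧ G.Adj m v ∧ phi sA x0 a v = 1) := by
      apply Finset.filter_congr
      intro v _
      constructor
      · rintro ⟨-, hadj, hv⟩
        have hvs : v ∈ sA := hnbrA m v hm.2 hm.1 hadj
        exact ⟨hvs, hadj, by rw [phi_apply_mem _ _ hvs]; exact hv⟩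
      · rintro ⟨hvs, hadj, hv⟩
        exact ⟨Finset.mem_univ v, hadj, by rw [← phi_apply_mem (s := sA) x0 a hvs]; exact hv⟩
    rw [hgUdef, hgAdef]
    simp only
    rw [e1, hN]
  have hgB : ∀ m ∈ sB.erase j, gU m = gB m := by
    intro m hm
    rw [Finset.mem_erase] at hm
    have e1 : phi sB x0 a m = a m := phi_apply_mem _ _ hm.2
    have hN : (Finset.univ.filter
          (fun v => v ∈ (Finset.univ : Finset V) ∧ G.Adj m v ∧ a v = 1))
        = Finset.univ.filter (fun v => v ∈ sB ∧ G.Adj m v ∧ phi sB x0 a v = 1) := by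
      apply Finset.filter_congr
      intro v _
      constructor
      · rintro ⟨-, hadj, hv⟩
        have hvs : v ∈ sB := hnbrB m v hm.2 hm.1 hadj
        exact ⟨hvs, hadj, by rw [phi_apply_mem _ _ hvs]; exact hv⟩
      · rintro ⟨hvs, hadj, hv⟩
        exact ⟨Finset.mem_univ v, hadj, by rw [← phi_apply_mem (s := sB) x0 a hvs]; exact hv⟩
    rw [hgUdef, hgBdef]
    simp only
    rw [e1, hN]
  have h1 : ∑ m ∈ Finset.univ, gU m
      = (∑ m ∈ sA.erase j, gU m + ∑ m ∈ sB.erase j, gU m) + gU j := by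
    rw [Finset.sum_congr hdecomp (fun _ _ => rfl), Finset.sum_union hd2, Finset.sum_union hd1,
      Finset.sum_singleton]
  have h2 : ∑ m ∈ sA, gA m = ∑ m ∈ sA.erase j, gA m + gA j :=
    (Finset.sum_erase_add _ _ hjA).symm
  have h3 : ∑ m ∈ sB, gB m = ∑ m ∈ sB.erase j, gB m + gB j :=
    (Finset.sum_erase_add _ _ hjB).symm
  have h5 : gU j = gA j + gB j := by
    rw [hgUdef, hgAdef, hgBdef]
    simp only
    have eaj : phi sA x0 a j = a j := phi_apply_mem _ _ hjA
    have ebj : phi sB x0 a j = a j := phi_apply_mem _ _ hjB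
    have hj1 : ¬ a j = 1 := by rw [haj]; decide
    simp only [eaj, ebj, if_pos haj, if_neg hj1]
    rw [ninf_split G hcov hint x0 a]
    push_cast
    ring
  rw [h1, h2, h3, Finset.sum_congr rfl hgA, Finset.sum_congr rfl hgB, h5]
  ring

end SIRAux

namespace SIRAux

variable {V : Type*} [Fintype V] [DecidableEq V] (G : SimpleGraph V) [DecidableRel G.Adj]
  (τ γ : ℝ)

theorem locRate_j_zero {s : Finset V} {j : V} {x y : V → Fin 3}
    (hx : ¬ x j = 0) (hy : y j = 0) : locRate G τ γ s x y = 0 := by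
  apply locRate_eq_zero_single G τ γ j (fun h => hx (h.trans hy))
  · rintro ⟨h0, -⟩; exact hx h0
  · rintro ⟨-, h2⟩; rw [hy] at h2; exact absurd h2 (by decide)

theorem locGen_j_zero {s : Finset V} {j : V} {x y : V → Fin 3}
    (hx : ¬ x j = 0) (hy : y j = 0) : locGen G τ γ s x y = 0 := by
  unfold locGen
  rw [if_neg (show ¬ x = y from fun h => hx (by rw [h]; exact hy)), locRate_j_zero G τ γ hx hy]

theorem locRate_freeze {s : Finset V} {x0 x y : V → Fin 3}
    (hx : ∀ v ∉ s, x v = x0 v) (hy : ¬ ∀ v ∉ s, y v = x0 v) : locRate G τ γ s x y = 0 := by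
  push_neg at hy
  obtain ⟨v, hvs, hyv⟩ := hy
  apply Finset.sum_eq_zero
  intro m hm
  have hvm : v ≠ m := fun h => hvs (h ▸ hm)
  rw [if_neg, if_neg, add_zero]
  · rintro ⟨hagree, -, -⟩
    exact hyv ((hagree v hvm).symm.trans (hx v hvs))
  · rintro ⟨hagree, -, -⟩
    exact hyv ((hagree v hvm).symm.trans (hx v hvs))

theorem locGen_freeze {s : Finset V} {x0 x y : V → Fin 3}
    (hx : ∀ v ∉ s, x v = x0 v) (hy : ¬ ∀ v ∉ s, y v = x0 v) : locGen G τ γ s x y = 0 := by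
  unfold locGen
  rw [if_neg (show ¬ x = y from fun h => hy (by rw [← h]; exact hx)), locRate_freeze G τ γ hx hy]

theorem gen_split {sA sB : Finset V} {j : V}
    (hjA : j ∈ sA) (hjB : j ∈ sB)
    (hcov : ∀ v : V, v ∈ sA ∨ v ∈ sB)
    (hint : ∀ v : V, v ∈ sA → v ∈ sB → v = j)
    (hnbrA : ∀ m v, m ∈ sA → m ≠ j → G.Adj m v → v ∈ sA)
    (hnbrB : ∀ m v, m ∈ sB → m ≠ j → G.Adj m v → v ∈ sB)
    (x0 : V → Fin 3) (b a : V → Fin 3) (hbj : b j = 0) (haj : a j = 0) :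
    locGen G τ γ Finset.univ b a
    = locGen G τ γ sA (phi sA x0 b) (phi sA x0 a)
        * (if phi sB x0 b = phi sB x0 a then 1 else 0)
      + (if phi sA x0 b = phi sA x0 a then 1 else 0)
        * locGen G τ γ sB (phi sB x0 b) (phi sB x0 a) := by
  by_cases hab : b = a
  · subst hab
    rw [if_pos rfl, if_pos rfl, mul_one, one_mul]
    unfold locGen
    rw [if_pos rfl, if_pos rfl, if_pos rfl,
      outflow_split G τ γ hjA hjB hcov hint hnbrA hnbrB x0 b hbj]
    ring
  · by_cases hA : phi sA x0 b = phi sA x0 a <;> by_cases hB : phi sB x0 b = phi sB x0 a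
    · exfalso
      apply hab
      funext v
      rcases hcov v with h | h
      · have := congr_fun hA v
        rwa [phi_apply_mem _ _ h, phi_apply_mem _ _ h] at this
      · have := congr_fun hB v
        rwa [phi_apply_mem _ _ h, phi_apply_mem _ _ h] at this
    · -- differences inside sB
      rw [if_pos hA, if_neg hB, mul_zero, zero_add, one_mul]
      unfold locGen
      rw [if_neg hab, if_neg hB]
      apply locRate_phi G τ γ hjB hnbrB x0 b a hbj haj
      intro v hv
      have hvA : v ∈ sA := (hcov v).resolve_right hv
      have := congr_fun hA v
      rwa [phi_apply_mem _ _ hvA, phi_apply_mem _ _ hvA] at this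
    · -- differences inside sA
      rw [if_neg hA, if_pos hB, mul_one, zero_mul, add_zero]
      unfold locGen
      rw [if_neg hab, if_neg hA]
      apply locRate_phi G τ γ hjA hnbrA x0 b a hbj haj
      intro v hv
      have hvB : v ∈ sB := (hcov v).resolve_left hv
      have := congr_fun hB v
      rwa [phi_apply_mem _ _ hvB, phi_apply_mem _ _ hvB] at this
    · -- differences on both sides
      rw [if_neg hA, if_neg hB, mul_zero, zero_mul, add_zero]
      unfold locGen
      rw [if_neg hab]
      obtain ⟨u, hu⟩ := Function.ne_iff.mp hA
      obtain ⟨w, hw⟩ := Function.ne_iff.mp hB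
      have huA : u ∈ sA := by
        by_contra h
        exact hu (by rw [phi_apply_not_mem _ _ h, phi_apply_not_mem _ _ h])
      have hwB : w ∈ sB := by
        by_contra h
        exact hw (by rw [phi_apply_not_mem _ _ h, phi_apply_not_mem _ _ h])
      have hbu : b u ≠ a u := by
        rwa [phi_apply_mem _ _ huA, phi_apply_mem _ _ huA] at hu
      have hbw : b w ≠ a w := by
        rwa [phi_apply_mem _ _ hwB, phi_apply_mem _ _ hwB] at hw
      have huj : u ≠ j := fun h => hbu (by rw [h, hbj, haj])
      have hwj : w ≠ j := fun h => hbw (by rw [h, hbj, haj])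
      have huw : u ≠ w := fun h => huj (hint u huA (h ▸ hwB))
      exact locRate_eq_zero_two G τ γ u w huw hbu hbw

end SIRAux

namespace SIRAux

open NormedSpace

attribute [local instance] Matrix.linftyOpNormedRing Matrix.linftyOpNormedAlgebra

variable {V : Type*} [Fintype V] [DecidableEq V] (G : SimpleGraph V) [DecidableRel G.Adj]
  (τ γ : ℝ)

theorem phi_self {s : Finset V} (x0 : V → Fin 3) : phi s x0 x0 = x0 := by
  funext v
  by_cases h : v ∈ s
  · exact phi_apply_mem _ _ h
  · exact phi_apply_not_mem _ _ h

theorem exp_freeze_zero {s : Finset V} (x0 : V → Fin 3) (time : ℝ) {z : V → Fin 3}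
    (hz : ¬ ∀ v ∉ s, z v = x0 v) :
    exp (time • locGen G τ γ s) x0 z = 0 := by
  apply exp_closed (P := fun y : V → Fin 3 => ¬ ∀ v ∉ s, y v = x0 v)
  · intro x y hx hy
    rw [Matrix.smul_apply, locGen_freeze G τ γ (not_not.mp hx) hy]
    exact smul_zero _
  · exact fun h => h (fun v _ => rfl)
  · exact hz

theorem exp_j_zero {s : Finset V} (x0 : V → Fin 3) (time : ℝ) {j : V} (hx0 : ¬ x0 j = 0)
    {z : V → Fin 3} (hz : z j = 0) :
    exp (time • locGen G τ γ s) x0 z = 0 := by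
  apply exp_closed (P := fun y : V → Fin 3 => y j = 0)
  · intro x y hx hy
    rw [Matrix.smul_apply, locGen_j_zero G τ γ hx hy]
    exact smul_zero _
  · exact hx0
  · exact hz

theorem reindex_sum {sA sB : Finset V} {j : V}
    (hjA : j ∈ sA) (hjB : j ∈ sB)
    (hcov : ∀ v : V, v ∈ sA ∨ v ∈ sB)
    (hint : ∀ v : V, v ∈ sA → v ∈ sB → v = j)
    (x0 a : V → Fin 3) (haj : a j = 0) (g : (V → Fin 3) → ℝ) :
    ∑ x ∈ Finset.univ.filter
        (fun x : V → Fin 3 => x j = 0 ∧ phi sB x0 x = phi sB x0 a), g (phi sA x0 x)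
    = ∑ z ∈ Finset.univ.filter
        (fun z : V → Fin 3 => z j = 0 ∧ ∀ v ∉ sA, z v = x0 v), g z := by
  apply Finset.sum_nbij' (fun x => phi sA x0 x) (fun z v => if v ∈ sA then z v else a v)
  · intro x hx
    rw [Finset.mem_filter] at hx ⊢
    refine ⟨Finset.mem_univ _, ?_, fun v hv => phi_apply_not_mem _ _ hv⟩
    rw [phi_apply_mem _ _ hjA]
    exact hx.2.1
  · intro z hz
    rw [Finset.mem_filter] at hz ⊢
    refine ⟨Finset.mem_univ _, ?_, ?_⟩
    · show (if j ∈ sA then z j else a j) = 0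
      rw [if_pos hjA]
      exact hz.2.1
    · funext v
      by_cases hv : v ∈ sB
      · rw [phi_apply_mem _ _ hv, phi_apply_mem _ _ hv]
        by_cases hvA : v ∈ sA
        · have : v = j := hint v hvA hv
          subst this
          rw [if_pos hvA, hz.2.1, haj]
        · rw [if_neg hvA]
      · rw [phi_apply_not_mem _ _ hv, phi_apply_not_mem _ _ hv]
  · intro x hx
    rw [Finset.mem_filter] at hx
    funext v
    by_cases hv : v ∈ sA
    · rw [if_pos hv, phi_apply_mem _ _ hv]
    · rw [if_neg hv]
      have hvB : v ∈ sB := (hcov v).resolve_left hv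
      have := congr_fun hx.2.2 v
      rw [phi_apply_mem _ _ hvB, phi_apply_mem _ _ hvB] at this
      exact this.symm
  · intro z hz
    rw [Finset.mem_filter] at hz
    funext v
    by_cases hv : v ∈ sA
    · rw [phi_apply_mem _ _ hv, if_pos hv]
    · rw [phi_apply_not_mem _ _ hv, hz.2.2 v hv]
  · intro x _
    rfl

theorem deriv_sum_eq {sA sB : Finset V} {j : V}
    (hjA : j ∈ sA) (hjB : j ∈ sB)
    (hcov : ∀ v : V, v ∈ sA ∨ v ∈ sB)
    (hint : ∀ v : V, v ∈ sA → v ∈ sB → v = j)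
    (hnbrA : ∀ m v, m ∈ sA → m ≠ j → G.Adj m v → v ∈ sA)
    (hnbrB : ∀ m v, m ∈ sB → m ≠ j → G.Adj m v → v ∈ sB)
    (x0 : V → Fin 3) (time : ℝ) (a : V → Fin 3) (haj : a j = 0) :
    ∑ b : {x : V → Fin 3 // x j = 0},
      (exp (time • locGen G τ γ sA) x0 (phi sA x0 b.1)
        * exp (time • locGen G τ γ sB) x0 (phi sB x0 b.1))
        * locGen G τ γ Finset.univ b.1 a
    = (∑ z, exp (time • locGen G τ γ sA) x0 z * locGen G τ γ sA z (phi sA x0 a))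
        * exp (time • locGen G τ γ sB) x0 (phi sB x0 a)
      + exp (time • locGen G τ γ sA) x0 (phi sA x0 a)
        * ∑ z, exp (time • locGen G τ γ sB) x0 z * locGen G τ γ sB z (phi sB x0 a) := by
  have hsplit : ∀ b : {x : V → Fin 3 // x j = 0},
      (exp (time • locGen G τ γ sA) x0 (phi sA x0 b.1)
        * exp (time • locGen G τ γ sB) x0 (phi sB x0 b.1))
        * locGen G τ γ Finset.univ b.1 a
      = (if phi sB x0 b.1 = phi sB x0 a then
          exp (time • locGen G τ γ sA) x0 (phi sA x0 b.1)
            * locGen G τ γ sA (phi sA x0 b.1) (phi sA x0 a)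
            * exp (time • locGen G τ γ sB) x0 (phi sB x0 a) else 0)
        + (if phi sA x0 b.1 = phi sA x0 a then
          exp (time • locGen G τ γ sA) x0 (phi sA x0 a)
            * (exp (time • locGen G τ γ sB) x0 (phi sB x0 b.1)
              * locGen G τ γ sB (phi sB x0 b.1) (phi sB x0 a)) else 0) := by
    intro b
    rw [gen_split G τ γ hjA hjB hcov hint hnbrA hnbrB x0 b.1 a b.2 haj]
    by_cases h1 : phi sB x0 b.1 = phi sB x0 a <;>
      by_cases h2 : phi sA x0 b.1 = phi sA x0 a <;>
      simp only [h1, h2, if_pos, if_neg, if_true, if_false, mul_one, mul_zero, one_mul,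
        zero_mul, add_zero, zero_add, ite_true, ite_false] <;>
      ring
  rw [Finset.sum_congr rfl (fun b _ => hsplit b), Finset.sum_add_distrib]
  congr 1
  · -- A-side sum
    rw [← Finset.sum_subtype (Finset.univ.filter (fun x : V → Fin 3 => x j = 0))
      (by simp) (fun x => if phi sB x0 x = phi sB x0 a then
          exp (time • locGen G τ γ sA) x0 (phi sA x0 x)
            * locGen G τ γ sA (phi sA x0 x) (phi sA x0 a)
            * exp (time • locGen G τ γ sB) x0 (phi sB x0 a) else 0)]
    rw [← Finset.sum_filter, Finset.filter_filter]
    rw [reindex_sum hjA hjB hcov hint x0 a haj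
      (fun z => exp (time • locGen G τ γ sA) x0 z * locGen G τ γ sA z (phi sA x0 a)
        * exp (time • locGen G τ γ sB) x0 (phi sB x0 a))]
    rw [Finset.sum_subset (Finset.filter_subset _ _), Finset.sum_mul]
    intro z _ hz
    rw [Finset.mem_filter] at hz
    by_cases hzj : z j = 0
    · have hfr : ¬ ∀ v ∉ sA, z v = x0 v := fun h => hz ⟨Finset.mem_univ _, hzj, h⟩
      rw [exp_freeze_zero G τ γ x0 time hfr]; ring
    · rw [locGen_j_zero G τ γ hzj (by rw [phi_apply_mem _ _ hjA]; exact haj)]; ring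
  · -- B-side sum
    have hcov' : ∀ v : V, v ∈ sB ∨ v ∈ sA := fun v => (hcov v).symm
    have hint' : ∀ v : V, v ∈ sB → v ∈ sA → v = j := fun v h1 h2 => hint v h2 h1
    rw [← Finset.sum_subtype (Finset.univ.filter (fun x : V → Fin 3 => x j = 0))
      (by simp) (fun x => if phi sA x0 x = phi sA x0 a then
          exp (time • locGen G τ γ sA) x0 (phi sA x0 a)
            * (exp (time • locGen G τ γ sB) x0 (phi sB x0 x)
              * locGen G τ γ sB (phi sB x0 x) (phi sB x0 a)) else 0)]
    rw [← Finset.sum_filter, Finset.filter_filter]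
    rw [reindex_sum hjB hjA hcov' hint' x0 a haj
      (fun z => exp (time • locGen G τ γ sA) x0 (phi sA x0 a)
        * (exp (time • locGen G τ γ sB) x0 z * locGen G τ γ sB z (phi sB x0 a)))]
    rw [Finset.sum_subset (Finset.filter_subset _ _), Finset.mul_sum]
    intro z _ hz
    rw [Finset.mem_filter] at hz
    by_cases hzj : z j = 0
    · have hfr : ¬ ∀ v ∉ sB, z v = x0 v := fun h => hz ⟨Finset.mem_univ _, hzj, h⟩
      rw [exp_freeze_zero G τ γ x0 time hfr]; ring
    · rw [locGen_j_zero G τ γ hzj (by rw [phi_apply_mem _ _ hjB]; exact haj)]; ring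

end SIRAux

namespace SIRAux

open NormedSpace

attribute [local instance] Matrix.linftyOpNormedRing Matrix.linftyOpNormedAlgebra

variable {V : Type*} [Fintype V] [DecidableEq V] (G : SimpleGraph V) [DecidableRel G.Adj]
  (τ γ : ℝ)

theorem exp_factor {sA sB : Finset V} {j : V}
    (hjA : j ∈ sA) (hjB : j ∈ sB)
    (hcov : ∀ v : V, v ∈ sA ∨ v ∈ sB)
    (hint : ∀ v : V, v ∈ sA → v ∈ sB → v = j)
    (hnbrA : ∀ m v, m ∈ sA → m ≠ j → G.Adj m v → v ∈ sA)
    (hnbrB : ∀ m v, m ∈ sB → m ≠ j → G.Adj m v → v ∈ sB)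
    (x0 : V → Fin 3) (hx0j : x0 j = 0) (t : ℝ) (ht : 0 ≤ t)
    (a : V → Fin 3) (haj : a j = 0) :
    exp (t • locGen G τ γ Finset.univ) x0 a
    = exp (t • locGen G τ γ sA) x0 (phi sA x0 a)
      * exp (t • locGen G τ γ sB) x0 (phi sB x0 a) := by
  have h := restricted_ode (locGen G τ γ Finset.univ) (fun x : V → Fin 3 => x j = 0)
    (fun x y hx hy => locGen_j_zero G τ γ hx hy) x0 hx0j
    (fun u b => exp (u • locGen G τ γ sA) x0 (phi sA x0 b.1)
      * exp (u • locGen G τ γ sB) x0 (phi sB x0 b.1)) ?_ ?_ t ht ⟨a, haj⟩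
  · exact h
  · -- initial condition
    intro b
    simp only [zero_smul, exp_zero, Matrix.one_apply]
    by_cases h : x0 = b.1
    · have eA : phi sA x0 b.1 = x0 := by rw [← h, phi_self]
      have eB : phi sB x0 b.1 = x0 := by rw [← h, phi_self]
      rw [eA, eB, if_pos rfl, if_pos h, mul_one]
    · rw [if_neg h]
      by_cases h1 : x0 = phi sA x0 b.1
      · by_cases h2 : x0 = phi sB x0 b.1
        · exfalso
          apply h
          funext v
          rcases hcov v with hv | hv
          · rw [congr_fun h1 v, phi_apply_mem _ _ hv]
          · rw [congr_fun h2 v, phi_apply_mem _ _ hv]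
        · rw [if_neg h2, mul_zero]
      · rw [if_neg h1, zero_mul]
  · -- derivative
    intro u
    rw [hasDerivAt_pi]
    intro b
    have hA := exp_entry_deriv (locGen G τ γ sA) u x0 (phi sA x0 b.1)
    have hB := exp_entry_deriv (locGen G τ γ sB) u x0 (phi sB x0 b.1)
    have heq := deriv_sum_eq G τ γ hjA hjB hcov hint hnbrA hnbrB x0 u b.1 b.2
    rw [heq]
    exact hA.mul hB

theorem marginal_factor {sA sB : Finset V} {j : V}
    (hjA : j ∈ sA) (hjB : j ∈ sB)
    (hcov : ∀ v : V, v ∈ sA ∨ v ∈ sB)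
    (hint : ∀ v : V, v ∈ sA → v ∈ sB → v = j)
    (hnbrA : ∀ m v, m ∈ sA → m ≠ j → G.Adj m v → v ∈ sA)
    (hnbrB : ∀ m v, m ∈ sB → m ≠ j → G.Adj m v → v ∈ sB)
    (x0 : V → Fin 3) (hx0j : x0 j = 0) (t : ℝ) (ht : 0 ≤ t)
    (cA cB : (V → Fin 3) → Prop) [DecidablePred cA] [DecidablePred cB]
    (hAj : ∀ x, cA x → x j = 0) (hBj : ∀ x, cB x → x j = 0)
    (hAdep : ∀ x, cA (phi sA x0 x) ↔ cA x) (hBdep : ∀ x, cB (phi sB x0 x) ↔ cB x) :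
    ∑ x ∈ Finset.univ.filter (fun x => cA x ∧ cB x),
        exp (t • locGen G τ γ Finset.univ) x0 x
    = (∑ y ∈ Finset.univ.filter (fun y => cA y ∧ phi sA x0 y = y),
          exp (t • locGen G τ γ sA) x0 y)
      * (∑ z ∈ Finset.univ.filter (fun z => cB z ∧ phi sB x0 z = z),
          exp (t • locGen G τ γ sB) x0 z) := by
  rw [Finset.sum_mul_sum, ← Finset.sum_product']
  apply Finset.sum_nbij' (fun x => (phi sA x0 x, phi sB x0 x))
    (fun p v => if v ∈ sA then p.1 v else p.2 v)
  · intro x hx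
    rw [Finset.mem_filter] at hx
    rw [Finset.mem_product, Finset.mem_filter, Finset.mem_filter]
    exact ⟨⟨Finset.mem_univ _, (hAdep x).mpr hx.2.1, phi_idem x0 x⟩,
      ⟨Finset.mem_univ _, (hBdep x).mpr hx.2.2, phi_idem x0 x⟩⟩
  · intro p hp
    rw [Finset.mem_product, Finset.mem_filter, Finset.mem_filter] at hp
    rw [Finset.mem_filter]
    have heA : phi sA x0 (fun v => if v ∈ sA then p.1 v else p.2 v) = p.1 := by
      funext v
      by_cases hv : v ∈ sA
      · rw [phi_apply_mem _ _ hv, if_pos hv]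
      · rw [phi_apply_not_mem _ _ hv]
        have := congr_fun hp.1.2.2 v
        rw [phi_apply_not_mem _ _ hv] at this
        exact this
    have heB : phi sB x0 (fun v => if v ∈ sB then p.2 v else p.2 v) = p.2 := by
      funext v; by_cases hv : v ∈ sB
      · rw [phi_apply_mem _ _ hv, if_pos hv]
      · rw [phi_apply_not_mem _ _ hv]
        have := congr_fun hp.2.2.2 v
        rw [phi_apply_not_mem _ _ hv] at this
        exact this
    have heB' : phi sB x0 (fun v => if v ∈ sA then p.1 v else p.2 v) = p.2 := by
      funext v
      by_cases hv : v ∈ sB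
      · rw [phi_apply_mem _ _ hv]
        by_cases hvA : v ∈ sA
        · have hvj : v = j := hint v hvA hv
          subst hvj
          rw [if_pos hvA, hAj _ hp.1.2.1, hBj _ hp.2.2.1]
        · rw [if_neg hvA]
      · rw [phi_apply_not_mem _ _ hv]
        have := congr_fun hp.2.2.2 v
        rw [phi_apply_not_mem _ _ hv] at this
        exact this
    refine ⟨Finset.mem_univ _, ?_, ?_⟩
    · rw [show cA (fun v => if v ∈ sA then p.1 v else p.2 v)
          ↔ cA (phi sA x0 (fun v => if v ∈ sA then p.1 v else p.2 v)) from
          (hAdep _).symm, heA]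
      exact hp.1.2.1
    · rw [show cB (fun v => if v ∈ sA then p.1 v else p.2 v)
          ↔ cB (phi sB x0 (fun v => if v ∈ sA then p.1 v else p.2 v)) from
          (hBdep _).symm, heB']
      exact hp.2.2.1
  · intro x hx
    rw [Finset.mem_filter] at hx
    funext v
    by_cases hv : v ∈ sA
    · simp only [if_pos hv]
      exact phi_apply_mem _ _ hv
    · simp only [if_neg hv]
      exact phi_apply_mem _ _ ((hcov v).resolve_left hv)
  · intro p hp
    rw [Finset.mem_product, Finset.mem_filter, Finset.mem_filter] at hp
    have heA : phi sA x0 (fun v => if v ∈ sA then p.1 v else p.2 v) = p.1 := by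
      funext v
      by_cases hv : v ∈ sA
      · rw [phi_apply_mem _ _ hv, if_pos hv]
      · rw [phi_apply_not_mem _ _ hv]
        have := congr_fun hp.1.2.2 v
        rw [phi_apply_not_mem _ _ hv] at this
        exact this
    have heB' : phi sB x0 (fun v => if v ∈ sA then p.1 v else p.2 v) = p.2 := by
      funext v
      by_cases hv : v ∈ sB
      · rw [phi_apply_mem _ _ hv]
        by_cases hvA : v ∈ sA
        · have hvj : v = j := hint v hvA hv
          subst hvj
          rw [if_pos hvA, hAj _ hp.1.2.1, hBj _ hp.2.2.1]
        · rw [if_neg hvA]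
      · rw [phi_apply_not_mem _ _ hv]
        have := congr_fun hp.2.2.2 v
        rw [phi_apply_not_mem _ _ hv] at this
        exact this
    rw [Prod.ext_iff]
    exact ⟨heA, heB'⟩
  · intro x hx
    rw [Finset.mem_filter] at hx
    exact exp_factor G τ γ hjA hjB hcov hint hnbrA hnbrB x0 hx0j t ht x (hAj x hx.2.1)

end SIRAux

/-- On an acyclic graph, for Markovian SIR dynamics with pure initial condition, the
pair-based (unclustered) moment closure is exact on the states `ISS` and `ISI`. -/
theorem sir_pair_closure_exact_on_trees
    {V : Type*} [Fintype V] [DecidableEq V] (G : SimpleGraph V) [DecidableRel G.Adj]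
    (hG : G.IsAcyclic) (τ γ : ℝ) (hτ : 0 < τ) (hγ : 0 ≤ γ)
    (x0 : V → Fin 3) (i j k : V)
    (hij : i ≠ j) (hjk : j ≠ k) (hik : i ≠ k)
    (hadj₁ : G.Adj i j) (hadj₂ : G.Adj j k)
    (t : ℝ) (ht : 0 ≤ t) :
    sirP3 G τ γ x0 i j k 1 0 0 t * sirP1 G τ γ x0 j 0 t
      = sirP2 G τ γ x0 i j 1 0 t * sirP2 G τ γ x0 j k 0 0 t ∧
    sirP3 G τ γ x0 i j k 1 0 1 t * sirP1 G τ γ x0 j 0 t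
      = sirP2 G τ γ x0 i j 1 0 t * sirP2 G τ γ x0 j k 0 1 t := by
  classical
  have hPdef : ∀ x, sirP G τ γ x0 t x
      = NormedSpace.exp (t • SIRAux.locGen G τ γ Finset.univ) x0 x := by
    intro x
    unfold sirP
    rw [SIRAux.locGen_univ]
  by_cases hx0j : x0 j = 0
  case neg =>
    have hz : ∀ (p : (V → Fin 3) → Prop) (_ : DecidablePred p), (∀ x, p x → x j = 0) →
        ∑ x ∈ Finset.univ.filter p, sirP G τ γ x0 t x = 0 := by
      intro p _ hp
      apply Finset.sum_eq_zero
      intro x hx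
      rw [hPdef]
      exact SIRAux.exp_j_zero G τ γ x0 t hx0j (hp x (Finset.mem_filter.mp hx).2)
    have h3 : ∀ C : Fin 3, sirP3 G τ γ x0 i j k 1 0 C t = 0 := by
      intro C; unfold sirP3; exact hz _ _ (fun x h => h.2.1)
    have h2 : sirP2 G τ γ x0 i j 1 0 t = 0 := by
      unfold sirP2; exact hz _ _ (fun x h => h.2)
    constructor <;> rw [h3, h2] <;> ring
  case pos =>
    obtain ⟨sA, sB, hjA, hjB, hcov, hint, hnbrA, hnbrB, hiA, hkB⟩ :
        ∃ sA sB : Finset V, j ∈ sA ∧ j ∈ sB ∧ (∀ v : V, v ∈ sA ∨ v ∈ sB)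
          ∧ (∀ v : V, v ∈ sA → v ∈ sB → v = j)
          ∧ (∀ m v, m ∈ sA → m ≠ j → G.Adj m v → v ∈ sA)
          ∧ (∀ m v, m ∈ sB → m ≠ j → G.Adj m v → v ∈ sB)
          ∧ i ∈ sA ∧ k ∈ sB := by
      set pL : V → Prop := fun v => ¬ v = j ∧ ∃ p : G.Walk i v, j ∉ p.support with hpL
      refine ⟨insert j (Finset.univ.filter pL), Finset.univ.filter (fun v => ¬ pL v),
        Finset.mem_insert_self _ _, ?_, ?_, ?_, ?_, ?_, ?_, ?_⟩
      · rw [Finset.mem_filter]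
        exact ⟨Finset.mem_univ _, fun h => h.1 rfl⟩
      · intro v
        by_cases h : pL v
        · exact Or.inl (Finset.mem_insert_of_mem (Finset.mem_filter.mpr
            ⟨Finset.mem_univ _, h⟩))
        · exact Or.inr (Finset.mem_filter.mpr ⟨Finset.mem_univ _, h⟩)
      · intro v h1 h2
        rw [Finset.mem_insert, Finset.mem_filter] at h1
        rw [Finset.mem_filter] at h2
        rcases h1 with h | h
        · exact h
        · exact absurd h.2 h2.2
      · -- neighbour closure of the A side
        intro m v hm hmj hadj
        rw [Finset.mem_insert, Finset.mem_filter] at hm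
        have hpm : pL m := by
          rcases hm with h | h
          · exact absurd h hmj
          · exact h.2
        by_cases hvj : v = j
        · rw [hvj]; exact Finset.mem_insert_self _ _
        · apply Finset.mem_insert_of_mem
          rw [Finset.mem_filter]
          refine ⟨Finset.mem_univ _, hvj, ?_⟩
          obtain ⟨-, p, hp⟩ := hpm
          refine ⟨p.concat hadj, ?_⟩
          rw [SimpleGraph.Walk.support_concat]
          intro hmem
          rcases List.mem_append.mp hmem with h | h
          · exact hp h
          · exact hvj (List.mem_singleton.mp h).symm
      · -- neighbour closure of the B side
        intro m v hm hmj hadj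
        rw [Finset.mem_filter] at hm
        rw [Finset.mem_filter]
        refine ⟨Finset.mem_univ _, fun hpv => ?_⟩
        apply hm.2
        obtain ⟨hvj, q, hq⟩ := hpv
        refine ⟨hmj, q.concat hadj.symm, ?_⟩
        rw [SimpleGraph.Walk.support_concat]
        intro hmem
        rcases List.mem_append.mp hmem with h | h
        · exact hq h
        · exact hmj (List.mem_singleton.mp h).symm
      · -- i is on the A side
        apply Finset.mem_insert_of_mem
        rw [Finset.mem_filter]
        refine ⟨Finset.mem_univ _, fun h => hij h, SimpleGraph.Walk.nil, ?_⟩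
        rw [SimpleGraph.Walk.support_nil]
        intro h
        exact hij (List.mem_singleton.mp h).symm
      · -- k is on the B side : this is where acyclicity is used
        rw [Finset.mem_filter]
        refine ⟨Finset.mem_univ _, fun hpk => ?_⟩
        obtain ⟨-, p, hp⟩ := hpk
        have hpath : (SimpleGraph.Walk.cons hadj₁
            (SimpleGraph.Walk.cons hadj₂ SimpleGraph.Walk.nil)).IsPath := by
          rw [SimpleGraph.Walk.isPath_def]
          simp [hij, hjk, hik]
        have huniq := hG.path_unique ⟨_, hpath⟩ p.toPath
        have hjmem : j ∈ (p.toPath : G.Walk i k).support := by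
          rw [← congrArg (fun q : G.Path i k => (q : G.Walk i k).support) huniq]
          simp
        exact hp (SimpleGraph.Walk.support_toPath_subset p hjmem)
    -- the four factorizations
    have key3 : ∀ C : Fin 3,
        sirP3 G τ γ x0 i j k 1 0 C t
        = (∑ y ∈ Finset.univ.filter
              (fun y => (y i = 1 ∧ y j = 0) ∧ SIRAux.phi sA x0 y = y),
            NormedSpace.exp (t • SIRAux.locGen G τ γ sA) x0 y)
          * (∑ z ∈ Finset.univ.filter
              (fun z => (z j = 0 ∧ z k = C) ∧ SIRAux.phi sB x0 z = z),
            NormedSpace.exp (t • SIRAux.locGen G τ γ sB) x0 z) := by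
      intro C
      have h1 : sirP3 G τ γ x0 i j k 1 0 C t
          = ∑ x ∈ Finset.univ.filter
              (fun x : V → Fin 3 => (x i = 1 ∧ x j = 0) ∧ (x j = 0 ∧ x k = C)),
            NormedSpace.exp (t • SIRAux.locGen G τ γ Finset.univ) x0 x := by
        unfold sirP3
        exact Finset.sum_congr (Finset.filter_congr (fun x _ => by tauto))
          (fun x _ => hPdef x)
      rw [h1]
      exact SIRAux.marginal_factor G τ γ hjA hjB hcov hint hnbrA hnbrB x0 hx0j t ht
        (fun x => x i = 1 ∧ x j = 0) (fun x => x j = 0 ∧ x k = C)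
        (fun x h => h.2) (fun x h => h.1)
        (fun x => by simp only [SIRAux.phi_apply_mem x0 x hiA, SIRAux.phi_apply_mem x0 x hjA])
        (fun x => by simp only [SIRAux.phi_apply_mem x0 x hjB, SIRAux.phi_apply_mem x0 x hkB])
    have key1 : sirP1 G τ γ x0 j 0 t
        = (∑ y ∈ Finset.univ.filter
              (fun y => (y j = 0) ∧ SIRAux.phi sA x0 y = y),
            NormedSpace.exp (t • SIRAux.locGen G τ γ sA) x0 y)
          * (∑ z ∈ Finset.univ.filter
              (fun z => (z j = 0) ∧ SIRAux.phi sB x0 z = z),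
            NormedSpace.exp (t • SIRAux.locGen G τ γ sB) x0 z) := by
      have h1 : sirP1 G τ γ x0 j 0 t
          = ∑ x ∈ Finset.univ.filter
              (fun x : V → Fin 3 => (x j = 0) ∧ (x j = 0)),
            NormedSpace.exp (t • SIRAux.locGen G τ γ Finset.univ) x0 x := by
        unfold sirP1
        exact Finset.sum_congr (Finset.filter_congr (fun x _ => by tauto))
          (fun x _ => hPdef x)
      rw [h1]
      exact SIRAux.marginal_factor G τ γ hjA hjB hcov hint hnbrA hnbrB x0 hx0j t ht
        (fun x => x j = 0) (fun x => x j = 0)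
        (fun x h => h) (fun x h => h)
        (fun x => by simp only [SIRAux.phi_apply_mem x0 x hjA])
        (fun x => by simp only [SIRAux.phi_apply_mem x0 x hjB])
    have key2ij : sirP2 G τ γ x0 i j 1 0 t
        = (∑ y ∈ Finset.univ.filter
              (fun y => (y i = 1 ∧ y j = 0) ∧ SIRAux.phi sA x0 y = y),
            NormedSpace.exp (t • SIRAux.locGen G τ γ sA) x0 y)
          * (∑ z ∈ Finset.univ.filter
              (fun z => (z j = 0) ∧ SIRAux.phi sB x0 z = z),
            NormedSpace.exp (t • SIRAux.locGen G τ γ sB) x0 z) := by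
      have h1 : sirP2 G τ γ x0 i j 1 0 t
          = ∑ x ∈ Finset.univ.filter
              (fun x : V → Fin 3 => (x i = 1 ∧ x j = 0) ∧ (x j = 0)),
            NormedSpace.exp (t • SIRAux.locGen G τ γ Finset.univ) x0 x := by
        unfold sirP2
        exact Finset.sum_congr (Finset.filter_congr (fun x _ => by tauto))
          (fun x _ => hPdef x)
      rw [h1]
      exact SIRAux.marginal_factor G τ γ hjA hjB hcov hint hnbrA hnbrB x0 hx0j t ht
        (fun x => x i = 1 ∧ x j = 0) (fun x => x j = 0)
        (fun x h => h.2) (fun x h => h)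
        (fun x => by simp only [SIRAux.phi_apply_mem x0 x hiA, SIRAux.phi_apply_mem x0 x hjA])
        (fun x => by simp only [SIRAux.phi_apply_mem x0 x hjB])
    have key2jk : ∀ C : Fin 3, sirP2 G τ γ x0 j k 0 C t
        = (∑ y ∈ Finset.univ.filter
              (fun y => (y j = 0) ∧ SIRAux.phi sA x0 y = y),
            NormedSpace.exp (t • SIRAux.locGen G τ γ sA) x0 y)
          * (∑ z ∈ Finset.univ.filter
              (fun z => (z j = 0 ∧ z k = C) ∧ SIRAux.phi sB x0 z = z),
            NormedSpace.exp (t • SIRAux.locGen G τ γ sB) x0 z) := by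
      intro C
      have h1 : sirP2 G τ γ x0 j k 0 C t
          = ∑ x ∈ Finset.univ.filter
              (fun x : V → Fin 3 => (x j = 0) ∧ (x j = 0 ∧ x k = C)),
            NormedSpace.exp (t • SIRAux.locGen G τ γ Finset.univ) x0 x := by
        unfold sirP2
        exact Finset.sum_congr (Finset.filter_congr (fun x _ => by tauto))
          (fun x _ => hPdef x)
      rw [h1]
      exact SIRAux.marginal_factor G τ γ hjA hjB hcov hint hnbrA hnbrB x0 hx0j t ht
        (fun x => x j = 0) (fun x => x j = 0 ∧ x k = C)
        (fun x h => h) (fun x h => h.1)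
        (fun x => by simp only [SIRAux.phi_apply_mem x0 x hjA])
        (fun x => by simp only [SIRAux.phi_apply_mem x0 x hjB, SIRAux.phi_apply_mem x0 x hkB])
    constructor
    · rw [key3 0, key1, key2ij, key2jk 0]; ring
    · rw [key3 1, key1, key2ij, key2jk 1]; ring
end

section
/- For Markovian SEIR dynamics with infection rate τ > 0, latency rate δ > 0 and recovery rate γ ≥ 0 on a finite simple graph G that is acyclic, for every pure initial configuration x⁰ : V → Fin 4, every triple of pairwise distinct nodes i, j, k with i adjacent to j and j adjacent to k, and every t ≥ 0, the pair-based (unclustered) moment closure is exact on the states ISS and ISI, i.e. P_{ijk}(I,S,S;t) · P_j(S;t) = P_{ij}(I,S;t) · P_{jk}(S,S;t) and P_{ijk}(I,S,I;t) · P_j(S;t) = P_{ij}(I,S;t) · P_{jk}(S,I;t). -/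
open Finset

/-- Rate of a single off-diagonal transition for the Markovian SEIR model with states
`0 = S`, `1 = E`, `2 = I`, `3 = R`: nonzero only if `y` agrees with `x` except at exactly one
node `i`, where either `S → E` (rate `τ · #infectious neighbours`), `E → I` (rate `δ`),
or `I → R` (rate `γ`). -/
noncomputable def seirRate {V : Type*} [Fintype V] [DecidableEq V] (G : SimpleGraph V)
    [DecidableRel G.Adj] (τ δ γ : ℝ) (x y : V → Fin 4) : ℝ :=
  ∑ i : V,
    ((if (∀ j, j ≠ i → x j = y j) ∧ x i = 0 ∧ y i = 1 then
        τ * ((Finset.univ.filter (fun j => G.Adj i j ∧ x j = 2)).card : ℝ) else 0)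
      + (if (∀ j, j ≠ i → x j = y j) ∧ x i = 1 ∧ y i = 2 then δ else 0)
      + (if (∀ j, j ≠ i → x j = y j) ∧ x i = 2 ∧ y i = 3 then γ else 0))

/-- Generator matrix of the Markovian SEIR dynamics on configurations `V → Fin 4`. -/
noncomputable def seirGen {V : Type*} [Fintype V] [DecidableEq V] (G : SimpleGraph V)
    [DecidableRel G.Adj] (τ δ γ : ℝ) : Matrix (V → Fin 4) (V → Fin 4) ℝ :=
  fun x y => if x = y then -∑ z ∈ Finset.univ.erase x, seirRate G τ δ γ x z
             else seirRate G τ δ γ x y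

/-- Distribution at time `t` started from the pure configuration `x0`. -/
noncomputable def seirP {V : Type*} [Fintype V] [DecidableEq V] (G : SimpleGraph V)
    [DecidableRel G.Adj] (τ δ γ : ℝ) (x0 : V → Fin 4) (t : ℝ) (x : V → Fin 4) : ℝ :=
  NormedSpace.exp (t • seirGen G τ δ γ) x0 x

/-- Single-node marginal `P_i(A;t)`. -/
noncomputable def seirP1 {V : Type*} [Fintype V] [DecidableEq V] (G : SimpleGraph V)
    [DecidableRel G.Adj] (τ δ γ : ℝ) (x0 : V → Fin 4) (i : V) (A : Fin 4) (t : ℝ) : ℝ :=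
  ∑ x ∈ Finset.univ.filter (fun x : V → Fin 4 => x i = A), seirP G τ δ γ x0 t x

/-- Pair marginal `P_{ij}(A,B;t)`. -/
noncomputable def seirP2 {V : Type*} [Fintype V] [DecidableEq V] (G : SimpleGraph V)
    [DecidableRel G.Adj] (τ δ γ : ℝ) (x0 : V → Fin 4) (i j : V) (A B : Fin 4) (t : ℝ) : ℝ :=
  ∑ x ∈ Finset.univ.filter (fun x : V → Fin 4 => x i = A ∧ x j = B), seirP G τ δ γ x0 t x

/-- Triple marginal `P_{ijk}(A,B,C;t)`. -/
noncomputable def seirP3 {V : Type*} [Fintype V] [DecidableEq V] (G : SimpleGraph V)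
    [DecidableRel G.Adj] (τ δ γ : ℝ) (x0 : V → Fin 4) (i j k : V) (A B C : Fin 4) (t : ℝ) : ℝ :=
  ∑ x ∈ Finset.univ.filter (fun x : V → Fin 4 => x i = A ∧ x j = B ∧ x k = C),
    seirP G τ δ γ x0 t x

set_option linter.unusedSectionVars false
set_option linter.unusedVariables false

namespace SeirAux

variable {V : Type*} [Fintype V] [DecidableEq V]

section Emb

variable (j : V) (s : V → Prop) [DecidablePred s]

/-- Glue a configuration on the two sides of `j` to a full configuration (with `j` susceptible). -/
def emb (p : ({v : V // s v} → Fin 4) × ({v : V // ¬ s v ∧ v ≠ j} → Fin 4)) : V → Fin 4 :=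
  fun v => if h : s v then p.1 ⟨v, h⟩ else if h' : v = j then 0 else p.2 ⟨v, h, h'⟩

variable {j s}

lemma emb_apply1 (p) {v : V} (h : s v) : emb j s p v = p.1 ⟨v, h⟩ := dif_pos h

lemma emb_apply2 (p) {v : V} (h1 : ¬ s v) (h2 : v ≠ j) : emb j s p v = p.2 ⟨v, h1, h2⟩ := by
  rw [emb, dif_neg h1, dif_neg h2]

lemma emb_apply_j (hsj : ¬ s j) (p) : emb j s p j = 0 := by
  rw [emb, dif_neg hsj, dif_pos rfl]

lemma res1_emb (p) : (fun u : {v : V // s v} => emb j s p u.1) = p.1 := by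
  funext u; exact emb_apply1 p u.2

lemma res2_emb (p) : (fun u : {v : V // ¬ s v ∧ v ≠ j} => emb j s p u.1) = p.2 := by
  funext u; exact emb_apply2 p u.2.1 u.2.2

lemma emb_inj : Function.Injective (emb j s) := by
  intro p q h
  have h1 := congrArg (fun x => (fun u : {v : V // s v} => x u.1)) h
  have h2 := congrArg (fun x => (fun u : {v : V // ¬ s v ∧ v ≠ j} => x u.1)) h
  simp only [res1_emb, res2_emb] at h1 h2
  exact Prod.ext h1 h2

lemma emb_res {x : V → Fin 4} (hx : x j = 0) :
    emb j s (fun u => x u.1, fun u => x u.1) = x := by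
  funext v
  by_cases h : s v
  · exact emb_apply1 _ h
  · by_cases h' : v = j
    · rw [h']
      rw [emb, dif_neg (fun hs => h (h' ▸ hs)), dif_pos rfl]
      exact hx.symm
    · exact emb_apply2 _ h h'

lemma sum_split (hsj : ¬ s j) (F : V → ℝ) :
    ∑ m : V, F m
      = F j + (∑ u : {v : V // s v}, F u.1) + ∑ u : {v : V // ¬ s v ∧ v ≠ j}, F u.1 := by
  classical
  rw [← Finset.sum_filter_add_sum_filter_not univ s F]
  have e1 : ∑ u : {v : V // s v}, F u.1 = ∑ m ∈ univ.filter s, F m :=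
    (Finset.sum_subtype _ (by simp) F).symm
  have hjmem : j ∈ univ.filter (fun v => ¬ s v) := by simp [hsj]
  have e2 : ∑ u : {v : V // ¬ s v ∧ v ≠ j}, F u.1
      = ∑ m ∈ (univ.filter (fun v => ¬ s v)).erase j, F m := by
    refine (Finset.sum_subtype _ (fun x => ?_) F).symm
    simp [and_comm]
  rw [e1, e2, ← Finset.add_sum_erase _ F hjmem]
  ring

/-- Restriction of a `Finset.card` of a filter to a subtype containing its support. -/
lemma card_filter_subtype {R : V → Prop} [DecidablePred R] {P : V → Prop} [DecidablePred P]
    (h : ∀ w, R w → P w) :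
    (univ.filter R).card = (univ.filter (fun u : {v : V // P v} => R u.1)).card := by
  refine Finset.card_bij' (fun w hw => ⟨w, h w (by simpa using hw)⟩) (fun u _ => u.1)
    ?_ ?_ ?_ ?_
  · intro w hw; simp only [mem_filter, mem_univ, true_and] at hw ⊢; exact hw
  · intro u hu; simp only [mem_filter, mem_univ, true_and] at hu ⊢; exact hu
  · intro w hw; rfl
  · intro u hu; rfl

end Emb

section Gen

variable (G : SimpleGraph V) [DecidableRel G.Adj] (τ δ γ : ℝ) (j : V)
  (P : V → Prop) [DecidablePred P]

/-- SEIR transition rate on the sub-configuration space of a side `P`. -/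
noncomputable def rateP (a a' : {v : V // P v} → Fin 4) : ℝ :=
  ∑ u : {v : V // P v},
    ((if (∀ w, w ≠ u → a w = a' w) ∧ a u = 0 ∧ a' u = 1 then
        τ * ((Finset.univ.filter (fun w : {v : V // P v} => G.Adj u.1 w.1 ∧ a w = 2)).card : ℝ)
      else 0)
      + (if (∀ w, w ≠ u → a w = a' w) ∧ a u = 1 ∧ a' u = 2 then δ else 0)
      + (if (∀ w, w ≠ u → a w = a' w) ∧ a u = 2 ∧ a' u = 3 then γ else 0))

/-- Total exit rate from a side-configuration, including the rate of infecting `j`. -/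
noncomputable def exitP (a : {v : V // P v} → Fin 4) : ℝ :=
  (∑ u : {v : V // P v},
    ((if a u = 0 then
        τ * ((Finset.univ.filter (fun w : {v : V // P v} => G.Adj u.1 w.1 ∧ a w = 2)).card : ℝ)
      else 0)
      + (if a u = 1 then δ else 0) + (if a u = 2 then γ else 0)))
  + τ * ((Finset.univ.filter (fun u : {v : V // P v} => G.Adj j u.1 ∧ a u = 2)).card : ℝ)

/-- Killed generator on one side. -/
noncomputable def genP : Matrix ({v : V // P v} → Fin 4) ({v : V // P v} → Fin 4) ℝ :=
  fun a a' => if a = a' then -(exitP G τ δ γ j P a) else rateP G τ δ γ P a a'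

variable {G τ δ γ j P}

/-- Infectious-neighbour counts are computed within a side. -/
lemma cnt_subtype (hPadj : ∀ a b, G.Adj a b → b ≠ j → P a → P b)
    (x : V → Fin 4) (hxj : x j = 0) {m : V} (hm : P m) :
    ((Finset.univ.filter (fun w : V => G.Adj m w ∧ x w = 2)).card : ℝ)
      = ((Finset.univ.filter
          (fun w : {v : V // P v} => G.Adj m w.1 ∧ x w.1 = 2)).card : ℝ) := by
  norm_cast
  refine card_filter_subtype fun w hw => ?_
  have hwj : w ≠ j := by
    intro h; rw [h, hxj] at hw; exact absurd hw.2 (by decide)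
  exact hPadj m w hw.1 hwj hm

/-- Summing an indicator of a single-node change over all configurations. -/
lemma sum_update (x : V → Fin 4) (m : V) (c : ℝ) (v e : Fin 4) :
    (∑ z : V → Fin 4, if (∀ n, n ≠ m → x n = z n) ∧ x m = v ∧ z m = e then c else 0)
      = if x m = v then c else 0 := by
  rw [Finset.sum_eq_single (Function.update x m e)]
  · have hiff : ((∀ n, n ≠ m → x n = Function.update x m e n) ∧ x m = v
        ∧ Function.update x m e m = e) ↔ (x m = v) := by
      constructor
      · rintro ⟨-, h, -⟩; exact h
      · intro h
        exact ⟨fun n hn => (Function.update_of_ne hn e x).symm, h, Function.update_self m e x⟩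
    rw [if_congr hiff rfl rfl]
  · intro z _ hz
    rw [if_neg]
    rintro ⟨h1, -, h3⟩
    apply hz
    funext n
    by_cases hn : n = m
    · rw [hn, Function.update_self]; exact h3
    · rw [Function.update_of_ne hn]; exact (h1 n hn).symm
  · intro h; exact absurd (Finset.mem_univ _) h

/-- The total exit rate from a configuration `x`, as a sum of per-node exit rates. -/
lemma total_rate (x : V → Fin 4) :
    ∑ z ∈ Finset.univ.erase x, seirRate G τ δ γ x z
      = ∑ m : V,
        ((if x m = 0 then
            τ * ((Finset.univ.filter (fun w : V => G.Adj m w ∧ x w = 2)).card : ℝ) else 0)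
          + (if x m = 1 then δ else 0) + (if x m = 2 then γ else 0)) := by
  have hxx : seirRate G τ δ γ x x = 0 := by
    refine Finset.sum_eq_zero fun m _ => ?_
    have key : ∀ (u w : Fin 4), u ≠ w → ∀ c : ℝ,
        (if (∀ n, n ≠ m → x n = x n) ∧ x m = u ∧ x m = w then c else 0) = 0 := by
      intro u w hne c
      rw [if_neg]
      rintro ⟨-, h2, h3⟩
      exact hne (h2.symm.trans h3)
    rw [key 0 1 (by decide) _, key 1 2 (by decide) _, key 2 3 (by decide) _]
    ring
  rw [Finset.sum_erase _ hxx]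
  simp only [seirRate]
  rw [Finset.sum_comm]
  refine Finset.sum_congr rfl fun m _ => ?_
  rw [Finset.sum_add_distrib, Finset.sum_add_distrib, sum_update x m _ 0 1,
    sum_update x m δ 1 2, sum_update x m γ 2 3]

end Gen

section Factor

open Kronecker

variable {G : SimpleGraph V} [DecidableRel G.Adj] {τ δ γ : ℝ} {j : V}
  {s : V → Prop} [DecidablePred s]

lemma emb_apply1' (p) (u : {v : V // s v}) : emb j s p u.1 = p.1 u := emb_apply1 p u.2

lemma emb_apply2' (p) (u : {v : V // ¬ s v ∧ v ≠ j}) : emb j s p u.1 = p.2 u :=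
  emb_apply2 p u.2.1 u.2.2

lemma sumP {P : V → Prop} [DecidablePred P]
    (hPadj : ∀ a b, G.Adj a b → b ≠ j → P a → P b)
    (x y : V → Fin 4) (hxj : x j = 0) :
    (∑ u : {v : V // P v},
      ((if (∀ n, n ≠ u.1 → x n = y n) ∧ x u.1 = 0 ∧ y u.1 = 1 then
          τ * ((Finset.univ.filter (fun w : V => G.Adj u.1 w ∧ x w = 2)).card : ℝ) else 0)
        + (if (∀ n, n ≠ u.1 → x n = y n) ∧ x u.1 = 1 ∧ y u.1 = 2 then δ else 0)
        + (if (∀ n, n ≠ u.1 → x n = y n) ∧ x u.1 = 2 ∧ y u.1 = 3 then γ else 0)))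
    = if (∀ w, ¬ P w → x w = y w)
        then rateP G τ δ γ P (fun u => x u.1) (fun u => y u.1) else 0 := by
  have hagree : ∀ u : {v : V // P v},
      (∀ n, n ≠ u.1 → x n = y n)
        ↔ ((∀ w : {v : V // P v}, w ≠ u → x w.1 = y w.1) ∧ (∀ w, ¬ P w → x w = y w)) := by
    intro u
    constructor
    · intro h
      exact ⟨fun w hw => h w.1 (fun hh => hw (Subtype.ext hh)),
        fun w hw => h w (fun he => hw (he ▸ u.2))⟩
    · rintro ⟨h1, h2⟩ n hn
      by_cases hp : P n
      · exact h1 ⟨n, hp⟩ (fun he => hn (congrArg Subtype.val he))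
      · exact h2 n hp
  by_cases hout : ∀ w, ¬ P w → x w = y w
  · rw [if_pos hout]
    simp only [rateP]
    refine Finset.sum_congr rfl fun u _ => ?_
    have hcond : (∀ n, n ≠ u.1 → x n = y n) ↔ (∀ w, w ≠ u → x w.1 = y w.1) :=
      (hagree u).trans (and_iff_left hout)
    rw [cnt_subtype hPadj x hxj u.2, if_congr (and_congr hcond Iff.rfl) rfl rfl,
      if_congr (and_congr hcond Iff.rfl) rfl rfl, if_congr (and_congr hcond Iff.rfl) rfl rfl]
  · rw [if_neg hout]
    refine Finset.sum_eq_zero fun u _ => ?_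
    have hnc : ¬ (∀ n, n ≠ u.1 → x n = y n) := fun h => hout ((hagree u).1 h).2
    rw [if_neg (fun h => hnc h.1), if_neg (fun h => hnc h.1), if_neg (fun h => hnc h.1)]
    ring

lemma cond2_iff (hsj : ¬ s j) (p q) :
    (∀ w, ¬ s w → emb j s p w = emb j s q w) ↔ p.2 = q.2 := by
  constructor
  · intro h
    funext u
    have h2 := h u.1 u.2.1
    rwa [emb_apply2' p u, emb_apply2' q u] at h2
  · intro h w hw
    by_cases hwj : w = j
    · subst hwj; rw [emb_apply_j hsj, emb_apply_j hsj]
    · rw [emb_apply2 p hw hwj, emb_apply2 q hw hwj, h]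

lemma cond1_iff (hsj : ¬ s j) (p q) :
    (∀ w, ¬ (¬ s w ∧ w ≠ j) → emb j s p w = emb j s q w) ↔ p.1 = q.1 := by
  constructor
  · intro h
    funext u
    have h2 := h u.1 (fun hc => hc.1 u.2)
    rwa [emb_apply1' p u, emb_apply1' q u] at h2
  · intro h w hw
    by_cases hs' : s w
    · rw [emb_apply1 p hs', emb_apply1 q hs', h]
    · have hwj : w = j := by
        by_contra hne
        exact hw ⟨hs', hne⟩
      subst hwj; rw [emb_apply_j hsj, emb_apply_j hsj]

lemma hstep_compl (hstep : ∀ a b, G.Adj a b → b ≠ j → s a → s b) :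
    ∀ a b, G.Adj a b → b ≠ j → (¬ s a ∧ a ≠ j) → (¬ s b ∧ b ≠ j) :=
  fun a b hab hbj h => ⟨fun hsb => h.1 (hstep b a hab.symm h.2 hsb), hbj⟩

lemma rate_emb (hsj : ¬ s j) (hstep : ∀ a b, G.Adj a b → b ≠ j → s a → s b) (p q) :
    seirRate G τ δ γ (emb j s p) (emb j s q)
      = (if p.2 = q.2 then rateP G τ δ γ s p.1 q.1 else 0)
      + (if p.1 = q.1 then rateP G τ δ γ (fun v => ¬ s v ∧ v ≠ j) p.2 q.2 else 0) := by
  have hxj : emb j s p j = 0 := emb_apply_j hsj p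
  have hyj : emb j s q j = 0 := emb_apply_j hsj q
  simp only [seirRate]
  rw [sum_split hsj]
  have hj1 : ∀ c : ℝ, (if (∀ n, n ≠ j → emb j s p n = emb j s q n)
      ∧ emb j s p j = 0 ∧ emb j s q j = 1 then c else 0) = 0 :=
    fun c => if_neg (fun h => by rw [hyj] at h; exact absurd h.2.2 (by decide))
  have hj2 : (if (∀ n, n ≠ j → emb j s p n = emb j s q n)
      ∧ emb j s p j = 1 ∧ emb j s q j = 2 then δ else 0) = 0 :=
    if_neg (fun h => by rw [hxj] at h; exact absurd h.2.1 (by decide))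
  have hj3 : (if (∀ n, n ≠ j → emb j s p n = emb j s q n)
      ∧ emb j s p j = 2 ∧ emb j s q j = 3 then γ else 0) = 0 :=
    if_neg (fun h => by rw [hxj] at h; exact absurd h.2.1 (by decide))
  rw [hj1, hj2, hj3, sumP hstep _ _ hxj, sumP (hstep_compl hstep) _ _ hxj,
    res1_emb p, res1_emb q, res2_emb p, res2_emb q,
    if_congr (cond2_iff hsj p q) rfl rfl, if_congr (cond1_iff hsj p q) rfl rfl]
  ring

lemma cnt_j_split (hsj : ¬ s j) (p) :
    ((Finset.univ.filter (fun w : V => G.Adj j w ∧ emb j s p w = 2)).card : ℝ)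
      = ((Finset.univ.filter (fun u : {v : V // s v} => G.Adj j u.1 ∧ p.1 u = 2)).card : ℝ)
      + ((Finset.univ.filter
          (fun u : {v : V // ¬ s v ∧ v ≠ j} => G.Adj j u.1 ∧ p.2 u = 2)).card : ℝ) := by
  have e0 : ∀ w : V, (G.Adj j w ∧ emb j s p w = 2) → w ≠ j := by
    intro w hw h
    rw [h, emb_apply_j hsj] at hw
    exact absurd hw.2 (by decide)
  norm_cast
  rw [← Finset.card_filter_add_card_filter_not (s := Finset.univ.filter
      (fun w : V => G.Adj j w ∧ emb j s p w = 2)) (p := fun w => s w), Finset.filter_filter,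
    Finset.filter_filter]
  congr 1
  · rw [card_filter_subtype (P := s) (fun w hw => hw.2)]
    congr 1
    refine Finset.filter_congr fun u _ => ?_
    rw [emb_apply1' p u]
    exact and_iff_left u.2
  · rw [card_filter_subtype (P := fun v => ¬ s v ∧ v ≠ j) (fun w hw => ⟨hw.2, e0 w hw.1⟩)]
    congr 1
    refine Finset.filter_congr fun u _ => ?_
    rw [emb_apply2' p u]
    exact and_iff_left u.2.1

lemma exit_emb (hsj : ¬ s j) (hstep : ∀ a b, G.Adj a b → b ≠ j → s a → s b) (p) :
    ∑ z ∈ Finset.univ.erase (emb j s p), seirRate G τ δ γ (emb j s p) z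
      = exitP G τ δ γ j s p.1 + exitP G τ δ γ j (fun v => ¬ s v ∧ v ≠ j) p.2 := by
  have hxj : emb j s p j = 0 := emb_apply_j hsj p
  rw [total_rate, sum_split hsj]
  have hj : (if emb j s p j = 0 then
        τ * ((Finset.univ.filter (fun w : V => G.Adj j w ∧ emb j s p w = 2)).card : ℝ) else 0)
      + (if emb j s p j = 1 then δ else 0) + (if emb j s p j = 2 then γ else 0)
      = τ * ((Finset.univ.filter (fun u : {v : V // s v} => G.Adj j u.1 ∧ p.1 u = 2)).card : ℝ)
      + τ * ((Finset.univ.filter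
          (fun u : {v : V // ¬ s v ∧ v ≠ j} => G.Adj j u.1 ∧ p.2 u = 2)).card : ℝ) := by
    rw [if_pos hxj, if_neg (by rw [hxj]; decide), if_neg (by rw [hxj]; decide),
      cnt_j_split hsj p]
    ring
  have h1 : ∑ u : {v : V // s v},
      ((if emb j s p u.1 = 0 then
          τ * ((Finset.univ.filter (fun w : V => G.Adj u.1 w ∧ emb j s p w = 2)).card : ℝ)
        else 0)
        + (if emb j s p u.1 = 1 then δ else 0) + (if emb j s p u.1 = 2 then γ else 0))
      = ∑ u : {v : V // s v},
      ((if p.1 u = 0 then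
          τ * ((Finset.univ.filter
            (fun w : {v : V // s v} => G.Adj u.1 w.1 ∧ p.1 w = 2)).card : ℝ)
        else 0)
        + (if p.1 u = 1 then δ else 0) + (if p.1 u = 2 then γ else 0)) := by
    refine Finset.sum_congr rfl fun u _ => ?_
    rw [cnt_subtype hstep _ hxj u.2]
    simp only [emb_apply1']
  have h2 : ∑ u : {v : V // ¬ s v ∧ v ≠ j},
      ((if emb j s p u.1 = 0 then
          τ * ((Finset.univ.filter (fun w : V => G.Adj u.1 w ∧ emb j s p w = 2)).card : ℝ)
        else 0)
        + (if emb j s p u.1 = 1 then δ else 0) + (if emb j s p u.1 = 2 then γ else 0))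
      = ∑ u : {v : V // ¬ s v ∧ v ≠ j},
      ((if p.2 u = 0 then
          τ * ((Finset.univ.filter
            (fun w : {v : V // ¬ s v ∧ v ≠ j} => G.Adj u.1 w.1 ∧ p.2 w = 2)).card : ℝ)
        else 0)
        + (if p.2 u = 1 then δ else 0) + (if p.2 u = 2 then γ else 0)) := by
    refine Finset.sum_congr rfl fun u _ => ?_
    rw [cnt_subtype (hstep_compl hstep) _ hxj u.2]
    simp only [emb_apply2']
  rw [hj, h1, h2]
  simp only [exitP]
  ring

lemma gen_emb (hsj : ¬ s j) (hstep : ∀ a b, G.Adj a b → b ≠ j → s a → s b) (p q) :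
    seirGen G τ δ γ (emb j s p) (emb j s q)
      = (genP G τ δ γ j s ⊗ₖ (1 : Matrix ({v : V // ¬ s v ∧ v ≠ j} → Fin 4)
            ({v : V // ¬ s v ∧ v ≠ j} → Fin 4) ℝ)
        + (1 : Matrix ({v : V // s v} → Fin 4) ({v : V // s v} → Fin 4) ℝ)
            ⊗ₖ genP G τ δ γ j (fun v => ¬ s v ∧ v ≠ j)) p q := by
  simp only [Matrix.add_apply, Matrix.kroneckerMap_apply]
  by_cases hpq : p = q
  · subst hpq
    rw [seirGen]
    rw [if_pos rfl, exit_emb hsj hstep p]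
    simp only [genP, eq_self_iff_true, if_true, Matrix.one_apply_eq]
    ring
  · have hne : emb j s p ≠ emb j s q := fun h => hpq (emb_inj h)
    rw [seirGen]
    rw [if_neg hne, rate_emb hsj hstep p q]
    by_cases h1 : p.1 = q.1 <;> by_cases h2 : p.2 = q.2
    · exact absurd (Prod.ext h1 h2) hpq
    · rw [if_neg h2, if_pos h1, Matrix.one_apply_ne h2, h1, Matrix.one_apply_eq]
      simp only [genP, if_neg (fun h : p.2 = q.2 => h2 h)]
      ring
    · rw [if_pos h2, if_neg h1, Matrix.one_apply_ne h1, h2, Matrix.one_apply_eq]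
      simp only [genP, if_neg (fun h : p.1 = q.1 => h1 h)]
      ring
    · rw [if_neg h2, if_neg h1, Matrix.one_apply_ne h1, Matrix.one_apply_ne h2]
      ring

lemma sum_emb_filter (hsj : ¬ s j) (Pr : (V → Fin 4) → Prop) [DecidablePred Pr]
    (f : (V → Fin 4) → ℝ) :
    ∑ x ∈ Finset.univ.filter (fun x => x j = 0 ∧ Pr x), f x
      = ∑ w ∈ Finset.univ.filter
          (fun w : ({v : V // s v} → Fin 4) × ({v : V // ¬ s v ∧ v ≠ j} → Fin 4) =>
            Pr (emb j s w)), f (emb j s w) := by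
  refine Finset.sum_nbij' (i := fun x => ((fun u => x u.1), (fun u => x u.1)))
    (j := emb j s) ?_ ?_ ?_ ?_ ?_
  · intro x hx
    rw [Finset.mem_filter] at hx ⊢
    refine ⟨Finset.mem_univ _, ?_⟩
    rw [emb_res hx.2.1]
    exact hx.2.2
  · intro w hw
    rw [Finset.mem_filter] at hw ⊢
    exact ⟨Finset.mem_univ _, emb_apply_j hsj w, hw.2⟩
  · intro x hx
    rw [Finset.mem_filter] at hx
    exact emb_res hx.2.1
  · intro w hw
    exact Prod.ext (res1_emb w) (res2_emb w)
  · intro x hx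
    rw [Finset.mem_filter] at hx
    rw [emb_res hx.2.1]

lemma sum_emb_univ (hsj : ¬ s j) (f : (V → Fin 4) → ℝ) (hf : ∀ z, ¬ z j = 0 → f z = 0) :
    ∑ z : V → Fin 4, f z
      = ∑ w : ({v : V // s v} → Fin 4) × ({v : V // ¬ s v ∧ v ≠ j} → Fin 4),
          f (emb j s w) := by
  rw [← Finset.sum_filter_add_sum_filter_not Finset.univ (fun z => z j = 0) f,
    Finset.sum_eq_zero (fun z hz => hf z (Finset.mem_filter.1 hz).2), add_zero]
  have h0 := sum_emb_filter (s := s) hsj (fun _ => True) f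
  simp only [and_true, Finset.filter_true] at h0
  exact h0

end Factor

section Trib

variable (j : V)

/-- The subalgebra of matrices with no transition from configurations where `j` has left
the susceptible state to configurations where `j` is susceptible. -/
def trib : Subalgebra ℝ (Matrix (V → Fin 4) (V → Fin 4) ℝ) where
  carrier := {M | ∀ x y : V → Fin 4, ¬ x j = 0 → y j = 0 → M x y = 0}
  add_mem' := by
    intro M N hM hN x y hx hy
    show M x y + N x y = 0
    rw [hM x y hx hy, hN x y hx hy, add_zero]
  mul_mem' := by
    intro M N hM hN x y hx hy
    show (M * N) x y = 0
    rw [Matrix.mul_apply]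
    refine Finset.sum_eq_zero fun z _ => ?_
    by_cases hz : z j = 0
    · rw [hM x z hx hz, zero_mul]
    · rw [hN z y hz hy, mul_zero]
  algebraMap_mem' := by
    intro r x y hx hy
    have hxy : x ≠ y := fun h => hx (h ▸ hy)
    show Matrix.scalar _ r x y = 0
    rw [Matrix.scalar_apply, Matrix.diagonal_apply_ne _ hxy]
  one_mem' := by
    intro x y hx hy
    have hxy : x ≠ y := fun h => hx (h ▸ hy)
    exact Matrix.one_apply_ne hxy
  zero_mem' := fun x y _ _ => rfl

variable {j}

lemma gen_mem_trib {G : SimpleGraph V} [DecidableRel G.Adj] {τ δ γ : ℝ} :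
    seirGen G τ δ γ ∈ trib (V := V) j := by
  intro x y hx hy
  have hxy : x ≠ y := fun h => hx (h ▸ hy)
  rw [seirGen, if_neg hxy]
  refine Finset.sum_eq_zero fun m _ => ?_
  have gen0 : ∀ (u w : Fin 4), ¬ w = 0 → ∀ c : ℝ,
      (if (∀ n, n ≠ m → x n = y n) ∧ x m = u ∧ y m = w then c else 0) = 0 := by
    intro u w hw c
    rw [if_neg]
    rintro ⟨hag, hxm, hym⟩
    by_cases hmj : m = j
    · subst hmj
      exact hw (hym.symm.trans hy)
    · exact hx ((hag j (fun h => hmj h.symm)).trans hy)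
  rw [gen0 0 1 (by decide) _, gen0 1 2 (by decide) _, gen0 2 3 (by decide) _]
  ring

end Trib

section Kron

open Kronecker

variable (m n : Type*) [Fintype m] [DecidableEq m] [Fintype n] [DecidableEq n]

/-- `B ↦ B ⊗ₖ 1` as an algebra homomorphism. -/
noncomputable def kronLeftAlg : Matrix m m ℝ →ₐ[ℝ] Matrix (m × n) (m × n) ℝ where
  toFun B := B ⊗ₖ (1 : Matrix n n ℝ)
  map_one' := Matrix.one_kronecker_one
  map_mul' B C := by rw [← Matrix.mul_kronecker_mul, one_mul]
  map_zero' := Matrix.zero_kronecker _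
  map_add' B C := Matrix.add_kronecker B C _
  commutes' r := by
    simp only [Algebra.algebraMap_eq_smul_one]
    show ((r • (1 : Matrix m m ℝ)) ⊗ₖ (1 : Matrix n n ℝ)) = r • (1 : Matrix (m × n) (m × n) ℝ)
    rw [Matrix.smul_kronecker, Matrix.one_kronecker_one]

/-- `B ↦ 1 ⊗ₖ B` as an algebra homomorphism. -/
noncomputable def kronRightAlg : Matrix n n ℝ →ₐ[ℝ] Matrix (m × n) (m × n) ℝ where
  toFun B := (1 : Matrix m m ℝ) ⊗ₖ B
  map_one' := Matrix.one_kronecker_one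
  map_mul' B C := by rw [← Matrix.mul_kronecker_mul, one_mul]
  map_zero' := Matrix.kronecker_zero _
  map_add' B C := Matrix.kronecker_add _ B C
  commutes' r := by
    simp only [Algebra.algebraMap_eq_smul_one]
    show ((1 : Matrix m m ℝ) ⊗ₖ (r • (1 : Matrix n n ℝ))) = r • (1 : Matrix (m × n) (m × n) ℝ)
    rw [Matrix.kronecker_smul, Matrix.one_kronecker_one]

lemma continuous_kronLeftAlg : Continuous (kronLeftAlg m n) := by
  refine continuous_pi fun p => continuous_pi fun q => ?_
  show Continuous fun B : Matrix m m ℝ => B p.1 q.1 * (1 : Matrix n n ℝ) p.2 q.2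
  exact (continuous_id.matrix_elem p.1 q.1).mul continuous_const

lemma continuous_kronRightAlg : Continuous (kronRightAlg m n) := by
  refine continuous_pi fun p => continuous_pi fun q => ?_
  show Continuous fun B : Matrix n n ℝ => (1 : Matrix m m ℝ) p.1 q.1 * B p.2 q.2
  exact continuous_const.mul ((continuous_apply q.2).comp (continuous_apply p.2))

end Kron

section ResAlg

variable {j : V} {s : V → Prop} [DecidablePred s]

/-- Restriction of a block-triangular matrix to the susceptible-at-`j` block, reindexed by
the two sides. -/
noncomputable def resAlg (hsj : ¬ s j) :
    trib (V := V) j →ₐ[ℝ]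
      Matrix (({v : V // s v} → Fin 4) × ({v : V // ¬ s v ∧ v ≠ j} → Fin 4))
        (({v : V // s v} → Fin 4) × ({v : V // ¬ s v ∧ v ≠ j} → Fin 4)) ℝ where
  toFun M := Matrix.of fun p q =>
    (M : Matrix (V → Fin 4) (V → Fin 4) ℝ) (emb j s p) (emb j s q)
  map_one' := by
    ext p q
    show (1 : Matrix (V → Fin 4) (V → Fin 4) ℝ) (emb j s p) (emb j s q)
      = (1 : Matrix _ _ ℝ) p q
    rw [Matrix.one_apply, Matrix.one_apply,
      if_congr ⟨fun h => emb_inj h, fun h => by rw [h]⟩ rfl rfl]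
  map_mul' M N := by
    ext p q
    show ((M : Matrix (V → Fin 4) (V → Fin 4) ℝ) * (N : Matrix (V → Fin 4) (V → Fin 4) ℝ))
        (emb j s p) (emb j s q) = _
    rw [Matrix.mul_apply]
    rw [sum_emb_univ hsj _ (fun z hz => by
      rw [N.2 z (emb j s q) hz (emb_apply_j hsj q), mul_zero])]
    rw [Matrix.mul_apply]
    rfl
  map_zero' := by
    ext p q
    show ((0 : trib (V := V) j) : Matrix (V → Fin 4) (V → Fin 4) ℝ) (emb j s p) (emb j s q)
      = 0
    rw [ZeroMemClass.coe_zero]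
    rfl
  map_add' M N := by
    ext p q
    show ((M : Matrix (V → Fin 4) (V → Fin 4) ℝ) + (N : Matrix (V → Fin 4) (V → Fin 4) ℝ))
        (emb j s p) (emb j s q) = _
    rw [Matrix.add_apply]
    rfl
  commutes' r := by
    ext p q
    show (algebraMap ℝ (Matrix (V → Fin 4) (V → Fin 4) ℝ) r) (emb j s p) (emb j s q)
      = (algebraMap ℝ (Matrix _ _ ℝ) r) p q
    rw [Matrix.algebraMap_matrix_apply, Matrix.algebraMap_matrix_apply,
      if_congr ⟨fun h => emb_inj h, fun h => by rw [h]⟩ rfl rfl]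

lemma continuous_resAlg (hsj : ¬ s j) : Continuous (resAlg (V := V) (j := j) (s := s) hsj) := by
  refine continuous_pi fun p => continuous_pi fun q => ?_
  show Continuous fun M : trib (V := V) j =>
    (M : Matrix (V → Fin 4) (V → Fin 4) ℝ) (emb j s p) (emb j s q)
  exact (continuous_apply (emb j s q)).comp
    ((continuous_apply (emb j s p)).comp continuous_subtype_val)

end ResAlg

section Exp

open Kronecker

variable {G : SimpleGraph V} [DecidableRel G.Adj] {τ δ γ : ℝ} {j : V}
  {s : V → Prop} [DecidablePred s]

theorem exp_entries (hsj : ¬ s j) (hstep : ∀ a b, G.Adj a b → b ≠ j → s a → s b) (t : ℝ) :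
    (∀ x y : V → Fin 4, ¬ x j = 0 → y j = 0 →
      NormedSpace.exp (t • seirGen G τ δ γ) x y = 0)
    ∧ ∀ p q, NormedSpace.exp (t • seirGen G τ δ γ) (emb j s p) (emb j s q)
        = NormedSpace.exp (t • genP G τ δ γ j s) p.1 q.1
          * NormedSpace.exp (t • genP G τ δ γ j (fun v => ¬ s v ∧ v ≠ j)) p.2 q.2 := by
  classical
  have hcv : Continuous (trib (V := V) j).val := continuous_subtype_val
  have hcr := continuous_resAlg (V := V) (j := j) (s := s) hsj
  have hck1 := continuous_kronLeftAlg ({v : V // s v} → Fin 4)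
    ({v : V // ¬ s v ∧ v ≠ j} → Fin 4)
  have hck2 := continuous_kronRightAlg ({v : V // s v} → Fin 4)
    ({v : V // ¬ s v ∧ v ≠ j} → Fin 4)
  letI : SeminormedRing (Matrix (V → Fin 4) (V → Fin 4) ℝ) := Matrix.linftyOpSemiNormedRing
  letI : NormedRing (Matrix (V → Fin 4) (V → Fin 4) ℝ) := Matrix.linftyOpNormedRing
  letI : NormedAlgebra ℝ (Matrix (V → Fin 4) (V → Fin 4) ℝ) := Matrix.linftyOpNormedAlgebra
  letI : SeminormedRing (Matrix ({v : V // s v} → Fin 4) ({v : V // s v} → Fin 4) ℝ) :=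
    Matrix.linftyOpSemiNormedRing
  letI : NormedRing (Matrix ({v : V // s v} → Fin 4) ({v : V // s v} → Fin 4) ℝ) :=
    Matrix.linftyOpNormedRing
  letI : NormedAlgebra ℝ (Matrix ({v : V // s v} → Fin 4) ({v : V // s v} → Fin 4) ℝ) :=
    Matrix.linftyOpNormedAlgebra
  letI : SeminormedRing (Matrix ({v : V // ¬ s v ∧ v ≠ j} → Fin 4)
      ({v : V // ¬ s v ∧ v ≠ j} → Fin 4) ℝ) := Matrix.linftyOpSemiNormedRing
  letI : NormedRing (Matrix ({v : V // ¬ s v ∧ v ≠ j} → Fin 4)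
      ({v : V // ¬ s v ∧ v ≠ j} → Fin 4) ℝ) := Matrix.linftyOpNormedRing
  letI : NormedAlgebra ℝ (Matrix ({v : V // ¬ s v ∧ v ≠ j} → Fin 4)
      ({v : V // ¬ s v ∧ v ≠ j} → Fin 4) ℝ) := Matrix.linftyOpNormedAlgebra
  letI : SeminormedRing (Matrix
      (({v : V // s v} → Fin 4) × ({v : V // ¬ s v ∧ v ≠ j} → Fin 4))
      (({v : V // s v} → Fin 4) × ({v : V // ¬ s v ∧ v ≠ j} → Fin 4)) ℝ) :=
    Matrix.linftyOpSemiNormedRing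
  letI : NormedRing (Matrix
      (({v : V // s v} → Fin 4) × ({v : V // ¬ s v ∧ v ≠ j} → Fin 4))
      (({v : V // s v} → Fin 4) × ({v : V // ¬ s v ∧ v ≠ j} → Fin 4)) ℝ) :=
    Matrix.linftyOpNormedRing
  letI : NormedAlgebra ℝ (Matrix
      (({v : V // s v} → Fin 4) × ({v : V // ¬ s v ∧ v ≠ j} → Fin 4))
      (({v : V // s v} → Fin 4) × ({v : V // ¬ s v ∧ v ≠ j} → Fin 4)) ℝ) :=
    Matrix.linftyOpNormedAlgebra
  letI : NormedAlgebra ℚ (Matrix (V → Fin 4) (V → Fin 4) ℝ) :=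
    .restrictScalars ℚ ℝ _
  letI : NormedAlgebra ℚ (Matrix ({v : V // s v} → Fin 4) ({v : V // s v} → Fin 4) ℝ) :=
    .restrictScalars ℚ ℝ _
  letI : NormedAlgebra ℚ (Matrix ({v : V // ¬ s v ∧ v ≠ j} → Fin 4)
      ({v : V // ¬ s v ∧ v ≠ j} → Fin 4) ℝ) :=
    .restrictScalars ℚ ℝ _
  letI : NormedAlgebra ℚ (Matrix 
      (({v : V // s v} → Fin 4) × ({v : V // ¬ s v ∧ v ≠ j} → Fin 4))
      (({v : V // s v} → Fin 4) × ({v : V // ¬ s v ∧ v ≠ j} → Fin 4)) ℝ) :=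
    .restrictScalars ℚ ℝ _
  haveI : IsUniformAddGroup (trib (V := V) j) := SeminormedAddCommGroup.to_isUniformAddGroup
  haveI : IsTopologicalRing (trib (V := V) j) := NonUnitalSeminormedRing.toIsTopologicalRing
  letI : NormedAlgebra ℚ (trib (V := V) j) := .restrictScalars ℚ ℝ _
  haveI : FiniteDimensional ℝ (trib (V := V) j) :=
    inferInstanceAs (FiniteDimensional ℝ (Subalgebra.toSubmodule (trib (V := V) j)))
  haveI : CompleteSpace (trib (V := V) j) := FiniteDimensional.complete ℝ _
  set Q : trib (V := V) j := ⟨t • seirGen G τ δ γ, Subalgebra.smul_mem _ gen_mem_trib t⟩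
    with hQdef
  have hval : NormedSpace.exp (t • seirGen G τ δ γ)
      = ((NormedSpace.exp Q : trib (V := V) j) : Matrix (V → Fin 4) (V → Fin 4) ℝ) :=
    (NormedSpace.map_exp (trib (V := V) j).val hcv Q).symm
  constructor
  · intro x y hx hy
    rw [hval]
    exact (NormedSpace.exp Q).2 x y hx hy
  · intro p q
    rw [hval]
    have hres : resAlg (s := s) hsj (NormedSpace.exp Q)
        = NormedSpace.exp (resAlg (s := s) hsj Q) :=
      NormedSpace.map_exp (resAlg (s := s) hsj) hcr Q
    have happ : ((NormedSpace.exp Q : trib (V := V) j) :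
          Matrix (V → Fin 4) (V → Fin 4) ℝ) (emb j s p) (emb j s q)
        = resAlg (s := s) hsj (NormedSpace.exp Q) p q := rfl
    rw [happ, hres]
    have hQ : resAlg (s := s) hsj Q
        = kronLeftAlg _ _ (t • genP G τ δ γ j s)
          + kronRightAlg _ _ (t • genP G τ δ γ j (fun v => ¬ s v ∧ v ≠ j)) := by
      ext p' q'
      show (t • seirGen G τ δ γ) (emb j s p') (emb j s q')
        = (t • genP G τ δ γ j s) p'.1 q'.1
            * (1 : Matrix ({v : V // ¬ s v ∧ v ≠ j} → Fin 4)
                ({v : V // ¬ s v ∧ v ≠ j} → Fin 4) ℝ) p'.2 q'.2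
          + (1 : Matrix ({v : V // s v} → Fin 4) ({v : V // s v} → Fin 4) ℝ) p'.1 q'.1
            * (t • genP G τ δ γ j (fun v => ¬ s v ∧ v ≠ j)) p'.2 q'.2
      rw [Matrix.smul_apply, gen_emb hsj hstep p' q']
      simp only [Matrix.add_apply, Matrix.kroneckerMap_apply, Matrix.smul_apply, smul_eq_mul]
      ring
    rw [hQ]
    have hcomm : Commute (kronLeftAlg _ _ (t • genP G τ δ γ j s))
        (kronRightAlg _ _ (t • genP G τ δ γ j (fun v => ¬ s v ∧ v ≠ j))) := by
      show ((t • genP G τ δ γ j s) ⊗ₖ (1 : Matrix ({v : V // ¬ s v ∧ v ≠ j} → Fin 4)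
            ({v : V // ¬ s v ∧ v ≠ j} → Fin 4) ℝ))
          * ((1 : Matrix ({v : V // s v} → Fin 4) ({v : V // s v} → Fin 4) ℝ)
            ⊗ₖ (t • genP G τ δ γ j (fun v => ¬ s v ∧ v ≠ j)))
        = ((1 : Matrix ({v : V // s v} → Fin 4) ({v : V // s v} → Fin 4) ℝ)
            ⊗ₖ (t • genP G τ δ γ j (fun v => ¬ s v ∧ v ≠ j)))
          * ((t • genP G τ δ γ j s) ⊗ₖ (1 : Matrix ({v : V // ¬ s v ∧ v ≠ j} → Fin 4)
            ({v : V // ¬ s v ∧ v ≠ j} → Fin 4) ℝ))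
      rw [← Matrix.mul_kronecker_mul, ← Matrix.mul_kronecker_mul]
      simp only [one_mul, mul_one]
    rw [Matrix.exp_add_of_commute _ _ hcomm]
    have e1 : NormedSpace.exp (kronLeftAlg ({v : V // s v} → Fin 4)
          ({v : V // ¬ s v ∧ v ≠ j} → Fin 4) (t • genP G τ δ γ j s))
        = kronLeftAlg ({v : V // s v} → Fin 4) ({v : V // ¬ s v ∧ v ≠ j} → Fin 4)
          (NormedSpace.exp (t • genP G τ δ γ j s)) :=
      (NormedSpace.map_exp (kronLeftAlg _ _) hck1 (t • genP G τ δ γ j s)).symm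
    have e2 : NormedSpace.exp (kronRightAlg ({v : V // s v} → Fin 4)
          ({v : V // ¬ s v ∧ v ≠ j} → Fin 4) (t • genP G τ δ γ j (fun v => ¬ s v ∧ v ≠ j)))
        = kronRightAlg ({v : V // s v} → Fin 4) ({v : V // ¬ s v ∧ v ≠ j} → Fin 4)
          (NormedSpace.exp (t • genP G τ δ γ j (fun v => ¬ s v ∧ v ≠ j))) :=
      (NormedSpace.map_exp (kronRightAlg _ _) hck2
        (t • genP G τ δ γ j (fun v => ¬ s v ∧ v ≠ j))).symm
    rw [e1, e2]
    have hmul : (kronLeftAlg ({v : V // s v} → Fin 4) ({v : V // ¬ s v ∧ v ≠ j} → Fin 4)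
          (NormedSpace.exp (t • genP G τ δ γ j s)))
        * (kronRightAlg ({v : V // s v} → Fin 4) ({v : V // ¬ s v ∧ v ≠ j} → Fin 4)
          (NormedSpace.exp (t • genP G τ δ γ j (fun v => ¬ s v ∧ v ≠ j))))
        = (NormedSpace.exp (t • genP G τ δ γ j s))
            ⊗ₖ (NormedSpace.exp (t • genP G τ δ γ j (fun v => ¬ s v ∧ v ≠ j))) := by
      show ((NormedSpace.exp (t • genP G τ δ γ j s))
            ⊗ₖ (1 : Matrix ({v : V // ¬ s v ∧ v ≠ j} → Fin 4)
              ({v : V // ¬ s v ∧ v ≠ j} → Fin 4) ℝ))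
          * ((1 : Matrix ({v : V // s v} → Fin 4) ({v : V // s v} → Fin 4) ℝ)
            ⊗ₖ (NormedSpace.exp (t • genP G τ δ γ j (fun v => ¬ s v ∧ v ≠ j)))) = _
      rw [← Matrix.mul_kronecker_mul]
      simp only [one_mul, mul_one]
    rw [hmul]
    rfl

end Exp

section Graph

variable (G : SimpleGraph V) (j : V)

/-- The graph `G` with all edges at `j` removed. -/
def offG : SimpleGraph V where
  Adj a b := G.Adj a b ∧ a ≠ j ∧ b ≠ j
  symm := ⟨fun a b h => ⟨h.1.symm, h.2.2, h.2.1⟩⟩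
  loopless := ⟨fun a h => G.loopless.irrefl a h.1⟩

variable {G j}

lemma offG_walk_ne : ∀ {a b : V}, (offG G j).Walk a b → a ≠ j → b ≠ j := by
  intro a b w
  induction w with
  | nil => exact fun h => h
  | cons h p ih => exact fun _ => ih h.2.2

lemma offG_walk_to_G : ∀ {a b : V}, (offG G j).Walk a b → a ≠ j →
    ∃ w' : G.Walk a b, j ∉ w'.support := by
  intro a b w
  induction w with
  | nil =>
    intro ha
    refine ⟨SimpleGraph.Walk.nil, ?_⟩
    rw [SimpleGraph.Walk.support_nil, List.mem_singleton]
    exact fun h => ha h.symm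
  | cons h p ih =>
    intro ha
    obtain ⟨w', hw'⟩ := ih h.2.2
    refine ⟨SimpleGraph.Walk.cons h.1 w', ?_⟩
    rw [SimpleGraph.Walk.support_cons, List.mem_cons]
    rintro (hc | hc)
    · exact ha hc.symm
    · exact hw' hc

lemma not_reach_of_acyclic {i k : V} (hG : G.IsAcyclic)
    (hij : i ≠ j) (hjk : j ≠ k) (hik : i ≠ k)
    (hadj₁ : G.Adj i j) (hadj₂ : G.Adj j k) :
    ¬ (offG G j).Reachable i k := by
  rintro ⟨w⟩
  obtain ⟨w', hw'⟩ := offG_walk_to_G w hij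
  have hp2 : (SimpleGraph.Walk.cons hadj₁ (SimpleGraph.Walk.cons hadj₂
      SimpleGraph.Walk.nil)).IsPath := by
    simp [SimpleGraph.Walk.isPath_def, hij, hik, hjk]
  have heq := hG.path_unique w'.toPath ⟨_, hp2⟩
  have hj1 : j ∉ (w'.toPath : G.Walk i k).support :=
    fun hc => hw' (SimpleGraph.Walk.support_toPath_subset w' hc)
  rw [heq] at hj1
  apply hj1
  simp

end Graph

end SeirAux

/-- On an acyclic graph, for Markovian SEIR dynamics with pure initial condition, the
pair-based (unclustered) moment closure is exact on the states `ISS` and `ISI`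
(`S = 0`, `I = 2`). -/
theorem seir_pair_closure_exact_on_trees
    {V : Type*} [Fintype V] [DecidableEq V] (G : SimpleGraph V) [DecidableRel G.Adj]
    (hG : G.IsAcyclic) (τ δ γ : ℝ) (hτ : 0 < τ) (hδ : 0 < δ) (hγ : 0 ≤ γ)
    (x0 : V → Fin 4) (i j k : V)
    (hij : i ≠ j) (hjk : j ≠ k) (hik : i ≠ k)
    (hadj₁ : G.Adj i j) (hadj₂ : G.Adj j k)
    (t : ℝ) (ht : 0 ≤ t) :
    seirP3 G τ δ γ x0 i j k 2 0 0 t * seirP1 G τ δ γ x0 j 0 t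
      = seirP2 G τ δ γ x0 i j 2 0 t * seirP2 G τ δ γ x0 j k 0 0 t ∧
    seirP3 G τ δ γ x0 i j k 2 0 2 t * seirP1 G τ δ γ x0 j 0 t
      = seirP2 G τ δ γ x0 i j 2 0 t * seirP2 G τ δ γ x0 j k 0 2 t := by
  classical
  set s : V → Prop := fun v => (SeirAux.offG G j).Reachable i v with hs
  haveI : DecidablePred s := Classical.decPred _
  have hsj : ¬ s j := by
    rintro ⟨w⟩
    exact SeirAux.offG_walk_ne w hij rfl
  have hsi : s i := SimpleGraph.Reachable.refl i
  have hsk : ¬ s k := SeirAux.not_reach_of_acyclic hG hij hjk hik hadj₁ hadj₂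
  have hk2 : ¬ s k ∧ k ≠ j := ⟨hsk, fun h => hjk h.symm⟩
  have hstep : ∀ a b, G.Adj a b → b ≠ j → s a → s b := by
    intro a b hab hbj hsa
    have haj : a ≠ j := fun h => hsj (h ▸ hsa)
    exact hsa.trans (SimpleGraph.Adj.reachable ⟨hab, haj, hbj⟩)
  obtain ⟨hvanish, hfact⟩ :=
    SeirAux.exp_entries (G := G) (τ := τ) (δ := δ) (γ := γ) (j := j) (s := s) hsj hstep t
  by_cases hx0 : x0 j = 0
  · -- main case : `j` initially susceptible
    set p0 : ({v : V // s v} → Fin 4) × ({v : V // ¬ s v ∧ v ≠ j} → Fin 4) :=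
      ((fun u => x0 u.1), (fun u => x0 u.1)) with hp0
    have hx0e : SeirAux.emb j s p0 = x0 := SeirAux.emb_res hx0
    set f : ({v : V // s v} → Fin 4) → ℝ :=
      fun a => NormedSpace.exp (t • SeirAux.genP G τ δ γ j s) p0.1 a with hf
    set g : ({v : V // ¬ s v ∧ v ≠ j} → Fin 4) → ℝ :=
      fun b => NormedSpace.exp
        (t • SeirAux.genP G τ δ γ j (fun v => ¬ s v ∧ v ≠ j)) p0.2 b with hg
    have hfac : ∀ x : V → Fin 4, x j = 0 →
        seirP G τ δ γ x0 t x = f (fun u => x u.1) * g (fun u => x u.1) := by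
      intro x hx
      have h := hfact p0 ((fun u => x u.1), (fun u => x u.1))
      rw [hx0e, SeirAux.emb_res hx] at h
      exact h
    have master : ∀ (π1 : ({v : V // s v} → Fin 4) → Prop) [DecidablePred π1]
        (π2 : ({v : V // ¬ s v ∧ v ≠ j} → Fin 4) → Prop) [DecidablePred π2],
        ∑ x ∈ Finset.univ.filter
          (fun x : V → Fin 4 => x j = 0 ∧ π1 (fun u => x u.1) ∧ π2 (fun u => x u.1)),
            seirP G τ δ γ x0 t x
        = (∑ a ∈ Finset.univ.filter π1, f a) * (∑ b ∈ Finset.univ.filter π2, g b) := by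
      intro π1 _ π2 _
      rw [Finset.sum_congr rfl (fun x hx => hfac x (Finset.mem_filter.mp hx).2.1)]
      rw [SeirAux.sum_emb_filter hsj (fun x => π1 (fun u => x u.1) ∧ π2 (fun u => x u.1))
        (fun x => f (fun u => x u.1) * g (fun u => x u.1))]
      simp only [SeirAux.res1_emb, SeirAux.res2_emb]
      rw [← Finset.univ_product_univ, Finset.filter_product, Finset.sum_product]
      exact (Finset.sum_mul_sum _ _ _ _).symm
    have eP3 : ∀ C : Fin 4, seirP3 G τ δ γ x0 i j k 2 0 C t
        = (∑ a ∈ Finset.univ.filter (fun a : {v : V // s v} → Fin 4 => a ⟨i, hsi⟩ = 2), f a)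
          * (∑ b ∈ Finset.univ.filter
              (fun b : {v : V // ¬ s v ∧ v ≠ j} → Fin 4 => b ⟨k, hk2⟩ = C), g b) := by
      intro C
      rw [seirP3, show Finset.univ.filter (fun x : V → Fin 4 => x i = 2 ∧ x j = 0 ∧ x k = C)
          = Finset.univ.filter (fun x : V → Fin 4 => x j = 0
            ∧ (fun a : {v : V // s v} → Fin 4 => a ⟨i, hsi⟩ = 2) (fun u => x u.1)
            ∧ (fun b : {v : V // ¬ s v ∧ v ≠ j} → Fin 4 => b ⟨k, hk2⟩ = C) (fun u => x u.1))
        from Finset.filter_congr (fun x _ =>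
          ⟨fun h => ⟨h.2.1, h.1, h.2.2⟩, fun h => ⟨h.2.1, h.1, h.2.2⟩⟩)]
      exact master (fun a : {v : V // s v} → Fin 4 => a ⟨i, hsi⟩ = 2)
        (fun b : {v : V // ¬ s v ∧ v ≠ j} → Fin 4 => b ⟨k, hk2⟩ = C)
    have eP1 : seirP1 G τ δ γ x0 j 0 t
        = (∑ a : {v : V // s v} → Fin 4, f a) * (∑ b : {v : V // ¬ s v ∧ v ≠ j} → Fin 4, g b)
        := by
      rw [seirP1, show Finset.univ.filter (fun x : V → Fin 4 => x j = 0)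
          = Finset.univ.filter (fun x : V → Fin 4 => x j = 0
            ∧ (fun _ : {v : V // s v} → Fin 4 => True) (fun u => x u.1)
            ∧ (fun _ : {v : V // ¬ s v ∧ v ≠ j} → Fin 4 => True) (fun u => x u.1))
        from Finset.filter_congr (fun x _ =>
          ⟨fun h => ⟨h, trivial, trivial⟩, fun h => h.1⟩)]
      have h := master (fun _ : {v : V // s v} → Fin 4 => True)
        (fun _ : {v : V // ¬ s v ∧ v ≠ j} → Fin 4 => True)
      rw [Finset.filter_true, Finset.filter_true] at h
      exact h
    have eP2a : seirP2 G τ δ γ x0 i j 2 0 t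
        = (∑ a ∈ Finset.univ.filter (fun a : {v : V // s v} → Fin 4 => a ⟨i, hsi⟩ = 2), f a)
          * (∑ b : {v : V // ¬ s v ∧ v ≠ j} → Fin 4, g b) := by
      rw [seirP2, show Finset.univ.filter (fun x : V → Fin 4 => x i = 2 ∧ x j = 0)
          = Finset.univ.filter (fun x : V → Fin 4 => x j = 0
            ∧ (fun a : {v : V // s v} → Fin 4 => a ⟨i, hsi⟩ = 2) (fun u => x u.1)
            ∧ (fun _ : {v : V // ¬ s v ∧ v ≠ j} → Fin 4 => True) (fun u => x u.1))
        from Finset.filter_congr (fun x _ =>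
          ⟨fun h => ⟨h.2, h.1, trivial⟩, fun h => ⟨h.2.1, h.1⟩⟩)]
      have h := master (fun a : {v : V // s v} → Fin 4 => a ⟨i, hsi⟩ = 2)
        (fun _ : {v : V // ¬ s v ∧ v ≠ j} → Fin 4 => True)
      rw [Finset.filter_true] at h
      exact h
    have eP2b : ∀ C : Fin 4, seirP2 G τ δ γ x0 j k 0 C t
        = (∑ a : {v : V // s v} → Fin 4, f a)
          * (∑ b ∈ Finset.univ.filter
              (fun b : {v : V // ¬ s v ∧ v ≠ j} → Fin 4 => b ⟨k, hk2⟩ = C), g b) := by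
      intro C
      rw [seirP2, show Finset.univ.filter (fun x : V → Fin 4 => x j = 0 ∧ x k = C)
          = Finset.univ.filter (fun x : V → Fin 4 => x j = 0
            ∧ (fun _ : {v : V // s v} → Fin 4 => True) (fun u => x u.1)
            ∧ (fun b : {v : V // ¬ s v ∧ v ≠ j} → Fin 4 => b ⟨k, hk2⟩ = C) (fun u => x u.1))
        from Finset.filter_congr (fun x _ =>
          ⟨fun h => ⟨h.1, trivial, h.2⟩, fun h => ⟨h.1, h.2.2⟩⟩)]
      have h := master (fun _ : {v : V // s v} → Fin 4 => True)
        (fun b : {v : V // ¬ s v ∧ v ≠ j} → Fin 4 => b ⟨k, hk2⟩ = C)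
      rw [Finset.filter_true] at h
      exact h
    constructor
    · rw [eP3 0, eP1, eP2a, eP2b 0]; ring
    · rw [eP3 2, eP1, eP2a, eP2b 2]; ring
  · -- degenerate case : `j` not initially susceptible
    have hzero : ∀ x : V → Fin 4, x j = 0 → seirP G τ δ γ x0 t x = 0 :=
      fun x hx => hvanish x0 x hx0 hx
    have z3 : ∀ C : Fin 4, seirP3 G τ δ γ x0 i j k 2 0 C t = 0 := fun C =>
      Finset.sum_eq_zero fun x hx =>
        hzero x (Finset.mem_filter.mp hx).2.2.1
    have z1 : seirP1 G τ δ γ x0 j 0 t = 0 :=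
      Finset.sum_eq_zero fun x hx => hzero x (Finset.mem_filter.mp hx).2
    have z2a : seirP2 G τ δ γ x0 i j 2 0 t = 0 :=
      Finset.sum_eq_zero fun x hx => hzero x (Finset.mem_filter.mp hx).2.2
    have z2b : ∀ C : Fin 4, seirP2 G τ δ γ x0 j k 0 C t = 0 := fun C =>
      Finset.sum_eq_zero fun x hx => hzero x (Finset.mem_filter.mp hx).2.1
    constructor
    · rw [z3 0, z1, z2a, z2b 0]
    · rw [z3 2, z1, z2a, z2b 2]
end

section
/- For Markovian SIR dynamics with infection rate τ > 0 and recovery rate γ > 0 on the open triplet, started from any pure initial configuration x⁰ = (A⁰, S, C⁰) whose middle node 2 is susceptible, the unclustered closure is exact on all states whose middle node is susceptible: for all A, C ∈ Fin 3 and all t ≥ 0, P_{123}(A,S,C;t) · P_2(S;t) = P_{12}(A,S;t) · P_{23}(S,C;t). -/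
open Finset

/-- The open triplet: the graph on nodes `{0,1,2}` (representing `1,2,3`) with edges
`{0,1}` and `{1,2}`; node `1` is the middle node. -/
def openTriplet : SimpleGraph (Fin 3) where
  Adj i j := i ≠ j ∧ (i = 1 ∨ j = 1)
  symm := ⟨fun _ _ h => ⟨h.1.symm, h.2.symm⟩⟩
  loopless := ⟨fun _ h => h.1 rfl⟩

instance : DecidableRel openTriplet.Adj :=
  fun i j => inferInstanceAs (Decidable (i ≠ j ∧ (i = 1 ∨ j = 1)))


open Matrix NormedSpace
open scoped Kronecker

namespace SirAux

attribute [local instance 2000] Fintype.decidableForallFintype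

def emb (p : Fin 3 × Fin 3) : Fin 3 → Fin 3 := ![p.1, 0, p.2]

@[simp] lemma emb_zero (p : Fin 3 × Fin 3) : emb p 0 = p.1 := rfl
@[simp] lemma emb_one (p : Fin 3 × Fin 3) : emb p 1 = 0 := rfl
@[simp] lemma emb_two (p : Fin 3 × Fin 3) : emb p 2 = p.2 := rfl

noncomputable def MM (τ γ : ℝ) : Matrix (Fin 3) (Fin 3) ℝ :=
  fun a b => if a = 1 ∧ b = 1 then -(τ + γ) else if a = 1 ∧ b = 2 then γ else 0

lemma emb_injective : Function.Injective emb := by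
  intro p q h
  exact Prod.ext (congrFun h 0) (congrFun h 2)

lemma rate_emb (τ γ : ℝ) (p : Fin 3 × Fin 3) (z : Fin 3 → Fin 3) :
    sirRate openTriplet τ γ (emb p) z =
      (if p.1 = 1 ∧ z = emb (2, p.2) then γ else 0)
      + (if z = Function.update (emb p) 1 1 then
            τ * ((if p.1 = 1 then (1:ℝ) else 0) + (if p.2 = 1 then (1:ℝ) else 0)) else 0)
      + (if p.2 = 1 ∧ z = emb (p.1, 2) then γ else 0) := by
  unfold sirRate
  rw [Fin.sum_univ_three]
  have hinf0 : (if (∀ j, j ≠ (0:Fin 3) → emb p j = z j) ∧ emb p 0 = 0 ∧ z 0 = 1 then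
      τ * ((Finset.univ.filter (fun j => openTriplet.Adj 0 j ∧ emb p j = 1)).card : ℝ)
      else 0) = 0 := by
    have hcard : (Finset.univ.filter (fun j => openTriplet.Adj 0 j ∧ emb p j = 1)) = ∅ := by
      rw [Finset.filter_eq_empty_iff]
      rintro j - ⟨hadj, hj⟩
      have hj1 : j = 1 := (show _ ≠ j ∧ (_ = (1:Fin 3) ∨ j = 1) from hadj).2.resolve_left (by decide)
      subst hj1
      simp at hj
    rw [hcard]
    simp
  have hinf2 : (if (∀ j, j ≠ (2:Fin 3) → emb p j = z j) ∧ emb p 2 = 0 ∧ z 2 = 1 then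
      τ * ((Finset.univ.filter (fun j => openTriplet.Adj 2 j ∧ emb p j = 1)).card : ℝ)
      else 0) = 0 := by
    have hcard : (Finset.univ.filter (fun j => openTriplet.Adj 2 j ∧ emb p j = 1)) = ∅ := by
      rw [Finset.filter_eq_empty_iff]
      rintro j - ⟨hadj, hj⟩
      have hj1 : j = 1 := (show _ ≠ j ∧ (_ = (1:Fin 3) ∨ j = 1) from hadj).2.resolve_left (by decide)
      subst hj1
      simp at hj
    rw [hcard]
    simp
  have hrec1 : (if (∀ j, j ≠ (1:Fin 3) → emb p j = z j) ∧ emb p 1 = 1 ∧ z 1 = 2 then γ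
      else 0) = 0 := by
    rw [if_neg]
    rintro ⟨-, h, -⟩
    simp at h
  have hrec0 : (if (∀ j, j ≠ (0:Fin 3) → emb p j = z j) ∧ emb p 0 = 1 ∧ z 0 = 2 then γ
      else 0) = (if p.1 = 1 ∧ z = emb (2, p.2) then γ else 0) := by
    refine if_congr ⟨?_, ?_⟩ rfl rfl
    · rintro ⟨hag, h1, h2⟩
      refine ⟨h1, funext fun i => ?_⟩
      fin_cases i
      · exact h2
      · exact (hag 1 (by decide)).symm
      · exact (hag 2 (by decide)).symm
    · rintro ⟨h1, rfl⟩
      refine ⟨fun j hj => ?_, h1, rfl⟩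
      fin_cases j
      · exact absurd rfl hj
      · rfl
      · rfl
  have hrec2 : (if (∀ j, j ≠ (2:Fin 3) → emb p j = z j) ∧ emb p 2 = 1 ∧ z 2 = 2 then γ
      else 0) = (if p.2 = 1 ∧ z = emb (p.1, 2) then γ else 0) := by
    refine if_congr ⟨?_, ?_⟩ rfl rfl
    · rintro ⟨hag, h1, h2⟩
      refine ⟨h1, funext fun i => ?_⟩
      fin_cases i
      · exact (hag 0 (by decide)).symm
      · exact (hag 1 (by decide)).symm
      · exact h2
    · rintro ⟨h1, rfl⟩
      refine ⟨fun j hj => ?_, h1, rfl⟩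
      fin_cases j
      · rfl
      · rfl
      · exact absurd rfl hj
  have hinf1 : (if (∀ j, j ≠ (1:Fin 3) → emb p j = z j) ∧ emb p 1 = 0 ∧ z 1 = 1 then
      τ * ((Finset.univ.filter (fun j => openTriplet.Adj 1 j ∧ emb p j = 1)).card : ℝ)
      else 0) = (if z = Function.update (emb p) 1 1 then
        τ * ((if p.1 = 1 then (1:ℝ) else 0) + (if p.2 = 1 then (1:ℝ) else 0)) else 0) := by
    have hcard : ((Finset.univ.filter (fun j => openTriplet.Adj 1 j ∧ emb p j = 1)).card : ℝ)
        = (if p.1 = 1 then (1:ℝ) else 0) + (if p.2 = 1 then (1:ℝ) else 0) := by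
      rw [Finset.card_filter, Fin.sum_univ_three]
      have h10 : openTriplet.Adj 1 0 := by show (1:Fin 3) ≠ 0 ∧ ((1:Fin 3) = 1 ∨ (0:Fin 3) = 1); constructor <;> decide
      have h11 : ¬ openTriplet.Adj 1 1 := by intro h0; exact (show (1:Fin 3) ≠ 1 ∧ _ from h0).1 rfl
      have h12 : openTriplet.Adj 1 2 := by show (1:Fin 3) ≠ 2 ∧ ((1:Fin 3) = 1 ∨ (2:Fin 3) = 1); constructor <;> decide
      simp only [h10, h11, h12, true_and, false_and, if_false, emb_zero, emb_one, emb_two]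
      push_cast [apply_ite (Nat.cast : ℕ → ℝ)]
      norm_num
    refine if_congr ⟨?_, ?_⟩ (by rw [hcard]) rfl
    · rintro ⟨hag, -, h2⟩
      funext i
      rcases eq_or_ne i 1 with rfl | hi
      · rw [Function.update_self]; exact h2
      · rw [Function.update_of_ne hi]; exact (hag i hi).symm
    · rintro rfl
      exact ⟨fun j hj => (Function.update_of_ne hj _ _).symm, rfl, Function.update_self _ _ _⟩
  rw [hinf0, hinf1, hinf2, hrec0, hrec1, hrec2]
  ring

lemma sum_ite_single (s : Finset (Fin 3 → Fin 3)) (a : Prop) [Decidable a]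
    (z₀ : Fin 3 → Fin 3) (c : ℝ) :
    (∑ z ∈ s, if a ∧ z = z₀ then c else 0) = if a ∧ z₀ ∈ s then c else 0 := by
  have h : ∀ z, (if a ∧ z = z₀ then c else 0) = if z = z₀ then (if a then c else 0) else 0 := by
    intro z
    by_cases h1 : a <;> by_cases h2 : z = z₀ <;> simp [h1, h2]
  rw [Finset.sum_congr rfl (fun z _ => h z), Finset.sum_ite_eq' s z₀]
  by_cases h1 : a <;> by_cases h2 : z₀ ∈ s <;> simp [h1, h2]

lemma erase_sum (τ γ : ℝ) (p : Fin 3 × Fin 3) :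
    ∑ z ∈ Finset.univ.erase (emb p), sirRate openTriplet τ γ (emb p) z
      = (γ + τ) * ((if p.1 = 1 then (1:ℝ) else 0) + (if p.2 = 1 then (1:ℝ) else 0)) := by
  rw [Finset.sum_congr rfl (fun z _ => rate_emb τ γ p z)]
  rw [Finset.sum_add_distrib, Finset.sum_add_distrib]
  rw [sum_ite_single _ (p.1 = 1) (emb (2, p.2)) γ, sum_ite_single _ (p.2 = 1) (emb (p.1, 2)) γ,
    Finset.sum_ite_eq' _ (Function.update (emb p) 1 1)]
  have hupd : Function.update (emb p) 1 1 ∈ Finset.univ.erase (emb p) := by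
    rw [Finset.mem_erase]
    refine ⟨fun h => ?_, Finset.mem_univ _⟩
    have := congrFun h 1
    rw [Function.update_self] at this
    simp at this
  rw [if_pos hupd]
  by_cases h1 : p.1 = 1 <;> by_cases h2 : p.2 = 1 <;>
    simp [h1, h2, Finset.mem_erase, emb_injective.eq_iff, Prod.ext_iff, Ne] <;> ring

lemma genQ (τ γ : ℝ) (p q : Fin 3 × Fin 3) :
    sirGen openTriplet τ γ (emb p) (emb q)
      = (MM τ γ ⊗ₖ (1 : Matrix (Fin 3) (Fin 3) ℝ)
          + (1 : Matrix (Fin 3) (Fin 3) ℝ) ⊗ₖ MM τ γ) p q := by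
  unfold sirGen
  by_cases hpq : p = q
  · subst hpq
    rw [if_pos rfl, erase_sum]
    rw [Matrix.add_apply, Matrix.kroneckerMap_apply, Matrix.kroneckerMap_apply]
    by_cases h1 : p.1 = 1 <;> by_cases h2 : p.2 = 1 <;>
      simp [h1, h2, MM, Matrix.one_apply] <;> ring
  · rw [if_neg (fun h => hpq (emb_injective h)), rate_emb]
    have hupd : ¬ emb q = Function.update (emb p) 1 1 := by
      intro h
      have := congrFun h 1
      rw [Function.update_self] at this
      simp at this
    rw [if_neg hupd]
    rw [Matrix.add_apply, Matrix.kroneckerMap_apply, Matrix.kroneckerMap_apply]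
    simp only [emb_injective.eq_iff, Prod.ext_iff]
    obtain ⟨a, c⟩ := p
    obtain ⟨b, d⟩ := q
    simp only [Prod.mk.injEq, not_and] at hpq
    fin_cases a <;> fin_cases b <;> fin_cases c <;> fin_cases d <;>
      simp_all [MM, Matrix.one_apply]

lemma eq_emb {x : Fin 3 → Fin 3} (h : x 1 = 0) : x = emb (x 0, x 2) := by
  funext i; fin_cases i <;> simp [emb, h]

lemma mem_range_emb {x : Fin 3 → Fin 3} (h : x 1 = 0) : x ∈ Set.range emb :=
  ⟨(x 0, x 2), (eq_emb h).symm⟩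

lemma sum_range (g : (Fin 3 → Fin 3) → ℝ) (hg : ∀ z, z ∉ Set.range emb → g z = 0) :
    ∑ z, g z = ∑ p : Fin 3 × Fin 3, g (emb p) := by
  classical
  have h1 : ∑ z ∈ (univ.image emb), g z = ∑ p : Fin 3 × Fin 3, g (emb p) :=
    Finset.sum_image (fun a _ b _ h => emb_injective h)
  rw [← h1]
  refine (Finset.sum_subset (subset_univ _) (fun z _ hz => hg z ?_)).symm
  rintro ⟨p, rfl⟩
  exact hz (Finset.mem_image_of_mem _ (mem_univ p))

lemma pow_emb (Q : Matrix (Fin 3 → Fin 3) (Fin 3 → Fin 3) ℝ)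
    (K : Matrix (Fin 3 × Fin 3) (Fin 3 × Fin 3) ℝ)
    (h0 : ∀ z q, z 1 ≠ 0 → Q z (emb q) = 0)
    (h1 : ∀ p q, Q (emb p) (emb q) = K p q) :
    ∀ (n : ℕ) (p q), (Q ^ n) (emb p) (emb q) = (K ^ n) p q := by
  intro n
  induction n with
  | zero => intro p q; simp [Matrix.one_apply, emb_injective.eq_iff]
  | succ n ih =>
    intro p q
    rw [pow_succ, pow_succ, Matrix.mul_apply, Matrix.mul_apply]
    rw [sum_range (fun z => (Q ^ n) (emb p) z * Q z (emb q)) (fun z hz => by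
      have hz1 : z 1 ≠ 0 := fun h => hz (mem_range_emb h)
      show (Q ^ n) (emb p) z * Q z (emb q) = 0
      rw [h0 z q hz1, mul_zero])]
    exact Finset.sum_congr rfl fun r _ => by rw [ih, h1]

lemma exp_entry {ι : Type*} [Fintype ι] [DecidableEq ι] (M : Matrix ι ι ℝ) (i j : ι) :
    NormedSpace.exp M i j = ∑' n : ℕ, ((n.factorial : ℝ)⁻¹) * (M ^ n) i j := by
  letI : SeminormedRing (Matrix ι ι ℝ) := Matrix.linftyOpSemiNormedRing
  letI : NormedRing (Matrix ι ι ℝ) := Matrix.linftyOpNormedRing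
  letI : NormedAlgebra ℝ (Matrix ι ι ℝ) := Matrix.linftyOpNormedAlgebra
  have hs : Summable (fun n : ℕ => ((n.factorial : ℝ)⁻¹) • M ^ n) := expSeries_summable' M
  let e : Matrix ι ι ℝ →ₗ[ℝ] ℝ := Matrix.entryLinearMap ℝ ℝ i j
  have he : Continuous e := (continuous_apply j).comp (continuous_apply i)
  have h3 : HasSum (fun n : ℕ => ((n.factorial : ℝ)⁻¹) • M ^ n) (NormedSpace.exp M) := by
    rw [exp_eq_tsum ℝ]; exact hs.hasSum
  have h2 : HasSum (fun n : ℕ => (n.factorial : ℝ)⁻¹ * (M ^ n) i j)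
      (NormedSpace.exp M i j) := by
    have h4 := h3.map e he
    exact h4
  exact h2.tsum_eq.symm

lemma exp_emb (Q : Matrix (Fin 3 → Fin 3) (Fin 3 → Fin 3) ℝ)
    (K : Matrix (Fin 3 × Fin 3) (Fin 3 × Fin 3) ℝ)
    (h0 : ∀ z q, z 1 ≠ 0 → Q z (emb q) = 0)
    (h1 : ∀ p q, Q (emb p) (emb q) = K p q) (p q) :
    NormedSpace.exp Q (emb p) (emb q) = NormedSpace.exp K p q := by
  rw [exp_entry, exp_entry]
  exact tsum_congr fun n => by rw [pow_emb Q K h0 h1]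


noncomputable def klAlg : Matrix (Fin 3) (Fin 3) ℝ →ₐ[ℝ]
    Matrix (Fin 3 × Fin 3) (Fin 3 × Fin 3) ℝ where
  toFun M := M ⊗ₖ (1 : Matrix (Fin 3) (Fin 3) ℝ)
  map_one' := Matrix.one_kronecker_one
  map_mul' A B := by
    show (A * B) ⊗ₖ (1 : Matrix (Fin 3) (Fin 3) ℝ) = _ ⊗ₖ _ * _ ⊗ₖ _
    rw [← Matrix.mul_kronecker_mul, Matrix.one_mul]
  map_zero' := Matrix.zero_kronecker _
  map_add' A B := Matrix.add_kronecker A B 1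
  commutes' r := by
    show (algebraMap ℝ _ r) ⊗ₖ (1 : Matrix (Fin 3) (Fin 3) ℝ) = algebraMap ℝ _ r
    rw [Algebra.algebraMap_eq_smul_one, Algebra.algebraMap_eq_smul_one,
      Matrix.smul_kronecker, Matrix.one_kronecker_one]

noncomputable def krAlg : Matrix (Fin 3) (Fin 3) ℝ →ₐ[ℝ]
    Matrix (Fin 3 × Fin 3) (Fin 3 × Fin 3) ℝ where
  toFun M := (1 : Matrix (Fin 3) (Fin 3) ℝ) ⊗ₖ M
  map_one' := Matrix.one_kronecker_one
  map_mul' A B := by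
    show (1 : Matrix (Fin 3) (Fin 3) ℝ) ⊗ₖ (A * B) = _ ⊗ₖ _ * _ ⊗ₖ _
    rw [← Matrix.mul_kronecker_mul, Matrix.one_mul]
  map_zero' := Matrix.kronecker_zero _
  map_add' A B := Matrix.kronecker_add 1 A B
  commutes' r := by
    show (1 : Matrix (Fin 3) (Fin 3) ℝ) ⊗ₖ (algebraMap ℝ _ r) = algebraMap ℝ _ r
    rw [Algebra.algebraMap_eq_smul_one, Algebra.algebraMap_eq_smul_one,
      Matrix.kronecker_smul, Matrix.one_kronecker_one]

lemma exp_kl (M : Matrix (Fin 3) (Fin 3) ℝ) :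
    NormedSpace.exp (M ⊗ₖ (1 : Matrix (Fin 3) (Fin 3) ℝ))
      = NormedSpace.exp M ⊗ₖ (1 : Matrix (Fin 3) (Fin 3) ℝ) := by
  letI : SeminormedRing (Matrix (Fin 3) (Fin 3) ℝ) := Matrix.linftyOpSemiNormedRing
  letI : NormedRing (Matrix (Fin 3) (Fin 3) ℝ) := Matrix.linftyOpNormedRing
  letI : NormedAlgebra ℝ (Matrix (Fin 3) (Fin 3) ℝ) := Matrix.linftyOpNormedAlgebra
  letI : SeminormedRing (Matrix (Fin 3 × Fin 3) (Fin 3 × Fin 3) ℝ) :=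
    Matrix.linftyOpSemiNormedRing
  letI : NormedRing (Matrix (Fin 3 × Fin 3) (Fin 3 × Fin 3) ℝ) := Matrix.linftyOpNormedRing
  letI : NormedAlgebra ℝ (Matrix (Fin 3 × Fin 3) (Fin 3 × Fin 3) ℝ) :=
    Matrix.linftyOpNormedAlgebra
  letI : NormedAlgebra ℚ (Matrix (Fin 3) (Fin 3) ℝ) := NormedAlgebra.restrictScalars ℚ ℝ _
  letI : NormedAlgebra ℚ (Matrix (Fin 3 × Fin 3) (Fin 3 × Fin 3) ℝ) :=
    NormedAlgebra.restrictScalars ℚ ℝ _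
  exact (map_exp klAlg (LinearMap.continuous_of_finiteDimensional klAlg.toLinearMap) M).symm

lemma exp_kr (M : Matrix (Fin 3) (Fin 3) ℝ) :
    NormedSpace.exp ((1 : Matrix (Fin 3) (Fin 3) ℝ) ⊗ₖ M)
      = (1 : Matrix (Fin 3) (Fin 3) ℝ) ⊗ₖ NormedSpace.exp M := by
  letI : SeminormedRing (Matrix (Fin 3) (Fin 3) ℝ) := Matrix.linftyOpSemiNormedRing
  letI : NormedRing (Matrix (Fin 3) (Fin 3) ℝ) := Matrix.linftyOpNormedRing
  letI : NormedAlgebra ℝ (Matrix (Fin 3) (Fin 3) ℝ) := Matrix.linftyOpNormedAlgebra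
  letI : SeminormedRing (Matrix (Fin 3 × Fin 3) (Fin 3 × Fin 3) ℝ) :=
    Matrix.linftyOpSemiNormedRing
  letI : NormedRing (Matrix (Fin 3 × Fin 3) (Fin 3 × Fin 3) ℝ) := Matrix.linftyOpNormedRing
  letI : NormedAlgebra ℝ (Matrix (Fin 3 × Fin 3) (Fin 3 × Fin 3) ℝ) :=
    Matrix.linftyOpNormedAlgebra
  letI : NormedAlgebra ℚ (Matrix (Fin 3) (Fin 3) ℝ) := NormedAlgebra.restrictScalars ℚ ℝ _
  letI : NormedAlgebra ℚ (Matrix (Fin 3 × Fin 3) (Fin 3 × Fin 3) ℝ) :=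
    NormedAlgebra.restrictScalars ℚ ℝ _
  exact (map_exp krAlg (LinearMap.continuous_of_finiteDimensional krAlg.toLinearMap) M).symm

lemma exp_kron_sum (M : Matrix (Fin 3) (Fin 3) ℝ) (p q : Fin 3 × Fin 3) :
    NormedSpace.exp (M ⊗ₖ (1 : Matrix (Fin 3) (Fin 3) ℝ)
        + (1 : Matrix (Fin 3) (Fin 3) ℝ) ⊗ₖ M) p q
      = NormedSpace.exp M p.1 q.1 * NormedSpace.exp M p.2 q.2 := by
  have hcomm : Commute (M ⊗ₖ (1 : Matrix (Fin 3) (Fin 3) ℝ))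
      ((1 : Matrix (Fin 3) (Fin 3) ℝ) ⊗ₖ M) := by
    show _ * _ = _ * _
    rw [← Matrix.mul_kronecker_mul, ← Matrix.mul_kronecker_mul, Matrix.one_mul, Matrix.mul_one]
  rw [Matrix.exp_add_of_commute _ _ hcomm, exp_kl, exp_kr, ← Matrix.mul_kronecker_mul,
    Matrix.one_mul, Matrix.mul_one, Matrix.kroneckerMap_apply]



lemma rate_ne (τ γ : ℝ) {z y : Fin 3 → Fin 3} (hz : z 1 ≠ 0) (hy : y 1 = 0) :
    sirRate openTriplet τ γ z y = 0 := by
  unfold sirRate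
  refine Finset.sum_eq_zero fun i _ => ?_
  rcases eq_or_ne i 1 with rfl | hi
  · rw [if_neg, if_neg, add_zero]
    · rintro ⟨-, -, h2⟩
      rw [hy] at h2
      exact absurd h2 (by decide)
    · rintro ⟨-, h1, -⟩
      exact hz h1
  · rw [if_neg, if_neg, add_zero] <;>
      · rintro ⟨hag, -, -⟩
        exact hz ((hag 1 hi.symm).trans hy)

end SirAux

/-- For Markovian SIR dynamics on the open triplet started with the middle node susceptible,
the unclustered closure is exact on all states whose middle node is susceptible. -/
theorem sir_openTriplet_closure_exact_middle_S
    (τ γ : ℝ) (hτ : 0 < τ) (hγ : 0 < γ)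
    (x0 : Fin 3 → Fin 3) (hx0 : x0 1 = 0)
    (A C : Fin 3) (t : ℝ) (ht : 0 ≤ t) :
    sirP3 openTriplet τ γ x0 0 1 2 A 0 C t * sirP1 openTriplet τ γ x0 1 0 t
      = sirP2 openTriplet τ γ x0 0 1 A 0 t * sirP2 openTriplet τ γ x0 1 2 0 C t := by
  
  classical
  open SirAux in
  set N : Matrix (Fin 3) (Fin 3) ℝ := NormedSpace.exp (t • SirAux.MM τ γ) with hN
  have hQ0 : ∀ (z : Fin 3 → Fin 3) (q : Fin 3 × Fin 3), z 1 ≠ 0 →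
      (t • sirGen openTriplet τ γ) z (SirAux.emb q) = 0 := by
    intro z q hz
    have hne : z ≠ SirAux.emb q := fun h => hz (by rw [h]; rfl)
    rw [Matrix.smul_apply]
    unfold sirGen
    rw [if_neg hne, SirAux.rate_ne τ γ hz rfl, smul_zero]
  have hQ1 : ∀ p q : Fin 3 × Fin 3,
      (t • sirGen openTriplet τ γ) (SirAux.emb p) (SirAux.emb q)
        = (t • (SirAux.MM τ γ ⊗ₖ (1 : Matrix (Fin 3) (Fin 3) ℝ)
            + (1 : Matrix (Fin 3) (Fin 3) ℝ) ⊗ₖ SirAux.MM τ γ)) p q := by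
    intro p q
    rw [Matrix.smul_apply, Matrix.smul_apply, SirAux.genQ]
  have key : ∀ q : Fin 3 × Fin 3,
      sirP openTriplet τ γ x0 t (SirAux.emb q) = N (x0 0) q.1 * N (x0 2) q.2 := by
    intro q
    unfold sirP
    conv_lhs => rw [SirAux.eq_emb hx0]
    rw [SirAux.exp_emb _ _ hQ0 hQ1]
    rw [smul_add, ← Matrix.smul_kronecker, ← Matrix.kronecker_smul]
    rw [SirAux.exp_kron_sum (t • SirAux.MM τ γ) (x0 0, x0 2) q]
  have h3 : sirP3 openTriplet τ γ x0 0 1 2 A 0 C t = N (x0 0) A * N (x0 2) C := by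
    unfold sirP3
    have hfilter : Finset.univ.filter (fun x : Fin 3 → Fin 3 => x 0 = A ∧ x 1 = 0 ∧ x 2 = C)
        = {SirAux.emb (A, C)} := by
      ext x
      simp only [Finset.mem_filter, Finset.mem_univ, true_and, Finset.mem_singleton]
      constructor
      · rintro ⟨h0, h1, h2⟩
        rw [SirAux.eq_emb h1, h0, h2]
      · rintro rfl
        exact ⟨rfl, rfl, rfl⟩
    rw [hfilter, Finset.sum_singleton, key]
  have h1m : sirP1 openTriplet τ γ x0 1 0 t
      = (∑ a, N (x0 0) a) * (∑ c, N (x0 2) c) := by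
    unfold sirP1
    rw [Finset.sum_filter]
    rw [SirAux.sum_range (fun x => if x 1 = 0 then sirP openTriplet τ γ x0 t x else 0)
      (fun z hz => if_neg (fun h => hz (SirAux.mem_range_emb h)))]
    rw [Finset.sum_congr rfl (fun q _ => by rw [if_pos (SirAux.emb_one q), key q])]
    rw [Finset.sum_mul_sum, Fintype.sum_prod_type]
  have h2a : sirP2 openTriplet τ γ x0 0 1 A 0 t = N (x0 0) A * (∑ c, N (x0 2) c) := by
    unfold sirP2
    rw [Finset.sum_filter]
    rw [SirAux.sum_range (fun x => if x 0 = A ∧ x 1 = 0 then sirP openTriplet τ γ x0 t x else 0)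
      (fun z hz => if_neg (fun h => hz (SirAux.mem_range_emb h.2)))]
    have step : ∀ q : Fin 3 × Fin 3,
        (if SirAux.emb q 0 = A ∧ SirAux.emb q 1 = 0
            then sirP openTriplet τ γ x0 t (SirAux.emb q) else 0)
          = if q.1 = A then N (x0 0) q.1 * N (x0 2) q.2 else 0 := by
      intro q
      rw [key q]
      simp [SirAux.emb_zero, SirAux.emb_one]
    rw [Finset.sum_congr rfl (fun q _ => step q), Fintype.sum_prod_type]
    rw [Finset.sum_congr rfl (fun a _ => show (∑ c, if a = A then N (x0 0) a * N (x0 2) c else 0)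
        = if a = A then N (x0 0) a * (∑ c, N (x0 2) c) else 0 from by
      split_ifs with h
      · rw [Finset.mul_sum]
      · rw [Finset.sum_const_zero])]
    rw [Finset.sum_ite_eq' Finset.univ A (fun a => N (x0 0) a * (∑ c, N (x0 2) c))]
    simp
  have h2b : sirP2 openTriplet τ γ x0 1 2 0 C t = (∑ a, N (x0 0) a) * N (x0 2) C := by
    unfold sirP2
    rw [Finset.sum_filter]
    rw [SirAux.sum_range (fun x => if x 1 = 0 ∧ x 2 = C then sirP openTriplet τ γ x0 t x else 0)
      (fun z hz => if_neg (fun h => hz (SirAux.mem_range_emb h.1)))]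
    have step : ∀ q : Fin 3 × Fin 3,
        (if SirAux.emb q 1 = 0 ∧ SirAux.emb q 2 = C
            then sirP openTriplet τ γ x0 t (SirAux.emb q) else 0)
          = if q.2 = C then N (x0 0) q.1 * N (x0 2) q.2 else 0 := by
      intro q
      rw [key q]
      simp [SirAux.emb_one, SirAux.emb_two]
    rw [Finset.sum_congr rfl (fun q _ => step q), Fintype.sum_prod_type]
    rw [Finset.sum_congr rfl (fun a _ => show (∑ c, if c = C then N (x0 0) a * N (x0 2) c else 0)
        = N (x0 0) a * N (x0 2) C from by
      rw [Finset.sum_ite_eq' Finset.univ C (fun c => N (x0 0) a * N (x0 2) c)]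
      simp)]
    rw [← Finset.sum_mul]
  rw [h3, h1m, h2a, h2b]
  ring
end

section
/- For Markovian SIR dynamics with infection rate τ > 0 and recovery rate γ ≥ 0 on the open triplet, started from the pure initial configuration (S, I, S), the unclustered closure is exact on all states whose middle node is still infectious: for all A, C ∈ {S, I} and all t ≥ 0, P_{123}(A,I,C;t) · P_2(I;t) = P_{12}(A,I;t) · P_{23}(I,C;t). -/
open Finset

section aux

variable {V : Type*} [Fintype V] [DecidableEq V] (G : SimpleGraph V)
    [DecidableRel G.Adj] (τ γ : ℝ)

lemma sirRate_ne_zero {x y : V → Fin 3} (h : sirRate G τ γ x y ≠ 0) :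
    ∃ i, (∀ j, j ≠ i → x j = y j) ∧ ((x i = 0 ∧ y i = 1) ∨ (x i = 1 ∧ y i = 2)) := by
  obtain ⟨i, -, hi⟩ := Finset.exists_ne_zero_of_sum_ne_zero h
  by_cases h1 : (∀ j, j ≠ i → x j = y j) ∧ x i = 0 ∧ y i = 1
  · exact ⟨i, h1.1, Or.inl h1.2⟩
  by_cases h2 : (∀ j, j ≠ i → x j = y j) ∧ x i = 1 ∧ y i = 2
  · exact ⟨i, h2.1, Or.inr h2.2⟩
  · simp [h1, h2] at hi

lemma sirGen_coordA {x y : V → Fin 3} (v : V) (hx : x v ≠ 0)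
    (h : sirGen G τ γ x y ≠ 0) : y v ≠ 0 := by
  rw [sirGen] at h
  split at h
  · subst ‹x = y›; exact hx
  · obtain ⟨i, hagree, hcase⟩ := sirRate_ne_zero G τ γ h
    rcases eq_or_ne i v with rfl | hiv
    · rcases hcase with ⟨h0, -⟩ | ⟨-, h2⟩
      · exact absurd h0 hx
      · rw [h2]; decide
    · rw [← hagree v (Ne.symm hiv)]; exact hx

lemma sirGen_coordB {x y : V → Fin 3} (v : V) (hx : x v = 2)
    (h : sirGen G τ γ x y ≠ 0) : y v = 2 := by
  rw [sirGen] at h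
  split at h
  · subst ‹x = y›; exact hx
  · obtain ⟨i, hagree, hcase⟩ := sirRate_ne_zero G τ γ h
    rcases eq_or_ne i v with rfl | hiv
    · rcases hcase with ⟨h0, -⟩ | ⟨h1, -⟩
      · rw [h0] at hx; exact absurd hx (by decide)
      · rw [h1] at hx; exact absurd hx (by decide)
    · rw [← hagree v (Ne.symm hiv)]; exact hx

lemma sirGen_pow_A (v : V) : ∀ (n : ℕ) {w z : V → Fin 3}, w v ≠ 0 → z v = 0 →
    (sirGen G τ γ ^ n) w z = 0 := by
  intro n
  induction n with
  | zero =>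
    intro w z hw hz
    rw [pow_zero, Matrix.one_apply]
    rw [if_neg]; rintro rfl; rw [hz] at hw; exact hw rfl
  | succ n ih =>
    intro w z hw hz
    rw [pow_succ', Matrix.mul_apply]
    refine Finset.sum_eq_zero fun u _ => ?_
    by_cases hu : u v = 0
    · have : sirGen G τ γ w u = 0 := by
        by_contra hne
        exact (sirGen_coordA G τ γ v hw hne) hu
      rw [this, zero_mul]
    · rw [ih hu hz, mul_zero]

lemma sirGen_pow_B (v : V) : ∀ (n : ℕ) {w z : V → Fin 3}, w v = 2 → z v ≠ 2 →
    (sirGen G τ γ ^ n) w z = 0 := by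
  intro n
  induction n with
  | zero =>
    intro w z hw hz
    rw [pow_zero, Matrix.one_apply, if_neg]
    rintro rfl; rw [hw] at hz; exact hz rfl
  | succ n ih =>
    intro w z hw hz
    rw [pow_succ', Matrix.mul_apply]
    refine Finset.sum_eq_zero fun u _ => ?_
    by_cases hu : u v = 2
    · rw [ih hu hz, mul_zero]
    · have : sirGen G τ γ w u = 0 := by
        by_contra hne
        exact hu (sirGen_coordB G τ γ v hw hne)
      rw [this, zero_mul]

end aux


def emb (b : Fin 3 × Fin 3) : Fin 3 → Fin 3 := ![b.1, 1, b.2]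

lemma emb_one (b : Fin 3 × Fin 3) : emb b 1 = 1 := rfl

lemma emb_eq {x : Fin 3 → Fin 3} (hx : x 1 = 1) : emb (x 0, x 2) = x := by
  funext i
  fin_cases i
  · rfl
  · exact hx.symm
  · rfl

def funEquiv : (Fin 3 → Fin 3) ≃ Fin 3 × Fin 3 × Fin 3 where
  toFun x := (x 0, x 1, x 2)
  invFun p := ![p.1, p.2.1, p.2.2]
  left_inv x := by funext i; fin_cases i <;> rfl
  right_inv p := rfl

lemma sum_fun3 {M : Type*} [AddCommMonoid M] (f : (Fin 3 → Fin 3) → M) :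
    ∑ x, f x = ∑ p : Fin 3 × Fin 3 × Fin 3, f ![p.1, p.2.1, p.2.2] :=
  Fintype.sum_equiv funEquiv _ _ (fun x => by
    congr 1
    exact (funEquiv.left_inv x).symm)

noncomputable def Mblk (τ γ : ℝ) : Matrix (Fin 3 × Fin 3) (Fin 3 × Fin 3) ℝ :=
  fun b c => sirGen openTriplet τ γ (emb b) (emb c)

lemma pow_blk (τ γ : ℝ) : ∀ (n : ℕ) (b c : Fin 3 × Fin 3),
    (sirGen openTriplet τ γ ^ n) (emb b) (emb c) = (Mblk τ γ ^ n) b c := by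
  intro n
  induction n with
  | zero =>
    intro b c
    rw [pow_zero, pow_zero, Matrix.one_apply, Matrix.one_apply]
    congr 1
    simp only [eq_iff_iff]
    constructor
    · intro h
      have h0 := congrFun h 0
      have h2 := congrFun h 2
      exact Prod.ext h0 h2
    · rintro rfl; rfl
  | succ n ih =>
    intro b c
    rw [pow_succ, pow_succ, Matrix.mul_apply, Matrix.mul_apply]
    have hvan : ∀ z : Fin 3 → Fin 3,
        (sirGen openTriplet τ γ ^ n) (emb b) z * sirGen openTriplet τ γ z (emb c) ≠ 0 →
        z 1 = 1 := by
      intro z hz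
      rcases (show z 1 = 0 ∨ z 1 = 1 ∨ z 1 = 2 by omega) with h | h | h
      · exact absurd (by rw [sirGen_pow_A openTriplet τ γ 1 n (by rw [emb_one]; decide) h,
          zero_mul]) hz
      · exact h
      · have : sirGen openTriplet τ γ z (emb c) = 0 := by
          by_contra hne
          have := sirGen_coordB openTriplet τ γ 1 h hne
          rw [emb_one] at this
          exact absurd this (by decide)
        exact absurd (by rw [this, mul_zero]) hz
    rw [← Finset.sum_filter_of_ne (p := fun z : Fin 3 → Fin 3 => z 1 = 1)
      (fun z _ h => hvan z h)]
    rw [Finset.sum_bij' (i := fun (z : Fin 3 → Fin 3) _ => ((z 0, z 2) : Fin 3 × Fin 3))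
      (j := fun (d : Fin 3 × Fin 3) _ => emb d)
      (g := fun d => (Mblk τ γ ^ n) b d * Mblk τ γ d c)
      (hi := fun z hz => Finset.mem_univ _)
      (hj := fun d hd => by simp [emb_one])
      (left_neg := fun z hz => emb_eq (by simpa using (Finset.mem_filter.mp hz).2))
      (right_neg := fun d hd => rfl)
      (h := fun z hz => by
        have hz1 : z 1 = 1 := by simpa using (Finset.mem_filter.mp hz).2
        have key : (sirGen openTriplet τ γ ^ n) (emb b) (emb (z 0, z 2)) *
            sirGen openTriplet τ γ (emb (z 0, z 2)) (emb c)
            = (Mblk τ γ ^ n) b (z 0, z 2) * Mblk τ γ (z 0, z 2) c := by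
          rw [ih]; rfl
        rw [emb_eq hz1] at key
        exact key)]

noncomputable def evalAM (α β : Type*) [Fintype α] (i j : α) : Matrix α α ℝ →+ ℝ where
  toFun X := X i j
  map_zero' := rfl
  map_add' _ _ := rfl

lemma exp_entry_blk (τ γ t : ℝ) (b c : Fin 3 × Fin 3) :
    NormedSpace.exp (t • sirGen openTriplet τ γ) (emb b) (emb c)
      = NormedSpace.exp (t • Mblk τ γ) b c := by
  letI : SeminormedRing (Matrix (Fin 3 → Fin 3) (Fin 3 → Fin 3) ℝ) := Matrix.linftyOpSemiNormedRing
  letI : NormedRing (Matrix (Fin 3 → Fin 3) (Fin 3 → Fin 3) ℝ) := Matrix.linftyOpNormedRing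
  letI : NormedAlgebra ℝ (Matrix (Fin 3 → Fin 3) (Fin 3 → Fin 3) ℝ) := Matrix.linftyOpNormedAlgebra
  letI : SeminormedRing (Matrix (Fin 3 × Fin 3) (Fin 3 × Fin 3) ℝ) := Matrix.linftyOpSemiNormedRing
  letI : NormedRing (Matrix (Fin 3 × Fin 3) (Fin 3 × Fin 3) ℝ) := Matrix.linftyOpNormedRing
  letI : NormedAlgebra ℝ (Matrix (Fin 3 × Fin 3) (Fin 3 × Fin 3) ℝ) := Matrix.linftyOpNormedAlgebra
  have h1 := NormedSpace.exp_series_hasSum_exp' (𝕂 := ℝ) (t • sirGen openTriplet τ γ)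
  have h2 := NormedSpace.exp_series_hasSum_exp' (𝕂 := ℝ) (t • Mblk τ γ)
  have hc1 : Continuous (evalAM (Fin 3 → Fin 3) ℝ (emb b) (emb c)) := by
    show Continuous fun X : Matrix (Fin 3 → Fin 3) (Fin 3 → Fin 3) ℝ => X (emb b) (emb c)
    exact (continuous_apply (emb c)).comp (continuous_apply (emb b))
  have hc2 : Continuous (evalAM (Fin 3 × Fin 3) ℝ b c) := by
    show Continuous fun X : Matrix (Fin 3 × Fin 3) (Fin 3 × Fin 3) ℝ => X b c
    exact (continuous_apply c).comp (continuous_apply b)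
  have h1' := h1.map (evalAM (Fin 3 → Fin 3) ℝ (emb b) (emb c)) hc1
  have h2' := h2.map (evalAM (Fin 3 × Fin 3) ℝ b c) hc2
  have hfun : ((evalAM (Fin 3 → Fin 3) ℝ (emb b) (emb c)) ∘
      fun n : ℕ => (((Nat.factorial n : ℝ))⁻¹ • (t • sirGen openTriplet τ γ) ^ n))
      = ((evalAM (Fin 3 × Fin 3) ℝ b c) ∘
      fun n : ℕ => (((Nat.factorial n : ℝ))⁻¹ • (t • Mblk τ γ) ^ n)) := by
    funext n
    show (((Nat.factorial n : ℝ))⁻¹ • (t • sirGen openTriplet τ γ) ^ n) (emb b) (emb c)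
      = (((Nat.factorial n : ℝ))⁻¹ • (t • Mblk τ γ) ^ n) b c
    simp only [smul_pow, Matrix.smul_apply, smul_eq_mul]
    rw [pow_blk]
  rw [hfun] at h1'
  exact h1'.unique h2'

noncomputable def Kmat (τ γ : ℝ) : Matrix (Fin 3) (Fin 3) ℝ :=
  !![-τ, τ, 0; 0, -γ, γ; 0, 0, 0]

lemma sirRate_self {V : Type*} [Fintype V] [DecidableEq V] (G : SimpleGraph V)
    [DecidableRel G.Adj] (τ γ : ℝ) (x : V → Fin 3) : sirRate G τ γ x x = 0 := by
  refine Finset.sum_eq_zero fun i _ => ?_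
  rw [if_neg, if_neg, add_zero]
  · rintro ⟨-, h1, h2⟩; rw [h1] at h2; exact absurd h2 (by decide)
  · rintro ⟨-, h1, h2⟩; rw [h1] at h2; exact absurd h2 (by decide)

lemma rate_sum {V : Type*} [Fintype V] [DecidableEq V] (G : SimpleGraph V)
    [DecidableRel G.Adj] (τ γ : ℝ) (x : V → Fin 3) :
    ∑ y : V → Fin 3, sirRate G τ γ x y
      = ∑ i : V, ((if x i = 0 then
            τ * ((Finset.univ.filter (fun j => G.Adj i j ∧ x j = 1)).card : ℝ) else 0)
          + (if x i = 1 then γ else 0)) := by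
  unfold sirRate
  rw [Finset.sum_comm]
  refine Finset.sum_congr rfl fun i _ => ?_
  rw [Finset.sum_add_distrib]
  congr 1
  · have hiff : ∀ y : V → Fin 3,
        ((∀ j, j ≠ i → x j = y j) ∧ x i = 0 ∧ y i = 1)
          ↔ (x i = 0 ∧ y = Function.update x i 1) := by
      intro y
      constructor
      · rintro ⟨hag, h0, h1⟩
        refine ⟨h0, funext fun j => ?_⟩
        rcases eq_or_ne j i with rfl | hj
        · rw [h1, Function.update_self]
        · rw [Function.update_of_ne hj, hag j hj]
      · rintro ⟨h0, rfl⟩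
        exact ⟨fun j hj => (Function.update_of_ne hj _ _).symm,
          h0, Function.update_self _ _ _⟩
    simp_rw [hiff]
    by_cases hxi : x i = 0
    · simp [hxi, Finset.sum_ite_eq']
    · simp [hxi]
  · have hiff : ∀ y : V → Fin 3,
        ((∀ j, j ≠ i → x j = y j) ∧ x i = 1 ∧ y i = 2)
          ↔ (x i = 1 ∧ y = Function.update x i 2) := by
      intro y
      constructor
      · rintro ⟨hag, h0, h1⟩
        refine ⟨h0, funext fun j => ?_⟩
        rcases eq_or_ne j i with rfl | hj
        · rw [h1, Function.update_self]
        · rw [Function.update_of_ne hj, hag j hj]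
      · rintro ⟨h0, rfl⟩
        exact ⟨fun j hj => (Function.update_of_ne hj _ _).symm,
          h0, Function.update_self _ _ _⟩
    simp_rw [hiff]
    by_cases hxi : x i = 1
    · simp [hxi, Finset.sum_ite_eq']
    · simp [hxi]

lemma sirGen_eq' {V : Type*} [Fintype V] [DecidableEq V] (G : SimpleGraph V)
    [DecidableRel G.Adj] (τ γ : ℝ) (x y : V → Fin 3) :
    sirGen G τ γ x y =
      if x = y then -∑ i : V, ((if x i = 0 then
            τ * ((Finset.univ.filter (fun j => G.Adj i j ∧ x j = 1)).card : ℝ) else 0)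
          + (if x i = 1 then γ else 0))
      else sirRate G τ γ x y := by
  rw [sirGen]
  split
  · rw [Finset.sum_erase_eq_sub (Finset.mem_univ x), sirRate_self, sub_zero, rate_sum]
  · rfl

lemma fin3_two_ne_one : ((2 : Fin 3) = 1) ↔ False := by decide

lemma openTriplet_adj (i j : Fin 3) : openTriplet.Adj i j ↔ i ≠ j ∧ (i = 1 ∨ j = 1) := Iff.rfl

set_option maxHeartbeats 2000000 in
open Kronecker in
lemma Mblk_decomp (τ γ : ℝ) :
    Mblk τ γ = Kmat τ γ ⊗ₖ (1 : Matrix (Fin 3) (Fin 3) ℝ)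
      + (1 : Matrix (Fin 3) (Fin 3) ℝ) ⊗ₖ Kmat τ γ
      - γ • (1 : Matrix (Fin 3 × Fin 3) (Fin 3 × Fin 3) ℝ) := by
  ext ⟨b1, b2⟩ ⟨c1, c2⟩
  rw [Matrix.sub_apply, Matrix.add_apply, Matrix.smul_apply, Matrix.kroneckerMap_apply,
    Matrix.kroneckerMap_apply]
  show sirGen openTriplet τ γ (emb (b1, b2)) (emb (c1, c2)) = _
  rw [sirGen_eq']
  fin_cases b1 <;> fin_cases b2 <;> fin_cases c1 <;> fin_cases c2 <;>
    · simp (config := { decide := true }) only [emb, sirRate, Fin.sum_univ_three,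
        Finset.card_filter, if_true, if_false, Matrix.one_apply, Kmat,
        Matrix.cons_val', Matrix.cons_val_zero, Matrix.cons_val_one, Matrix.head_cons,
        Matrix.empty_val', Matrix.cons_val_fin_one, Matrix.head_fin_const,
        Matrix.cons_val_two, Matrix.tail_cons, Matrix.of_apply, Prod.mk.injEq,
        Matrix.smul_apply, smul_eq_mul]
      norm_num [Finset.card_filter, Fin.sum_univ_three, openTriplet_adj, fin3_two_ne_one, -Finset.sum_boole]
      try ring

open Kronecker

noncomputable def krR : Matrix (Fin 3) (Fin 3) ℝ →+* Matrix (Fin 3 × Fin 3) (Fin 3 × Fin 3) ℝ where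
  toFun X := X ⊗ₖ (1 : Matrix (Fin 3) (Fin 3) ℝ)
  map_one' := Matrix.one_kronecker_one
  map_mul' X Y := by rw [← Matrix.mul_kronecker_mul, one_mul]
  map_zero' := Matrix.zero_kronecker _
  map_add' X Y := Matrix.add_kronecker X Y _

noncomputable def krL : Matrix (Fin 3) (Fin 3) ℝ →+* Matrix (Fin 3 × Fin 3) (Fin 3 × Fin 3) ℝ where
  toFun X := (1 : Matrix (Fin 3) (Fin 3) ℝ) ⊗ₖ X
  map_one' := Matrix.one_kronecker_one
  map_mul' X Y := by rw [← Matrix.mul_kronecker_mul, one_mul]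
  map_zero' := Matrix.kronecker_zero _
  map_add' X Y := Matrix.kronecker_add _ X Y

lemma krR_continuous : Continuous krR := by
  show Continuous fun X : Matrix (Fin 3) (Fin 3) ℝ => X ⊗ₖ (1 : Matrix (Fin 3) (Fin 3) ℝ)
  refine continuous_pi fun i => continuous_pi fun j => ?_
  show Continuous fun X : Matrix (Fin 3) (Fin 3) ℝ => X i.1 j.1 * (1 : Matrix (Fin 3) (Fin 3) ℝ) i.2 j.2
  exact (continuous_apply_apply i.1 j.1).mul continuous_const

lemma krL_continuous : Continuous krL := by
  show Continuous fun X : Matrix (Fin 3) (Fin 3) ℝ => (1 : Matrix (Fin 3) (Fin 3) ℝ) ⊗ₖ X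
  refine continuous_pi fun i => continuous_pi fun j => ?_
  show Continuous fun X : Matrix (Fin 3) (Fin 3) ℝ => (1 : Matrix (Fin 3) (Fin 3) ℝ) i.1 j.1 * X i.2 j.2
  exact continuous_const.mul ((continuous_apply j.2).comp (continuous_apply i.2))

lemma expMblk (τ γ t : ℝ) :
    NormedSpace.exp (t • Mblk τ γ)
      = Real.exp (-(γ * t)) •
          ((NormedSpace.exp (t • Kmat τ γ)) ⊗ₖ (NormedSpace.exp (t • Kmat τ γ))) := by
  letI : SeminormedRing (Matrix (Fin 3) (Fin 3) ℝ) := Matrix.linftyOpSemiNormedRing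
  letI : NormedRing (Matrix (Fin 3) (Fin 3) ℝ) := Matrix.linftyOpNormedRing
  letI : NormedAlgebra ℝ (Matrix (Fin 3) (Fin 3) ℝ) := Matrix.linftyOpNormedAlgebra
  letI : NormedAlgebra ℚ (Matrix (Fin 3) (Fin 3) ℝ) := Matrix.linftyOpNormedAlgebra
  letI : SeminormedRing (Matrix (Fin 3 × Fin 3) (Fin 3 × Fin 3) ℝ) := Matrix.linftyOpSemiNormedRing
  letI : NormedRing (Matrix (Fin 3 × Fin 3) (Fin 3 × Fin 3) ℝ) := Matrix.linftyOpNormedRing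
  letI : NormedAlgebra ℝ (Matrix (Fin 3 × Fin 3) (Fin 3 × Fin 3) ℝ) :=
    Matrix.linftyOpNormedAlgebra
  have hdecomp : t • Mblk τ γ
      = (t • Kmat τ γ) ⊗ₖ (1 : Matrix (Fin 3) (Fin 3) ℝ)
        + ((1 : Matrix (Fin 3) (Fin 3) ℝ) ⊗ₖ (t • Kmat τ γ)
          + (-(γ * t)) • (1 : Matrix (Fin 3 × Fin 3) (Fin 3 × Fin 3) ℝ)) := by
    rw [Mblk_decomp, smul_sub, smul_add, Matrix.smul_kronecker, Matrix.kronecker_smul,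
      smul_smul]
    rw [sub_eq_add_neg, ← neg_smul, add_assoc, mul_comm t γ]
  have hcomm1 : Commute ((t • Kmat τ γ) ⊗ₖ (1 : Matrix (Fin 3) (Fin 3) ℝ))
      ((1 : Matrix (Fin 3) (Fin 3) ℝ) ⊗ₖ (t • Kmat τ γ)
        + (-(γ * t)) • (1 : Matrix (Fin 3 × Fin 3) (Fin 3 × Fin 3) ℝ)) := by
    refine Commute.add_right ?_ ?_
    · show _ * _ = _ * _
      rw [← Matrix.mul_kronecker_mul, ← Matrix.mul_kronecker_mul, one_mul, mul_one]
    · exact (Commute.one_right _).smul_right _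
  have hcomm2 : Commute ((1 : Matrix (Fin 3) (Fin 3) ℝ) ⊗ₖ (t • Kmat τ γ))
      ((-(γ * t)) • (1 : Matrix (Fin 3 × Fin 3) (Fin 3 × Fin 3) ℝ)) :=
    (Commute.one_right _).smul_right _
  rw [hdecomp, Matrix.exp_add_of_commute _ _ hcomm1, Matrix.exp_add_of_commute _ _ hcomm2]
  have e1 : NormedSpace.exp ((t • Kmat τ γ) ⊗ₖ (1 : Matrix (Fin 3) (Fin 3) ℝ))
      = (NormedSpace.exp (t • Kmat τ γ)) ⊗ₖ (1 : Matrix (Fin 3) (Fin 3) ℝ) :=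
    (NormedSpace.map_exp krR krR_continuous (t • Kmat τ γ)).symm
  have e2 : NormedSpace.exp ((1 : Matrix (Fin 3) (Fin 3) ℝ) ⊗ₖ (t • Kmat τ γ))
      = (1 : Matrix (Fin 3) (Fin 3) ℝ) ⊗ₖ (NormedSpace.exp (t • Kmat τ γ)) :=
    (NormedSpace.map_exp krL krL_continuous (t • Kmat τ γ)).symm
  have e3 : NormedSpace.exp ((-(γ * t)) • (1 : Matrix (Fin 3 × Fin 3) (Fin 3 × Fin 3) ℝ))
      = Real.exp (-(γ * t)) • (1 : Matrix (Fin 3 × Fin 3) (Fin 3 × Fin 3) ℝ) := by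
    rw [Matrix.smul_one_eq_diagonal, Matrix.exp_diagonal, Matrix.smul_one_eq_diagonal]
    congr 1
    funext i
    rw [Pi.exp_def]
    rw [Real.exp_eq_exp_ℝ]
  rw [e1, e2, e3]
  rw [mul_smul_comm, mul_one, mul_smul_comm, ← Matrix.mul_kronecker_mul, one_mul, mul_one]

noncomputable def uK (τ γ t : ℝ) (a : Fin 3) : ℝ := NormedSpace.exp (t • Kmat τ γ) 0 a

lemma sirP_blk (τ γ t : ℝ) (a c : Fin 3) :
    sirP openTriplet τ γ ![0, 1, 0] t ![a, 1, c]
      = Real.exp (-(γ * t)) * (uK τ γ t a * uK τ γ t c) := by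
  have h0 : (![0, 1, 0] : Fin 3 → Fin 3) = emb (0, 0) := by
    funext i; fin_cases i <;> rfl
  have h1 : (![a, 1, c] : Fin 3 → Fin 3) = emb (a, c) := rfl
  rw [sirP, h0, h1, exp_entry_blk, expMblk, Matrix.smul_apply, Matrix.kroneckerMap_apply,
    smul_eq_mul]
  rfl


set_option maxHeartbeats 2000000 in
/-- For Markovian SIR dynamics on the open triplet started from `(S,I,S)`, the unclustered
closure is exact on all states whose middle node is still infectious: for `A, C ∈ {S, I}`,
`P₁₂₃(A,I,C) · P₂(I) = P₁₂(A,I) · P₂₃(I,C)`. -/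
theorem sir_openTriplet_closure_exact_middle_I
    (τ γ : ℝ) (hτ : 0 < τ) (hγ : 0 ≤ γ)
    (A C : Fin 3) (hA : A = 0 ∨ A = 1) (hC : C = 0 ∨ C = 1)
    (t : ℝ) (ht : 0 ≤ t) :
    sirP3 openTriplet τ γ ![0, 1, 0] 0 1 2 A 1 C t * sirP1 openTriplet τ γ ![0, 1, 0] 1 1 t
      = sirP2 openTriplet τ γ ![0, 1, 0] 0 1 A 1 t
          * sirP2 openTriplet τ γ ![0, 1, 0] 1 2 1 C t := by
  rcases hA with rfl | rfl <;> rcases hC with rfl | rfl <;>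
  · rw [sirP3, sirP1, sirP2, sirP2, Finset.sum_filter, Finset.sum_filter, Finset.sum_filter,
      Finset.sum_filter, sum_fun3, sum_fun3, sum_fun3, sum_fun3]
    simp (config := { decide := true }) only [Fintype.sum_prod_type, Fin.sum_univ_three,
      if_true, if_false, add_zero, zero_add]
    simp only [sirP_blk]
    ring
end

section
/- For Markovian SIR dynamics with infection rate τ = 1 and recovery rate γ = 1 on the open triplet, started from the pure initial configuration (I, S, S), the unclustered closure fails to be exact on the state IIS: there exists t > 0 such that P_{123}(I,I,S;t) · P_2(I;t) ≠ P_{12}(I,I;t) · P_{23}(I,S;t). -/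
open Finset

/-! ### Auxiliary integer-valued generator -/

namespace SIRAux

/-- Integer version of `sirRate openTriplet 1 1`. -/
def riZ (x y : Fin 3 → Fin 3) : ℤ :=
  ∑ i : Fin 3,
    ((if (∀ j, j ≠ i → x j = y j) ∧ x i = 0 ∧ y i = 1 then
        ((Finset.univ.filter (fun j => openTriplet.Adj i j ∧ x j = 1)).card : ℤ) else 0)
      + (if (∀ j, j ≠ i → x j = y j) ∧ x i = 1 ∧ y i = 2 then 1 else 0))

/-- Integer version of `sirGen openTriplet 1 1`. -/
def QZ : Matrix (Fin 3 → Fin 3) (Fin 3 → Fin 3) ℤ :=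
  fun x y => if x = y then -∑ z ∈ Finset.univ.erase x, riZ x z else riZ x y

/-- Fast infected-neighbour count on the open triplet. -/
def nI (x : Fin 3 → Fin 3) : Fin 3 → ℤ
  | 0 => if x 1 = 1 then 1 else 0
  | 1 => (if x 0 = 1 then 1 else 0) + (if x 2 = 1 then 1 else 0)
  | 2 => if x 1 = 1 then 1 else 0

/-- Fast version of `riZ`. -/
def riZ' (x y : Fin 3 → Fin 3) : ℤ :=
  (if x 1 = y 1 ∧ x 2 = y 2 ∧ x 0 = 0 ∧ y 0 = 1 then nI x 0 else 0)
  + (if x 0 = y 0 ∧ x 2 = y 2 ∧ x 1 = 0 ∧ y 1 = 1 then nI x 1 else 0)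
  + (if x 0 = y 0 ∧ x 1 = y 1 ∧ x 2 = 0 ∧ y 2 = 1 then nI x 2 else 0)
  + (if x 1 = y 1 ∧ x 2 = y 2 ∧ x 0 = 1 ∧ y 0 = 2 then 1 else 0)
  + (if x 0 = y 0 ∧ x 2 = y 2 ∧ x 1 = 1 ∧ y 1 = 2 then 1 else 0)
  + (if x 0 = y 0 ∧ x 1 = y 1 ∧ x 2 = 1 ∧ y 2 = 2 then 1 else 0)

def QZ' : Matrix (Fin 3 → Fin 3) (Fin 3 → Fin 3) ℤ :=
  fun x y => if x = y then -∑ z ∈ Finset.univ.erase x, riZ' x z else riZ' x y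

set_option maxRecDepth 100000 in
lemma riZ_eq_riZ' : riZ = riZ' := by decide

lemma QZ_eq_QZ' : QZ = QZ' := by
  funext x y
  simp only [QZ, QZ', riZ_eq_riZ']

lemma rate_cast (x y : Fin 3 → Fin 3) :
    sirRate openTriplet 1 1 x y = ((riZ x y : ℤ) : ℝ) := by
  simp only [sirRate, riZ, Int.cast_sum, Int.cast_add, apply_ite (fun z : ℤ => (z : ℝ)),
    Int.cast_natCast, Int.cast_one, Int.cast_zero, one_mul]
  congr!

lemma gen_cast (x y : Fin 3 → Fin 3) :
    sirGen openTriplet 1 1 x y = ((QZ x y : ℤ) : ℝ) := by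
  simp only [sirGen, QZ, apply_ite (fun z : ℤ => (z : ℝ)), Int.cast_neg, Int.cast_sum, rate_cast]

/-- Initial configuration. -/
def x0v : Fin 3 → Fin 3 := ![1, 0, 0]

/-- Linear combination of transition probabilities at time `t` with integer weights `w`. -/
noncomputable def hh (w : (Fin 3 → Fin 3) → ℤ) (t : ℝ) : ℝ :=
  ∑ c : Fin 3 → Fin 3, NormedSpace.exp (t • sirGen openTriplet 1 1) x0v c * (w c : ℝ)

lemma hh_hasDeriv (w : (Fin 3 → Fin 3) → ℤ) (t : ℝ) :
    HasDerivAt (hh w) (hh (QZ.mulVec w) t) t := by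
  letI : SeminormedRing (Matrix (Fin 3 → Fin 3) (Fin 3 → Fin 3) ℝ) := Matrix.linftyOpSemiNormedRing
  letI : NormedRing (Matrix (Fin 3 → Fin 3) (Fin 3 → Fin 3) ℝ) := Matrix.linftyOpNormedRing
  letI : NormedAlgebra ℝ (Matrix (Fin 3 → Fin 3) (Fin 3 → Fin 3) ℝ) :=
    Matrix.linftyOpNormedAlgebra
  letI : CompleteSpace (Matrix (Fin 3 → Fin 3) (Fin 3 → Fin 3) ℝ) :=
    FiniteDimensional.complete ℝ _
  have Qdef : sirGen openTriplet 1 1 = sirGen openTriplet 1 1 := rfl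
  let L : Matrix (Fin 3 → Fin 3) (Fin 3 → Fin 3) ℝ →ₗ[ℝ] ℝ :=
    { toFun := fun M => ∑ c : Fin 3 → Fin 3, M x0v c * (w c : ℝ)
      map_add' := by
        intro M N
        simp [Matrix.add_apply, add_mul, Finset.sum_add_distrib]
      map_smul' := by
        intro r M
        simp [Matrix.smul_apply, Finset.mul_sum, mul_assoc] }
  have hD := hasDerivAt_exp_smul_const (𝕂 := ℝ) (sirGen openTriplet 1 1) t
  have h2 := (L.toContinuousLinearMap.hasFDerivAt
    (x := NormedSpace.exp (t • sirGen openTriplet 1 1))).comp_hasDerivAt t hD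
  have key : L (NormedSpace.exp (t • sirGen openTriplet 1 1) * sirGen openTriplet 1 1)
      = hh (QZ.mulVec w) t := by
    show (∑ c : Fin 3 → Fin 3,
      (NormedSpace.exp (t • sirGen openTriplet 1 1) * sirGen openTriplet 1 1) x0v c
        * (w c : ℝ)) = _
    simp only [Matrix.mul_apply, hh, Finset.sum_mul]
    rw [Finset.sum_comm]
    refine Finset.sum_congr rfl fun z _ => ?_
    have hz : ((QZ.mulVec w) z : ℝ) = ∑ c : Fin 3 → Fin 3, (QZ z c : ℝ) * (w c : ℝ) := by
      simp [Matrix.mulVec, dotProduct]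
    rw [hz, Finset.mul_sum]
    refine Finset.sum_congr rfl fun c _ => ?_
    rw [gen_cast]
    ring
  rw [← key]
  exact h2

lemma hh_continuous (w : (Fin 3 → Fin 3) → ℤ) : Continuous (hh w) :=
  continuous_iff_continuousAt.2 fun t => (hh_hasDeriv w t).continuousAt

lemma hh_zero (w : (Fin 3 → Fin 3) → ℤ) : hh w 0 = (w x0v : ℝ) := by
  have h1 : NormedSpace.exp ((0 : ℝ) • sirGen openTriplet 1 1)
      = (1 : Matrix (Fin 3 → Fin 3) (Fin 3 → Fin 3) ℝ) := by
    rw [zero_smul, NormedSpace.exp_zero]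
  simp [hh, h1, Matrix.one_apply, ite_mul]

/-! ### Explicit vectors: iterates of `QZ` applied to the four indicator vectors -/

def u30 : (Fin 3 → Fin 3) → ℤ := fun x =>
  ![![![(0 : ℤ), 0, 0], ![0, 0, 0], ![0, 0, 0]],
    ![![0, 0, 0], ![1, 0, 0], ![0, 0, 0]],
    ![![0, 0, 0], ![0, 0, 0], ![0, 0, 0]]] (x 0) (x 1) (x 2)

def u31 : (Fin 3 → Fin 3) → ℤ := fun x =>
  ![![![(0 : ℤ), 0, 0], ![1, 0, 0], ![0, 0, 0]],
    ![![1, 0, 0], ![-3, 0, 0], ![0, 0, 0]],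
    ![![0, 0, 0], ![0, 0, 0], ![0, 0, 0]]] (x 0) (x 1) (x 2)

def u32 : (Fin 3 → Fin 3) → ℤ := fun x =>
  ![![![(0 : ℤ), 0, 0], ![-6, 0, 0], ![0, 0, 0]],
    ![![-5, 0, 0], ![9, 0, 0], ![0, 0, 0]],
    ![![0, 0, 0], ![0, 0, 0], ![0, 0, 0]]] (x 0) (x 1) (x 2)

def u33 : (Fin 3 → Fin 3) → ℤ := fun x =>
  ![![![(0 : ℤ), 0, 0], ![27, 0, 0], ![0, 0, 0]],
    ![![19, 0, 0], ![-27, 0, 0], ![0, 0, 0]],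
    ![![0, 0, 0], ![0, 0, 0], ![0, 0, 0]]] (x 0) (x 1) (x 2)

def u34 : (Fin 3 → Fin 3) → ℤ := fun x =>
  ![![![(0 : ℤ), 0, 0], ![-108, 0, 0], ![0, 0, 0]],
    ![![-65, 0, 0], ![81, 0, 0], ![0, 0, 0]],
    ![![0, 0, 0], ![0, 0, 0], ![0, 0, 0]]] (x 0) (x 1) (x 2)

def u10 : (Fin 3 → Fin 3) → ℤ := fun x =>
  ![![![(0 : ℤ), 0, 0], ![1, 1, 1], ![0, 0, 0]],
    ![![0, 0, 0], ![1, 1, 1], ![0, 0, 0]],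
    ![![0, 0, 0], ![1, 1, 1], ![0, 0, 0]]] (x 0) (x 1) (x 2)

def u11 : (Fin 3 → Fin 3) → ℤ := fun x =>
  ![![![(0 : ℤ), 1, 0], ![-1, -1, -1], ![0, 0, 0]],
    ![![1, 2, 1], ![-1, -1, -1], ![0, 0, 0]],
    ![![0, 1, 0], ![-1, -1, -1], ![0, 0, 0]]] (x 0) (x 1) (x 2)

def u12 : (Fin 3 → Fin 3) → ℤ := fun x =>
  ![![![(0 : ℤ), -3, 0], ![1, 1, 1], ![0, 0, 0]],
    ![![-3, -8, -3], ![1, 1, 1], ![0, 0, 0]],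
    ![![0, -3, 0], ![1, 1, 1], ![0, 0, 0]]] (x 0) (x 1) (x 2)

def u13 : (Fin 3 → Fin 3) → ℤ := fun x =>
  ![![![(0 : ℤ), 7, 0], ![-1, -1, -1], ![0, 0, 0]],
    ![![7, 28, 7], ![-1, -1, -1], ![0, 0, 0]],
    ![![0, 7, 0], ![-1, -1, -1], ![0, 0, 0]]] (x 0) (x 1) (x 2)

def u14 : (Fin 3 → Fin 3) → ℤ := fun x =>
  ![![![(0 : ℤ), -15, 0], ![1, 1, 1], ![0, 0, 0]],
    ![![-15, -100, -15], ![1, 1, 1], ![0, 0, 0]],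
    ![![0, -15, 0], ![1, 1, 1], ![0, 0, 0]]] (x 0) (x 1) (x 2)

def ua0 : (Fin 3 → Fin 3) → ℤ := fun x =>
  ![![![(0 : ℤ), 0, 0], ![0, 0, 0], ![0, 0, 0]],
    ![![0, 0, 0], ![1, 1, 1], ![0, 0, 0]],
    ![![0, 0, 0], ![0, 0, 0], ![0, 0, 0]]] (x 0) (x 1) (x 2)

def ua1 : (Fin 3 → Fin 3) → ℤ := fun x =>
  ![![![(0 : ℤ), 0, 0], ![1, 1, 1], ![0, 0, 0]],
    ![![1, 2, 1], ![-2, -2, -2], ![0, 0, 0]],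
    ![![0, 0, 0], ![0, 0, 0], ![0, 0, 0]]] (x 0) (x 1) (x 2)

def ua2 : (Fin 3 → Fin 3) → ℤ := fun x =>
  ![![![(0 : ℤ), 1, 0], ![-4, -4, -4], ![0, 0, 0]],
    ![![-4, -11, -4], ![4, 4, 4], ![0, 0, 0]],
    ![![0, 0, 0], ![0, 0, 0], ![0, 0, 0]]] (x 0) (x 1) (x 2)

def ua3 : (Fin 3 → Fin 3) → ℤ := fun x =>
  ![![![(0 : ℤ), -6, 0], ![12, 12, 12], ![0, 0, 0]],
    ![![12, 48, 12], ![-8, -8, -8], ![0, 0, 0]],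
    ![![0, 0, 0], ![0, 0, 0], ![0, 0, 0]]] (x 0) (x 1) (x 2)

def ua4 : (Fin 3 → Fin 3) → ℤ := fun x =>
  ![![![(0 : ℤ), 24, 0], ![-32, -32, -32], ![0, 0, 0]],
    ![![-32, -196, -32], ![16, 16, 16], ![0, 0, 0]],
    ![![0, 0, 0], ![0, 0, 0], ![0, 0, 0]]] (x 0) (x 1) (x 2)

def ub0 : (Fin 3 → Fin 3) → ℤ := fun x =>
  ![![![(0 : ℤ), 0, 0], ![1, 0, 0], ![0, 0, 0]],
    ![![0, 0, 0], ![1, 0, 0], ![0, 0, 0]],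
    ![![0, 0, 0], ![1, 0, 0], ![0, 0, 0]]] (x 0) (x 1) (x 2)

def ub1 : (Fin 3 → Fin 3) → ℤ := fun x =>
  ![![![(0 : ℤ), 0, 0], ![-2, 0, 0], ![0, 0, 0]],
    ![![1, 0, 0], ![-2, 0, 0], ![0, 0, 0]],
    ![![0, 0, 0], ![-2, 0, 0], ![0, 0, 0]]] (x 0) (x 1) (x 2)

def ub2 : (Fin 3 → Fin 3) → ℤ := fun x =>
  ![![![(0 : ℤ), 0, 0], ![4, 0, 0], ![0, 0, 0]],
    ![![-4, 0, 0], ![4, 0, 0], ![0, 0, 0]],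
    ![![0, 0, 0], ![4, 0, 0], ![0, 0, 0]]] (x 0) (x 1) (x 2)

def ub3 : (Fin 3 → Fin 3) → ℤ := fun x =>
  ![![![(0 : ℤ), 0, 0], ![-8, 0, 0], ![0, 0, 0]],
    ![![12, 0, 0], ![-8, 0, 0], ![0, 0, 0]],
    ![![0, 0, 0], ![-8, 0, 0], ![0, 0, 0]]] (x 0) (x 1) (x 2)

def ub4 : (Fin 3 → Fin 3) → ℤ := fun x =>
  ![![![(0 : ℤ), 0, 0], ![16, 0, 0], ![0, 0, 0]],
    ![![-32, 0, 0], ![16, 0, 0], ![0, 0, 0]],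
    ![![0, 0, 0], ![16, 0, 0], ![0, 0, 0]]] (x 0) (x 1) (x 2)

set_option maxRecDepth 1000000

lemma s31 : QZ.mulVec u30 = u31 := by rw [QZ_eq_QZ']; decide
lemma s32 : QZ.mulVec u31 = u32 := by rw [QZ_eq_QZ']; decide
lemma s33 : QZ.mulVec u32 = u33 := by rw [QZ_eq_QZ']; decide
lemma s34 : QZ.mulVec u33 = u34 := by rw [QZ_eq_QZ']; decide
lemma s11 : QZ.mulVec u10 = u11 := by rw [QZ_eq_QZ']; decide
lemma s12 : QZ.mulVec u11 = u12 := by rw [QZ_eq_QZ']; decide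
lemma s13 : QZ.mulVec u12 = u13 := by rw [QZ_eq_QZ']; decide
lemma s14 : QZ.mulVec u13 = u14 := by rw [QZ_eq_QZ']; decide
lemma sa1 : QZ.mulVec ua0 = ua1 := by rw [QZ_eq_QZ']; decide
lemma sa2 : QZ.mulVec ua1 = ua2 := by rw [QZ_eq_QZ']; decide
lemma sa3 : QZ.mulVec ua2 = ua3 := by rw [QZ_eq_QZ']; decide
lemma sa4 : QZ.mulVec ua3 = ua4 := by rw [QZ_eq_QZ']; decide
lemma sb1 : QZ.mulVec ub0 = ub1 := by rw [QZ_eq_QZ']; decide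
lemma sb2 : QZ.mulVec ub1 = ub2 := by rw [QZ_eq_QZ']; decide
lemma sb3 : QZ.mulVec ub2 = ub3 := by rw [QZ_eq_QZ']; decide
lemma sb4 : QZ.mulVec ub3 = ub4 := by rw [QZ_eq_QZ']; decide

lemma u30_ind : ∀ c : Fin 3 → Fin 3, u30 c = if c 0 = 1 ∧ c 1 = 1 ∧ c 2 = 0 then 1 else 0 := by
  decide
lemma u10_ind : ∀ c : Fin 3 → Fin 3, u10 c = if c 1 = 1 then 1 else 0 := by decide
lemma ua0_ind : ∀ c : Fin 3 → Fin 3, ua0 c = if c 0 = 1 ∧ c 1 = 1 then 1 else 0 := by decide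
lemma ub0_ind : ∀ c : Fin 3 → Fin 3, ub0 c = if c 1 = 1 ∧ c 2 = 0 then 1 else 0 := by decide

lemma P3_eq (t : ℝ) :
    sirP3 openTriplet 1 1 ![1, 0, 0] 0 1 2 1 1 0 t = hh u30 t := by
  simp [sirP3, hh, Finset.sum_filter, sirP, x0v, u30_ind, apply_ite (fun z : ℤ => (z : ℝ)),
    mul_ite, mul_one, mul_zero]

lemma P1_eq (t : ℝ) :
    sirP1 openTriplet 1 1 ![1, 0, 0] 1 1 t = hh u10 t := by
  simp [sirP1, hh, Finset.sum_filter, sirP, x0v, u10_ind, apply_ite (fun z : ℤ => (z : ℝ)),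
    mul_ite, mul_one, mul_zero]

lemma Pa_eq (t : ℝ) :
    sirP2 openTriplet 1 1 ![1, 0, 0] 0 1 1 1 t = hh ua0 t := by
  simp [sirP2, hh, Finset.sum_filter, sirP, x0v, ua0_ind, apply_ite (fun z : ℤ => (z : ℝ)),
    mul_ite, mul_one, mul_zero]

lemma Pb_eq (t : ℝ) :
    sirP2 openTriplet 1 1 ![1, 0, 0] 1 2 1 0 t = hh ub0 t := by
  simp [sirP2, hh, Finset.sum_filter, sirP, x0v, ub0_ind, apply_ite (fun z : ℤ => (z : ℝ)),
    mul_ite, mul_one, mul_zero]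

lemma deriv_zero_of_zero {g g' : ℝ → ℝ} (hd : ∀ t, HasDerivAt g (g' t) t)
    (h0 : ∀ t > 0, g t = 0) : ∀ t > 0, g' t = 0 := by
  intro t ht
  have hev : (fun _ : ℝ => (0 : ℝ)) =ᶠ[nhds t] g := by
    filter_upwards [Ioi_mem_nhds ht] with s hs using (h0 s hs).symm
  exact (hd t).unique ((hasDerivAt_const t (0 : ℝ)).congr_of_eventuallyEq hev.symm)

lemma zero_at_zero {g : ℝ → ℝ} (hc : Continuous g) (h0 : ∀ t > 0, g t = 0) : g 0 = 0 := by
  have h1 : Filter.Tendsto g (nhdsWithin 0 (Set.Ioi 0)) (nhds (g 0)) :=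
    hc.continuousAt.continuousWithinAt
  have h2 : Filter.Tendsto g (nhdsWithin 0 (Set.Ioi 0)) (nhds 0) := by
    refine Filter.Tendsto.congr' ?_ tendsto_const_nhds
    filter_upwards [self_mem_nhdsWithin] with s hs using (h0 s hs).symm
  exact tendsto_nhds_unique h1 h2

lemma v30 : u30 x0v = 0 := by decide
lemma v31 : u31 x0v = 1 := by decide
lemma v32 : u32 x0v = -5 := by decide
lemma v33 : u33 x0v = 19 := by decide
lemma v34 : u34 x0v = -65 := by decide
lemma v10 : u10 x0v = 0 := by decide
lemma v11 : u11 x0v = 1 := by decide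
lemma v12 : u12 x0v = -3 := by decide
lemma v13 : u13 x0v = 7 := by decide
lemma v14 : u14 x0v = -15 := by decide
lemma va0 : ua0 x0v = 0 := by decide
lemma va1 : ua1 x0v = 1 := by decide
lemma va2 : ua2 x0v = -4 := by decide
lemma va3 : ua3 x0v = 12 := by decide
lemma va4 : ua4 x0v = -32 := by decide
lemma vb0 : ub0 x0v = 0 := by decide
lemma vb1 : ub1 x0v = 1 := by decide
lemma vb2 : ub2 x0v = -4 := by decide
lemma vb3 : ub3 x0v = 12 := by decide
lemma vb4 : ub4 x0v = -32 := by decide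

end SIRAux

open SIRAux in
/-- For Markovian SIR dynamics with `τ = γ = 1` on the open triplet started from `(I,S,S)`,
the unclustered closure fails to be exact on the state `IIS` at some time `t > 0`. -/
theorem sir_openTriplet_closure_fails_IIS :
    ∃ t : ℝ, 0 < t ∧
      sirP3 openTriplet 1 1 ![1, 0, 0] 0 1 2 1 1 0 t * sirP1 openTriplet 1 1 ![1, 0, 0] 1 1 t
        ≠ sirP2 openTriplet 1 1 ![1, 0, 0] 0 1 1 1 t
            * sirP2 openTriplet 1 1 ![1, 0, 0] 1 2 1 0 t := by
  by_contra hcon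
  push_neg at hcon
  -- level-0 function vanishes for t > 0
  have hz0 : ∀ t > 0, (fun t => hh u30 t * hh u10 t - hh ua0 t * hh ub0 t) t = 0 := by
    intro t ht
    have := hcon t ht
    rw [P3_eq, P1_eq, Pa_eq, Pb_eq] at this
    simpa [sub_eq_zero] using this
  -- derivative chain
  have d1 : ∀ t, HasDerivAt (fun t => hh u30 t * hh u10 t - hh ua0 t * hh ub0 t)
      ((fun t => (hh u31 t * hh u10 t + hh u30 t * hh u11 t)
        - (hh ua1 t * hh ub0 t + hh ua0 t * hh ub1 t)) t) t := by
    intro t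
    have h := ((hh_hasDeriv u30 t).mul (hh_hasDeriv u10 t)).sub
      ((hh_hasDeriv ua0 t).mul (hh_hasDeriv ub0 t))
    rw [s31, s11, sa1, sb1] at h
    exact h
  have d2 : ∀ t, HasDerivAt (fun t => (hh u31 t * hh u10 t + hh u30 t * hh u11 t)
        - (hh ua1 t * hh ub0 t + hh ua0 t * hh ub1 t))
      ((fun t => (hh u32 t * hh u10 t + 2 * (hh u31 t * hh u11 t) + hh u30 t * hh u12 t)
        - (hh ua2 t * hh ub0 t + 2 * (hh ua1 t * hh ub1 t) + hh ua0 t * hh ub2 t)) t) t := by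
    intro t
    have h := (((hh_hasDeriv u31 t).mul (hh_hasDeriv u10 t)).add
        ((hh_hasDeriv u30 t).mul (hh_hasDeriv u11 t))).sub
      (((hh_hasDeriv ua1 t).mul (hh_hasDeriv ub0 t)).add
        ((hh_hasDeriv ua0 t).mul (hh_hasDeriv ub1 t)))
    rw [s32, s11, s31, s12, sa2, sb1, sa1, sb2] at h
    refine h.congr_deriv ?_
    beta_reduce
    ring
  have d3 : ∀ t, HasDerivAt (fun t =>
        (hh u32 t * hh u10 t + 2 * (hh u31 t * hh u11 t) + hh u30 t * hh u12 t)
        - (hh ua2 t * hh ub0 t + 2 * (hh ua1 t * hh ub1 t) + hh ua0 t * hh ub2 t))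
      ((fun t => (hh u33 t * hh u10 t + 3 * (hh u32 t * hh u11 t)
          + 3 * (hh u31 t * hh u12 t) + hh u30 t * hh u13 t)
        - (hh ua3 t * hh ub0 t + 3 * (hh ua2 t * hh ub1 t)
          + 3 * (hh ua1 t * hh ub2 t) + hh ua0 t * hh ub3 t)) t) t := by
    intro t
    have h := ((((hh_hasDeriv u32 t).mul (hh_hasDeriv u10 t)).add
        (((hh_hasDeriv u31 t).mul (hh_hasDeriv u11 t)).const_mul 2)).add
        ((hh_hasDeriv u30 t).mul (hh_hasDeriv u12 t))).sub
      ((((hh_hasDeriv ua2 t).mul (hh_hasDeriv ub0 t)).add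
        (((hh_hasDeriv ua1 t).mul (hh_hasDeriv ub1 t)).const_mul 2)).add
        ((hh_hasDeriv ua0 t).mul (hh_hasDeriv ub2 t)))
    rw [s33, s11, s32, s12, s31, s13, sa3, sb1, sa2, sb2, sa1, sb3] at h
    refine h.congr_deriv ?_
    beta_reduce
    ring
  have d4 : ∀ t, HasDerivAt (fun t =>
        (hh u33 t * hh u10 t + 3 * (hh u32 t * hh u11 t)
          + 3 * (hh u31 t * hh u12 t) + hh u30 t * hh u13 t)
        - (hh ua3 t * hh ub0 t + 3 * (hh ua2 t * hh ub1 t)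
          + 3 * (hh ua1 t * hh ub2 t) + hh ua0 t * hh ub3 t))
      ((fun t => (hh u34 t * hh u10 t + 4 * (hh u33 t * hh u11 t)
          + 6 * (hh u32 t * hh u12 t) + 4 * (hh u31 t * hh u13 t) + hh u30 t * hh u14 t)
        - (hh ua4 t * hh ub0 t + 4 * (hh ua3 t * hh ub1 t)
          + 6 * (hh ua2 t * hh ub2 t) + 4 * (hh ua1 t * hh ub3 t)
          + hh ua0 t * hh ub4 t)) t) t := by
    intro t
    have h := (((((hh_hasDeriv u33 t).mul (hh_hasDeriv u10 t)).add
        (((hh_hasDeriv u32 t).mul (hh_hasDeriv u11 t)).const_mul 3)).add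
        (((hh_hasDeriv u31 t).mul (hh_hasDeriv u12 t)).const_mul 3)).add
        ((hh_hasDeriv u30 t).mul (hh_hasDeriv u13 t))).sub
      (((((hh_hasDeriv ua3 t).mul (hh_hasDeriv ub0 t)).add
        (((hh_hasDeriv ua2 t).mul (hh_hasDeriv ub1 t)).const_mul 3)).add
        (((hh_hasDeriv ua1 t).mul (hh_hasDeriv ub2 t)).const_mul 3)).add
        ((hh_hasDeriv ua0 t).mul (hh_hasDeriv ub3 t)))
    rw [s34, s11, s33, s12, s32, s13, s31, s14, sa4, sb1, sa3, sb2, sa2, sb3, sa1, sb4] at h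
    refine h.congr_deriv ?_
    beta_reduce
    ring
  -- propagate vanishing through the derivatives
  have hz1 := deriv_zero_of_zero d1 hz0
  have hz2 := deriv_zero_of_zero d2 hz1
  have hz3 := deriv_zero_of_zero d3 hz2
  have hz4 := deriv_zero_of_zero d4 hz3
  -- continuity of the fourth derivative expression
  have c4 : Continuous (fun t => (hh u34 t * hh u10 t + 4 * (hh u33 t * hh u11 t)
      + 6 * (hh u32 t * hh u12 t) + 4 * (hh u31 t * hh u13 t) + hh u30 t * hh u14 t)
      - (hh ua4 t * hh ub0 t + 4 * (hh ua3 t * hh ub1 t)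
        + 6 * (hh ua2 t * hh ub2 t) + 4 * (hh ua1 t * hh ub3 t)
        + hh ua0 t * hh ub4 t)) := by
    have hc : ∀ w, Continuous (hh w) := hh_continuous
    exact (((((hc u34).mul (hc u10)).add (continuous_const.mul ((hc u33).mul (hc u11)))).add
        (continuous_const.mul ((hc u32).mul (hc u12)))).add
        (continuous_const.mul ((hc u31).mul (hc u13)))).add ((hc u30).mul (hc u14)) |>.sub
      ((((((hc ua4).mul (hc ub0)).add (continuous_const.mul ((hc ua3).mul (hc ub1)))).add
        (continuous_const.mul ((hc ua2).mul (hc ub2)))).add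
        (continuous_const.mul ((hc ua1).mul (hc ub3)))).add ((hc ua0).mul (hc ub4)))
  have h40 := zero_at_zero c4 hz4
  simp only [hh_zero, v30, v31, v32, v33, v34, v10, v11, v12, v13, v14,
    va0, va1, va2, va3, va4, vb0, vb1, vb2, vb3, vb4] at h40
  norm_num at h40
end
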